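/- arXiv:2105.13419 — 6 statements merged into one kernel-verified Lean document; each statement's English description precedes it below -/
import Mathlib

section
/- Let ξ, ξ_1, ξ_2, … be i.i.d. random elements of a measurable space Ξ with law P, and let IF : Ξ → ℝ^d be measurable with E_P[IF(ξ)] = 0 and entrywise finite covariance matrix. Let Z : ℝ^d → ℝ be twice differentiable at a point x* ∈ ℝ^d with ∇Z(x*) = 0, and write H = ∇²Z(x*). Let K ∈ ℝ^d be a fixed vector, let λ_n → 0 be a real sequence, and let x̂_n be ℝ^d-valued random vectors satisfying x̂_n − x* = D_n + λ_n·K + R_n, where D_n = (1/n)·Σ_{i=1}^n IF(ξ_i) and R_n/(n^{−1/2} + |λ_n|) → 0 in probability. Then Z(x̂_n) − Z(x*) = (1/2)·D_nᵀ H D_n + (1/2)·λ_n²·Kᵀ H K + λ_n·Kᵀ H D_n + E_n, where E_n/(n^{−1} + λ_n²) → 0 in probability as n → ∞. -/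
open MeasureTheory ProbabilityTheory Filter
open scoped Topology

/-- The empirical average `(1/n) ∑_{i<n} IF(ξ_i ω)` of the influence function. -/
noncomputable def empAvg {Ω Ξ : Type*} {d : ℕ} (ξ : ℕ → Ω → Ξ)
    (IF : Ξ → EuclideanSpace ℝ (Fin d)) (n : ℕ) (ω : Ω) : EuclideanSpace ℝ (Fin d) :=
  (n : ℝ)⁻¹ • ∑ i ∈ Finset.range n, IF (ξ i ω)

private lemma eucl_norm_sq {d : ℕ} (v : EuclideanSpace ℝ (Fin d)) :
    ‖v‖ ^ 2 = ∑ k, (v k) ^ 2 := by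
  rw [EuclideanSpace.norm_eq, Real.sq_sqrt (by positivity)]
  simp [sq_abs]

private lemma bil_bound {d : ℕ}
    (H : EuclideanSpace ℝ (Fin d) →L[ℝ] EuclideanSpace ℝ (Fin d) →L[ℝ] ℝ)
    (v w : EuclideanSpace ℝ (Fin d)) : |H v w| ≤ ‖H‖ * ‖v‖ * ‖w‖ := by
  calc |H v w| = ‖H v w‖ := (Real.norm_eq_abs _).symm
    _ ≤ ‖H v‖ * ‖w‖ := (H v).le_opNorm w
    _ ≤ ‖H‖ * ‖v‖ * ‖w‖ := mul_le_mul_of_nonneg_right (H.le_opNorm v) (norm_nonneg w)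

private lemma quad_expand {d : ℕ}
    (H : EuclideanSpace ℝ (Fin d) →L[ℝ] EuclideanSpace ℝ (Fin d) →L[ℝ] ℝ)
    (hs : ∀ v w, H v w = H w v) (D K R : EuclideanSpace ℝ (Fin d)) (l : ℝ) :
    (1/2 : ℝ) * H (D + l • K + R) (D + l • K + R)
      = ((1/2) * H D D + (1/2) * l^2 * H K K + l * H K D)
        + (H D R + l * H K R + (1/2) * H R R) := by
  simp only [map_add, _root_.map_smul, ContinuousLinearMap.add_apply,
    ContinuousLinearMap.coe_smul', Pi.smul_apply, smul_eq_mul]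
  rw [hs K D, hs R D, hs R K]; ring

private lemma taylor2 {d : ℕ} (Z : EuclideanSpace ℝ (Fin d) → ℝ)
    (xs : EuclideanSpace ℝ (Fin d))
    (Z' : EuclideanSpace ℝ (Fin d) → EuclideanSpace ℝ (Fin d) →L[ℝ] ℝ)
    (H : EuclideanSpace ℝ (Fin d) →L[ℝ] EuclideanSpace ℝ (Fin d) →L[ℝ] ℝ)
    (hZ' : ∀ᶠ x in 𝓝 xs, HasFDerivAt Z (Z' x) x)
    (hZ'' : HasFDerivAt Z' H xs) (hgrad : Z' xs = 0)
    {ε : ℝ} (hε : 0 < ε) :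
    ∃ δ > 0, ∀ h : EuclideanSpace ℝ (Fin d), ‖h‖ ≤ δ →
      |Z (xs + h) - Z xs - (1/2) * H h h| ≤ ε * ‖h‖ ^ 2 := by
  have hlo : ∀ᶠ x in 𝓝 xs, ‖Z' x - Z' xs - H (x - xs)‖ ≤ ε * ‖x - xs‖ :=
    hZ''.isLittleO.def hε
  obtain ⟨δ', hδ', hball⟩ := Metric.eventually_nhds_iff_ball.1 (hZ'.and hlo)
  refine ⟨δ'/2, by positivity, fun h hh => ?_⟩
  have hmem : ∀ t : ℝ, t ∈ Set.Icc (0:ℝ) 1 → xs + t • h ∈ Metric.ball xs δ' := by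
    intro t ht
    have h1 : ‖t • h‖ ≤ ‖h‖ := by
      rw [norm_smul, Real.norm_eq_abs]
      have : |t| ≤ 1 := abs_le.2 ⟨by linarith [ht.1], ht.2⟩
      nlinarith [norm_nonneg h]
    simp only [Metric.mem_ball, dist_eq_norm, add_sub_cancel_left]
    calc ‖t • h‖ ≤ ‖h‖ := h1
      _ ≤ δ'/2 := hh
      _ < δ' := by linarith
  set c : ℝ := H h h with hc
  set u : ℝ → ℝ := fun t => Z (xs + t • h) - (1/2) * c * t^2 with hu
  have hud : ∀ t ∈ Set.Icc (0:ℝ) 1,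
      HasDerivWithinAt u ((Z' (xs + t • h)) h - c * t) (Set.Icc 0 1) t := by
    intro t ht
    have h1 : HasDerivAt (fun s : ℝ => xs + s • h) h t := by
      simpa using ((hasDerivAt_id t).smul_const h).const_add xs
    have h2 : HasDerivAt (fun s => Z (xs + s • h)) (Z' (xs + t • h) h) t :=
      (hball _ (hmem t ht)).1.comp_hasDerivAt t h1
    have h3 : HasDerivAt (fun s : ℝ => (1/2) * c * s^2) ((1/2) * c * (2 * t)) t := by
      simpa using (hasDerivAt_pow 2 t).const_mul ((1/2) * c)
    have h4 := h2.sub h3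
    have heq : Z' (xs + t • h) h - (1/2) * c * (2*t) = Z' (xs + t • h) h - c * t := by ring
    rw [heq] at h4
    exact h4.hasDerivWithinAt
  have hbd : ∀ t ∈ Set.Ico (0:ℝ) 1, ‖(Z' (xs + t • h)) h - c * t‖ ≤ ε * ‖h‖^2 := by
    intro t ht
    have ht' : t ∈ Set.Icc (0:ℝ) 1 := ⟨ht.1, ht.2.le⟩
    have hb := (hball _ (hmem t ht')).2
    have key : Z' (xs + t • h) h - c * t
        = (Z' (xs + t • h) - Z' xs - H ((xs + t • h) - xs)) h := by
      rw [add_sub_cancel_left]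
      simp only [ContinuousLinearMap.sub_apply, hgrad, ContinuousLinearMap.zero_apply,
        _root_.map_smul, ContinuousLinearMap.coe_smul', Pi.smul_apply, smul_eq_mul, hc]
      ring
    rw [key]
    calc ‖(Z' (xs + t • h) - Z' xs - H ((xs + t • h) - xs)) h‖
        ≤ ‖Z' (xs + t • h) - Z' xs - H ((xs + t • h) - xs)‖ * ‖h‖ :=
          ContinuousLinearMap.le_opNorm _ h
      _ ≤ (ε * ‖(xs + t • h) - xs‖) * ‖h‖ := mul_le_mul_of_nonneg_right hb (norm_nonneg h)
      _ ≤ ε * ‖h‖^2 := by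
          rw [add_sub_cancel_left, norm_smul, Real.norm_eq_abs]
          have h5 : |t| ≤ 1 := abs_le.2 ⟨by linarith [ht.1], ht.2.le⟩
          have h6 : |t| * ‖h‖ ≤ ‖h‖ := by nlinarith [norm_nonneg h]
          have h7 : (|t| * ‖h‖) * ‖h‖ ≤ ‖h‖ * ‖h‖ :=
            mul_le_mul_of_nonneg_right h6 (norm_nonneg h)
          have h8 := mul_le_mul_of_nonneg_left h7 hε.le
          calc ε * (|t| * ‖h‖) * ‖h‖ = ε * ((|t| * ‖h‖) * ‖h‖) := by ring
            _ ≤ ε * (‖h‖ * ‖h‖) := h8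
            _ = ε * ‖h‖^2 := by ring
  have hmv := norm_image_sub_le_of_norm_deriv_le_segment' hud hbd 1
    (by constructor <;> norm_num : (1:ℝ) ∈ Set.Icc (0:ℝ) 1)
  have e1 : u 1 - u 0 = Z (xs + h) - Z xs - (1/2) * c := by
    simp only [hu, one_smul, zero_smul, add_zero]
    ring
  rw [e1] at hmv
  rw [Real.norm_eq_abs] at hmv
  calc |Z (xs + h) - Z xs - (1/2) * H h h| = |Z (xs + h) - Z xs - (1/2) * c| := by rw [hc]
    _ ≤ ε * ‖h‖^2 * (1 - 0) := hmv
    _ = ε * ‖h‖^2 := by ring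

set_option maxHeartbeats 2000000 in
/-- Lemma 1 of the paper: expansion of the optimality gap of a linearizable
data-driven solution. -/
theorem optimality_gap_expansion
    {Ω : Type*} [MeasurableSpace Ω] {μ : Measure Ω} [IsProbabilityMeasure μ]
    {Ξ : Type*} [MeasurableSpace Ξ] {P : Measure Ξ} [IsProbabilityMeasure P]
    {d : ℕ}
    -- i.i.d. data with law P
    (ξ : ℕ → Ω → Ξ) (hξmeas : ∀ i, Measurable (ξ i))
    (hindep : iIndepFun ξ μ)
    (hlaw : ∀ i, Measure.map (ξ i) μ = P)
    -- influence function: measurable, centered, with entrywise finite covariance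
    (IF : Ξ → EuclideanSpace ℝ (Fin d)) (hIFmeas : Measurable IF)
    (hIFmean : ∫ x, IF x ∂P = 0) (hIFL2 : MemLp IF 2 P)
    -- Z twice differentiable at x* with vanishing gradient; H = ∇²Z(x*)
    (Z : EuclideanSpace ℝ (Fin d) → ℝ) (xs : EuclideanSpace ℝ (Fin d))
    (Z' : EuclideanSpace ℝ (Fin d) → EuclideanSpace ℝ (Fin d) →L[ℝ] ℝ)
    (H : EuclideanSpace ℝ (Fin d) →L[ℝ] EuclideanSpace ℝ (Fin d) →L[ℝ] ℝ)
    (hZ' : ∀ᶠ x in 𝓝 xs, HasFDerivAt Z (Z' x) x)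
    (hZ'' : HasFDerivAt Z' H xs)
    (hgrad : Z' xs = 0)
    -- tuning parameter and decomposition of the data-driven solution
    (K : EuclideanSpace ℝ (Fin d)) (lam : ℕ → ℝ)
    (hlam : Tendsto lam atTop (𝓝 (0 : ℝ)))
    (xhat R : ℕ → Ω → EuclideanSpace ℝ (Fin d))
    (hdecomp : ∀ n ω, xhat n ω = xs + empAvg ξ IF n ω + lam n • K + R n ω)
    (hR : TendstoInMeasure μ
      (fun n ω => ‖R n ω‖ / (1 / Real.sqrt n + |lam n|)) atTop (fun _ => (0 : ℝ))) :
    -- conclusion: the optimality gap expansion with error of smaller order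
    -- than 1/n + λ_n² in probability
    TendstoInMeasure μ
      (fun n ω =>
        (Z (xhat n ω) - Z xs
          - ((1 / 2) * H (empAvg ξ IF n ω) (empAvg ξ IF n ω)
            + (1 / 2) * lam n ^ 2 * H K K
            + lam n * H K (empAvg ξ IF n ω)))
        / (1 / (n : ℝ) + lam n ^ 2))
      atTop (fun _ => (0 : ℝ)) := by
  classical
  -- basic facts about IF
  have hmp : ∀ i, MeasurePreserving (ξ i) μ P := fun i => ⟨hξmeas i, hlaw i⟩
  have hIFint : Integrable IF P := hIFL2.integrable one_le_two
  have hcmeas : ∀ k : Fin d, Measurable fun x : Ξ => IF x k := fun k =>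
    ((EuclideanSpace.proj k : EuclideanSpace ℝ (Fin d) →L[ℝ] ℝ).continuous.measurable).comp hIFmeas
  have hcoordP : ∀ k : Fin d, MemLp (fun x => IF x k) 2 P := fun k => by
    have := (EuclideanSpace.proj k : EuclideanSpace ℝ (Fin d) →L[ℝ] ℝ).comp_memLp' hIFL2
    exact this
  have hXmem : ∀ (i : ℕ) (k : Fin d), MemLp (fun ω => IF (ξ i ω) k) 2 μ :=
    fun i k => (hcoordP k).comp_measurePreserving (hmp i)
  have hmeanP : ∀ k : Fin d, ∫ x, IF x k ∂P = 0 := fun k => by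
    have := (EuclideanSpace.proj k : EuclideanSpace ℝ (Fin d) →L[ℝ] ℝ).integral_comp_comm hIFint
    simpa [hIFmean] using this
  have hintmap : ∀ (i : ℕ) (g : Ξ → ℝ), Measurable g →
      ∫ ω, g (ξ i ω) ∂μ = ∫ x, g x ∂P := by
    intro i g hg
    rw [← hlaw i, integral_map (hξmeas i).aemeasurable hg.aestronglyMeasurable]
  have hXmean : ∀ (i : ℕ) (k : Fin d), ∫ ω, IF (ξ i ω) k ∂μ = 0 :=
    fun i k => (hintmap i _ (hcmeas k)).trans (hmeanP k)
  have hXsq : ∀ (i : ℕ) (k : Fin d),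
      ∫ ω, (IF (ξ i ω) k)^2 ∂μ = ∫ x, (IF x k)^2 ∂P :=
    fun i k => hintmap i _ ((hcmeas k).pow_const 2)
  have hvar : ∀ (i : ℕ) (k : Fin d),
      variance (fun ω => IF (ξ i ω) k) μ = ∫ x, (IF x k)^2 ∂P := by
    intro i k
    rw [variance_eq_sub (hXmem i k)]
    simp only [Pi.pow_apply]
    rw [hXsq i k, hXmean i k]
    ring
  -- second moment of coordinates of the sum
  have hSksq : ∀ (n : ℕ) (k : Fin d),
      ∫ ω, (∑ i ∈ Finset.range n, IF (ξ i ω) k)^2 ∂μ = n * ∫ x, (IF x k)^2 ∂P := by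
    intro n k
    have hmemsum : MemLp (fun ω => ∑ i ∈ Finset.range n, IF (ξ i ω) k) 2 μ :=
      memLp_finset_sum _ fun i _ => hXmem i k
    have hpair : Set.Pairwise ↑(Finset.range n)
        fun i j => IndepFun (fun ω => IF (ξ i ω) k) (fun ω => IF (ξ j ω) k) μ := by
      intro i _ j _ hij
      exact (hindep.indepFun hij).comp (hcmeas k) (hcmeas k)
    have hvs := IndepFun.variance_sum (μ := μ) (X := fun i ω => IF (ξ i ω) k)
      (s := Finset.range n) (fun i _ => hXmem i k) hpair
    have hfun : (∑ i ∈ Finset.range n, fun ω => IF (ξ i ω) k)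
        = fun ω => ∑ i ∈ Finset.range n, IF (ξ i ω) k := by
      ext ω; simp
    rw [hfun] at hvs
    have hmean0 : ∫ ω, (∑ i ∈ Finset.range n, IF (ξ i ω) k) ∂μ = 0 := by
      rw [integral_finset_sum _ fun i _ => (hXmem i k).integrable one_le_two]
      simp [hXmean]
    have hvd := variance_eq_sub hmemsum
    simp only [Pi.pow_apply] at hvd
    have h6 : ∫ ω, (∑ i ∈ Finset.range n, IF (ξ i ω) k)^2 ∂μ
        = variance (fun ω => ∑ i ∈ Finset.range n, IF (ξ i ω) k) μ
          + (∫ ω, (∑ i ∈ Finset.range n, IF (ξ i ω) k) ∂μ)^2 := by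
      rw [hvd]; ring
    rw [h6, hmean0, hvs]
    simp_rw [hvar]
    simp [Finset.sum_const, Finset.card_range, nsmul_eq_mul]
  -- second moment of the norm of the sum
  have hmemS : ∀ n : ℕ, MemLp (fun ω => ∑ i ∈ Finset.range n, IF (ξ i ω)) 2 μ :=
    fun n => memLp_finset_sum _ fun i _ => hIFL2.comp_measurePreserving (hmp i)
  have hSnormsq : ∀ (n : ℕ) (ω : Ω), ‖∑ i ∈ Finset.range n, IF (ξ i ω)‖^2
      = ∑ k : Fin d, (∑ i ∈ Finset.range n, IF (ξ i ω) k)^2 := by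
    intro n ω
    rw [eucl_norm_sq]
    refine Finset.sum_congr rfl fun k _ => ?_
    congr 1
    rw [WithLp.ofLp_sum, Finset.sum_apply]
  have hSmom : ∀ n : ℕ, ∫ ω, ‖∑ i ∈ Finset.range n, IF (ξ i ω)‖^2 ∂μ
      = n * ∫ x, ‖IF x‖^2 ∂P := by
    intro n
    have h1 : (fun ω => ‖∑ i ∈ Finset.range n, IF (ξ i ω)‖^2)
        = fun ω => ∑ k : Fin d, (∑ i ∈ Finset.range n, IF (ξ i ω) k)^2 :=
      funext (hSnormsq n)
    rw [h1, integral_finset_sum _ fun k _ =>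
      (memLp_finset_sum _ fun i _ => hXmem i k).integrable_sq]
    simp_rw [hSksq n]
    rw [← Finset.mul_sum, ← integral_finset_sum _ fun k _ => (hcoordP k).integrable_sq]
    congr 1
    refine integral_congr_ae (ae_of_all _ fun x => ?_)
    exact (eucl_norm_sq (IF x)).symm
  obtain ⟨V, hVdef⟩ : ∃ V : ℝ, V = ∫ x, ‖IF x‖^2 ∂P := ⟨_, rfl⟩
  have hV0 : 0 ≤ V := hVdef ▸ integral_nonneg fun x => sq_nonneg _
  simp only [← hVdef] at hSmom
  -- Chebyshev for the empirical average
  have cheb : ∀ c : ℝ, 0 < c → ∀ n : ℕ, 1 ≤ n →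
      μ {ω | c / Real.sqrt n ≤ ‖empAvg ξ IF n ω‖} ≤ ENNReal.ofReal (V / c^2) := by
    intro c hc n hn
    have hn0 : (0:ℝ) < n := by exact_mod_cast hn
    have hsq : (0:ℝ) < Real.sqrt n := Real.sqrt_pos.2 hn0
    have hmss : Real.sqrt n * Real.sqrt n = (n:ℝ) := Real.mul_self_sqrt hn0.le
    have hsub : {ω | c / Real.sqrt n ≤ ‖empAvg ξ IF n ω‖} ⊆
        {ω | (c * Real.sqrt n)^2 ≤ ‖∑ i ∈ Finset.range n, IF (ξ i ω)‖^2} := by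
      intro ω hω
      simp only [Set.mem_setOf_eq] at hω ⊢
      have hnorm : ‖empAvg ξ IF n ω‖ = (n:ℝ)⁻¹ * ‖∑ i ∈ Finset.range n, IF (ξ i ω)‖ := by
        rw [show empAvg ξ IF n ω = (n:ℝ)⁻¹ • ∑ i ∈ Finset.range n, IF (ξ i ω) from rfl,
          norm_smul, Real.norm_eq_abs, abs_of_nonneg (by positivity)]
      rw [hnorm] at hω
      have h2 : c * Real.sqrt n ≤ ‖∑ i ∈ Finset.range n, IF (ξ i ω)‖ := by
        calc c * Real.sqrt n = (n:ℝ) * (c / Real.sqrt n) := by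
              field_simp
              linear_combination hmss
          _ ≤ (n:ℝ) * ((n:ℝ)⁻¹ * ‖∑ i ∈ Finset.range n, IF (ξ i ω)‖) :=
              mul_le_mul_of_nonneg_left hω hn0.le
          _ = ‖∑ i ∈ Finset.range n, IF (ξ i ω)‖ := by
              rw [← mul_assoc, mul_inv_cancel₀ hn0.ne', one_mul]
      exact pow_le_pow_left₀ (by positivity) h2 2
    have hint : Integrable (fun ω => ‖∑ i ∈ Finset.range n, IF (ξ i ω)‖^2) μ :=
      (hmemS n).norm.integrable_sq
    have hmar := mul_meas_ge_le_integral_of_nonneg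
      (ae_of_all μ fun ω => sq_nonneg (‖∑ i ∈ Finset.range n, IF (ξ i ω)‖)) hint
      ((c * Real.sqrt n)^2)
    rw [hSmom n] at hmar
    have hA : μ {ω | (c * Real.sqrt n)^2 ≤ ‖∑ i ∈ Finset.range n, IF (ξ i ω)‖^2} ≠ ⊤ :=
      measure_ne_top μ _
    have htr : (μ {ω | (c * Real.sqrt n)^2
        ≤ ‖∑ i ∈ Finset.range n, IF (ξ i ω)‖^2}).toReal ≤ V / c^2 := by
      have h3 : (c * Real.sqrt n)^2 = c^2 * n := by rw [mul_pow, sq (Real.sqrt n), hmss]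
      have h4 : (n:ℝ) * ((μ {ω | (c * Real.sqrt n)^2
          ≤ ‖∑ i ∈ Finset.range n, IF (ξ i ω)‖^2}).toReal * c^2) ≤ (n:ℝ) * V := by
        have e : (n:ℝ) * ((μ {ω | (c * Real.sqrt n)^2
            ≤ ‖∑ i ∈ Finset.range n, IF (ξ i ω)‖^2}).toReal * c^2)
            = (c * Real.sqrt n)^2 * (μ {ω | (c * Real.sqrt n)^2
            ≤ ‖∑ i ∈ Finset.range n, IF (ξ i ω)‖^2}).toReal := by
          rw [h3]; ring
        rw [e]; exact hmar
      have h5 := le_of_mul_le_mul_left h4 hn0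
      rw [le_div_iff₀ (by positivity : (0:ℝ) < c^2)]
      exact h5
    calc μ {ω | c / Real.sqrt n ≤ ‖empAvg ξ IF n ω‖}
        ≤ μ {ω | (c * Real.sqrt n)^2 ≤ ‖∑ i ∈ Finset.range n, IF (ξ i ω)‖^2} :=
          measure_mono hsub
      _ = ENNReal.ofReal ((μ {ω | (c * Real.sqrt n)^2
            ≤ ‖∑ i ∈ Finset.range n, IF (ξ i ω)‖^2}).toReal) :=
          (ENNReal.ofReal_toReal hA).symm
      _ ≤ ENNReal.ofReal (V / c^2) := ENNReal.ofReal_le_ofReal htr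
  -- symmetry of H
  have hsymm : ∀ v w, H v w = H w v := fun v w =>
    second_derivative_symmetric_of_eventually hZ' hZ'' v w
  -- a_n → 0
  have hsqrtTop : Tendsto (fun n : ℕ => Real.sqrt n) atTop atTop := by
    apply tendsto_atTop_atTop_of_monotone
    · intro a b hab
      exact Real.sqrt_le_sqrt (by exact_mod_cast hab)
    · intro b
      obtain ⟨m, hm⟩ := exists_nat_ge (b^2)
      refine ⟨m, ?_⟩
      rcases le_or_gt b 0 with hb | hb
      · exact hb.trans (Real.sqrt_nonneg _)
      · exact (Real.le_sqrt hb.le (by positivity)).2 hm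
  have ha0 : Tendsto (fun n : ℕ => 1 / Real.sqrt n + |lam n|) atTop (𝓝 0) := by
    have h1 : Tendsto (fun n : ℕ => 1 / Real.sqrt n) atTop (𝓝 0) := by
      simpa [one_div, Pi.inv_def] using hsqrtTop.inv_tendsto_atTop
    have h2 : Tendsto (fun n : ℕ => |lam n|) atTop (𝓝 0) := by
      simpa using hlam.abs
    simpa using h1.add h2
  -- the main argument
  rw [tendstoInMeasure_iff_dist]
  intro ε hε
  rw [ENNReal.tendsto_atTop_zero]
  intro δ hδ
  have hδtop : min δ 1 ≠ ⊤ := ((min_le_right δ 1).trans_lt ENNReal.one_lt_top).ne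
  obtain ⟨δ₀, hδ₀def⟩ : ∃ x : ℝ, x = (min δ 1).toReal := ⟨_, rfl⟩
  have hδ₀ : 0 < δ₀ := by
    rw [hδ₀def]
    exact ENNReal.toReal_pos (lt_min hδ zero_lt_one).ne' hδtop
  have hδ₀le : ENNReal.ofReal δ₀ ≤ δ := by
    rw [hδ₀def, ENNReal.ofReal_toReal hδtop]
    exact min_le_left _ _
  obtain ⟨c, hcdef⟩ : ∃ x : ℝ, x = Real.sqrt (2 * V / δ₀) + 1 := ⟨_, rfl⟩
  have hc : 0 < c := by rw [hcdef]; positivity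
  have hVc : V / c^2 ≤ δ₀ / 2 := by
    have harg : 0 ≤ 2 * V / δ₀ := div_nonneg (by linarith) hδ₀.le
    have hs0 : 0 ≤ Real.sqrt (2*V/δ₀) := Real.sqrt_nonneg _
    have hsc : Real.sqrt (2*V/δ₀) ≤ c := by rw [hcdef]; linarith
    have hc2 : 2*V/δ₀ ≤ c^2 := by nlinarith [Real.sq_sqrt harg]
    have h2V : 2*V ≤ c^2 * δ₀ := (div_le_iff₀ hδ₀).mp hc2
    rw [div_le_iff₀ (pow_pos hc 2)]
    linarith
  obtain ⟨M, hMdef⟩ : ∃ x : ℝ, x = c + ‖K‖ + 1 := ⟨_, rfl⟩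
  have hM1 : 1 ≤ M := by
    have := norm_nonneg K
    rw [hMdef]; linarith
  have hM0 : 0 < M := lt_of_lt_of_le one_pos hM1
  obtain ⟨η, hηdef⟩ : ∃ x : ℝ, x = min 1 (ε / (8 * (‖H‖ * M + 1))) := ⟨_, rfl⟩
  have hη : 0 < η := by
    rw [hηdef]; exact lt_min one_pos (by positivity)
  have hη1 : η ≤ 1 := hηdef ▸ min_le_left _ _
  have hη2 : η ≤ ε / (8 * (‖H‖ * M + 1)) := hηdef ▸ min_le_right _ _
  obtain ⟨εT, hεTdef⟩ : ∃ x : ℝ, x = ε / (8 * (M^2 + 1)) := ⟨_, rfl⟩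
  have hεT : 0 < εT := by rw [hεTdef]; positivity
  obtain ⟨δT, hδT, hTay⟩ := taylor2 Z xs Z' H hZ' hZ'' hgrad hεT
  have hEv1 : ∀ᶠ n : ℕ in atTop, M * (1 / Real.sqrt n + |lam n|) ≤ δT := by
    have h0 : Tendsto (fun n : ℕ => M * (1 / Real.sqrt n + |lam n|)) atTop (𝓝 0) := by
      simpa using ha0.const_mul M
    exact (h0.eventually_lt_const hδT).mono fun n h => h.le
  have hEv2 : ∀ᶠ n : ℕ in atTop,
      μ {ω | η ≤ dist (‖R n ω‖ / (1 / Real.sqrt n + |lam n|)) 0} ≤ ENNReal.ofReal (δ₀/2) := by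
    have h0 := (tendstoInMeasure_iff_dist.mp hR) η hη
    exact (h0.eventually_lt_const (ENNReal.ofReal_pos.2 (by positivity))).mono fun n h => h.le
  have hEv3 : ∀ᶠ n : ℕ in atTop, 1 ≤ n := eventually_ge_atTop 1
  obtain ⟨N, hN⟩ := eventually_atTop.mp (hEv1.and (hEv2.and hEv3))
  refine ⟨N, fun n hn => ?_⟩
  obtain ⟨hn1, hn2, hn3⟩ := hN n hn
  have hn0 : (0:ℝ) < n := by exact_mod_cast hn3
  have hsqn : (0:ℝ) < Real.sqrt n := Real.sqrt_pos.2 hn0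
  have h11 : (1 / Real.sqrt n) * (1 / Real.sqrt n) = 1 / (n:ℝ) := by
    rw [div_mul_div_comm, one_mul, Real.mul_self_sqrt hn0.le]
  obtain ⟨an, hand⟩ : ∃ x : ℝ, x = 1 / Real.sqrt n + |lam n| := ⟨_, rfl⟩
  obtain ⟨rn, hrnd⟩ : ∃ x : ℝ, x = 1 / (n:ℝ) + lam n ^ 2 := ⟨_, rfl⟩
  have hsn1 : (0:ℝ) < 1 / Real.sqrt n := by positivity
  have hnn1 : (0:ℝ) < 1 / (n:ℝ) := by positivity
  have han : 0 < an := by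
    rw [hand]; exact add_pos_of_pos_of_nonneg hsn1 (abs_nonneg _)
  have hrn : 0 < rn := by
    rw [hrnd]; exact add_pos_of_pos_of_nonneg hnn1 (sq_nonneg _)
  have hrle : rn ≤ an^2 := by
    rw [hand, hrnd]
    nlinarith [abs_nonneg (lam n), sq_abs (lam n), h11,
      mul_nonneg hsn1.le (abs_nonneg (lam n))]
  have hale : an^2 ≤ 2 * rn := by
    rw [hand, hrnd]
    nlinarith [sq_nonneg (1 / Real.sqrt n - |lam n|), h11, sq_abs (lam n)]
  rw [← hand] at hn1 hn2
  -- the inclusion of events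
  have hsubset : {ω | ε ≤ dist ((Z (xhat n ω) - Z xs
          - ((1 / 2) * H (empAvg ξ IF n ω) (empAvg ξ IF n ω)
            + (1 / 2) * lam n ^ 2 * H K K
            + lam n * H K (empAvg ξ IF n ω))) / (1 / (n : ℝ) + lam n ^ 2)) 0} ⊆
      {ω | c / Real.sqrt n ≤ ‖empAvg ξ IF n ω‖}
        ∪ {ω | η ≤ dist (‖R n ω‖ / an) 0} := by
    intro ω hω
    by_contra hcon
    simp only [Set.mem_union, Set.mem_setOf_eq, not_or, not_le] at hcon
    obtain ⟨hDc, hRc⟩ := hcon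
    simp only [Set.mem_setOf_eq, Real.dist_eq, sub_zero] at hω hRc
    rw [← hrnd] at hω
    set Dn := empAvg ξ IF n ω with hDnd
    set Rn := R n ω with hRnd
    set l := lam n with hld
    -- basic bounds
    have hD2 : ‖Dn‖ ≤ c * an := by
      have hle : c / Real.sqrt n ≤ c * an := by
        rw [div_eq_mul_one_div, hand]
        exact mul_le_mul_of_nonneg_left (le_add_of_nonneg_right (abs_nonneg _)) hc.le
      exact hDc.le.trans hle
    have hR2 : ‖Rn‖ ≤ η * an := by
      have h0 : 0 ≤ ‖Rn‖ / an := by positivity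
      rw [abs_of_nonneg h0] at hRc
      calc ‖Rn‖ = (‖Rn‖ / an) * an := by rw [div_mul_cancel₀ _ han.ne']
        _ ≤ η * an := mul_le_mul_of_nonneg_right hRc.le han.le
    have hl : |l| ≤ an := by rw [hand]; exact le_add_of_nonneg_left hsn1.le
    have hxh : xhat n ω = xs + (Dn + l • K + Rn) := by
      rw [hdecomp n ω]; abel
    have hhn : ‖Dn + l • K + Rn‖ ≤ M * an := by
      have t1 : ‖Dn + l • K + Rn‖ ≤ ‖Dn‖ + ‖l • K‖ + ‖Rn‖ := norm_add₃_le
      rw [norm_smul, Real.norm_eq_abs] at t1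
      have t2 : |l| * ‖K‖ ≤ an * ‖K‖ := mul_le_mul_of_nonneg_right hl (norm_nonneg K)
      have t3 : η * an ≤ 1 * an := mul_le_mul_of_nonneg_right hη1 han.le
      rw [hMdef]
      nlinarith [norm_nonneg K, han]
    have hhδ : ‖Dn + l • K + Rn‖ ≤ δT := hhn.trans hn1
    have hT1 : |Z (xs + (Dn + l • K + Rn)) - Z xs
        - (1/2) * H (Dn + l • K + Rn) (Dn + l • K + Rn)|
        ≤ εT * ‖Dn + l • K + Rn‖^2 := hTay _ hhδ
    have hquad := quad_expand H hsymm Dn K Rn l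
    have hnum : Z (xhat n ω) - Z xs
        - ((1/2) * H Dn Dn + (1/2) * l^2 * H K K + l * H K Dn)
        = (Z (xs + (Dn + l • K + Rn)) - Z xs
            - (1/2) * H (Dn + l • K + Rn) (Dn + l • K + Rn))
          + (H Dn Rn + l * H K Rn + (1/2) * H Rn Rn) := by
      rw [hxh]
      linarith [hquad]
    -- bound the Taylor error
    have hT1' : |Z (xs + (Dn + l • K + Rn)) - Z xs
        - (1/2) * H (Dn + l • K + Rn) (Dn + l • K + Rn)| ≤ εT * (M * an)^2 := by
      refine hT1.trans ?_
      have hsq2 : ‖Dn + l • K + Rn‖^2 ≤ (M * an)^2 :=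
        pow_le_pow_left₀ (norm_nonneg _) hhn 2
      exact mul_le_mul_of_nonneg_left hsq2 hεT.le
    -- bound the cross terms
    have b1 : |H Dn Rn| ≤ ‖H‖ * (c * an) * (η * an) := by
      refine (bil_bound H Dn Rn).trans ?_
      exact mul_le_mul (mul_le_mul_of_nonneg_left hD2 (norm_nonneg H)) hR2 (norm_nonneg _)
        (by positivity)
    have b2 : |l * H K Rn| ≤ an * (‖H‖ * ‖K‖ * (η * an)) := by
      rw [abs_mul]
      have bb : |H K Rn| ≤ ‖H‖ * ‖K‖ * (η * an) := by
        refine (bil_bound H K Rn).trans ?_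
        exact mul_le_mul_of_nonneg_left hR2 (by positivity)
      exact mul_le_mul hl bb (abs_nonneg _) han.le
    have b3 : |H Rn Rn| ≤ ‖H‖ * (η * an) * (η * an) := by
      refine (bil_bound H Rn Rn).trans ?_
      exact mul_le_mul (mul_le_mul_of_nonneg_left hR2 (norm_nonneg H)) hR2 (norm_nonneg _)
        (by positivity)
    have hT2 : |H Dn Rn + l * H K Rn + (1/2) * H Rn Rn| ≤ ‖H‖ * η * M * an^2 := by
      have habs : |H Dn Rn + l * H K Rn + (1/2) * H Rn Rn|
          ≤ |H Dn Rn| + |l * H K Rn| + |(1/2) * H Rn Rn| :=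
            (abs_add_le _ _).trans (add_le_add_left (abs_add_le _ _) _)
      have b3' : |(1/2 : ℝ) * H Rn Rn| ≤ (1/2) * (‖H‖ * (η * an) * (η * an)) := by
        rw [abs_mul]
        rw [abs_of_nonneg (by norm_num : (0:ℝ) ≤ (1/2:ℝ))]
        exact mul_le_mul_of_nonneg_left b3 (by norm_num)
      have hkey : ‖H‖ * (c * an) * (η * an) + an * (‖H‖ * ‖K‖ * (η * an))
          + (1/2) * (‖H‖ * (η * an) * (η * an)) ≤ ‖H‖ * η * M * an^2 := by
        have e : ‖H‖ * (c * an) * (η * an) + an * (‖H‖ * ‖K‖ * (η * an))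
            + (1/2) * (‖H‖ * (η * an) * (η * an))
            = ‖H‖ * η * an^2 * (c + ‖K‖ + η/2) := by ring
        rw [e]
        have hle2 : c + ‖K‖ + η/2 ≤ M := by
          rw [hMdef]; linarith
        exact mul_le_mul_of_nonneg_left hle2
          (mul_nonneg (mul_nonneg (norm_nonneg H) hη.le) (sq_nonneg an)) |>.trans_eq (by ring)
      linarith only [habs, b1, b2, b3', hkey]
    -- combine quantitative bounds
    have hq1 : εT * M^2 ≤ ε / 8 := by
      rw [hεTdef, div_mul_eq_mul_div, div_le_div_iff₀ (by positivity) (by norm_num)]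
      linarith only [hε]
    have hq2 : ‖H‖ * η * M ≤ ε / 8 := by
      have h7 : ‖H‖ * η * M ≤ (‖H‖ * M) * (ε / (8 * (‖H‖ * M + 1))) := by
        calc ‖H‖ * η * M = (‖H‖ * M) * η := by ring
          _ ≤ (‖H‖ * M) * (ε / (8 * (‖H‖ * M + 1))) :=
            mul_le_mul_of_nonneg_left hη2 (by positivity)
      refine h7.trans ?_
      have e : (‖H‖ * M) * (ε / (8 * (‖H‖ * M + 1))) = ((‖H‖ * M) * ε) / (8 * (‖H‖ * M + 1)) := by
        ring
      rw [e, div_le_div_iff₀ (by positivity) (by norm_num : (0:ℝ) < 8)]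
      linarith only [hε]
    -- final bound on the numerator
    have hfinal : |Z (xhat n ω) - Z xs
        - ((1 / 2) * H Dn Dn + (1 / 2) * l ^ 2 * H K K + l * H K Dn)| ≤ (ε/2) * rn := by
      rw [hnum]
      have c1 : εT * (M * an)^2 ≤ (ε/4) * rn := by
        have e : εT * (M * an)^2 = (εT * M^2) * an^2 := by ring
        rw [e]
        calc (εT * M^2) * an^2 ≤ (ε/8) * an^2 :=
              mul_le_mul_of_nonneg_right hq1 (sq_nonneg an)
          _ ≤ (ε/8) * (2 * rn) := mul_le_mul_of_nonneg_left hale (by positivity)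
          _ = (ε/4) * rn := by ring
      have c2 : ‖H‖ * η * M * an^2 ≤ (ε/4) * rn := by
        calc ‖H‖ * η * M * an^2 ≤ (ε/8) * an^2 :=
              mul_le_mul_of_nonneg_right hq2 (sq_nonneg an)
          _ ≤ (ε/8) * (2 * rn) := mul_le_mul_of_nonneg_left hale (by positivity)
          _ = (ε/4) * rn := by ring
      calc |(Z (xs + (Dn + l • K + Rn)) - Z xs
            - (1/2) * H (Dn + l • K + Rn) (Dn + l • K + Rn))
          + (H Dn Rn + l * H K Rn + (1/2) * H Rn Rn)|
          ≤ |Z (xs + (Dn + l • K + Rn)) - Z xs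
            - (1/2) * H (Dn + l • K + Rn) (Dn + l • K + Rn)|
            + |H Dn Rn + l * H K Rn + (1/2) * H Rn Rn| := abs_add_le _ _
        _ ≤ εT * (M * an)^2 + ‖H‖ * η * M * an^2 := add_le_add hT1' hT2
        _ ≤ (ε/4) * rn + (ε/4) * rn := add_le_add c1 c2
        _ = (ε/2) * rn := by ring
    -- contradiction
    rw [abs_div, abs_of_pos hrn] at hω
    have hω' := (le_div_iff₀ hrn).mp hω
    nlinarith only [hfinal, hω', hrn, hε]
  refine le_trans (measure_mono hsubset) ?_
  refine le_trans (measure_union_le _ _) ?_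
  have hchb : μ {ω | c / Real.sqrt n ≤ ‖empAvg ξ IF n ω‖} ≤ ENNReal.ofReal (δ₀/2) :=
    (cheb c hc n hn3).trans (ENNReal.ofReal_le_ofReal hVc)
  calc μ {ω | c / Real.sqrt n ≤ ‖empAvg ξ IF n ω‖}
        + μ {ω | η ≤ dist (‖R n ω‖ / an) 0}
      ≤ ENNReal.ofReal (δ₀/2) + ENNReal.ofReal (δ₀/2) := add_le_add hchb hn2
    _ = ENNReal.ofReal (δ₀/2 + δ₀/2) := (ENNReal.ofReal_add (by positivity) (by positivity)).symm
    _ = ENNReal.ofReal δ₀ := by norm_num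
    _ ≤ δ := hδ₀le
end

section
/- Let φ : [0, ∞) → [0, ∞) be convex with φ(1) = 0, and suppose φ is twice continuously differentiable in a neighborhood of t = 1 with φ''(1) > 0. Define the conjugate φ*(s) = sup_{t ≥ 0} { s·t − φ(t) } for s ∈ ℝ. Then φ* is twice continuously differentiable in a neighborhood of 0, and φ*(0) = 0, (φ*)'(0) = 1, and (φ*)''(0) = 1/φ''(1) > 0. -/
open scoped Topology

/-- The convex conjugate `φ*(s) = sup_{t ≥ 0} { s·t − φ(t) }` of a divergence
generator `φ : [0,∞) → ℝ`. -/
noncomputable def phiConj (φ : ℝ → ℝ) (s : ℝ) : ℝ :=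
  sSup ((fun t => s * t - φ t) '' Set.Ici (0 : ℝ))

/-- Subgradient inequality for a convex function on `[0,∞)` differentiable at an
interior point. -/
lemma phiConj_subgrad {φ : ℝ → ℝ} (hconv : ConvexOn ℝ (Set.Ici (0 : ℝ)) φ)
    {x₀ t d : ℝ} (hx₀ : 0 < x₀) (ht : 0 ≤ t) (hd : HasDerivAt φ d x₀) :
    φ x₀ + d * (t - x₀) ≤ φ t := by
  rcases lt_trichotomy t x₀ with h | h | h
  · have hs := hconv.slope_le_of_hasDerivAt (Set.mem_Ici.2 ht) (Set.mem_Ici.2 hx₀.le) h hd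
    rw [slope_def_field, div_le_iff₀ (by linarith)] at hs
    have : d * (t - x₀) = -(d * (x₀ - t)) := by ring
    linarith
  · subst h; simp
  · have hs := hconv.le_slope_of_hasDerivAt (Set.mem_Ici.2 hx₀.le) (Set.mem_Ici.2 ht) h hd
    rw [slope_def_field, le_div_iff₀ (by linarith)] at hs
    linarith

/-- Lemma 2 of the paper: smoothness of the conjugate φ-function. If
`φ : [0,∞) → [0,∞)` is convex with `φ(1) = 0` and twice continuously differentiable
near `1` with `φ''(1) > 0`, then `φ*` is twice continuously differentiable near `0`,
with `φ*(0) = 0`, `(φ*)'(0) = 1` and `(φ*)''(0) = 1/φ''(1) > 0`. -/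
theorem phiConj_smoothness
    (φ : ℝ → ℝ)
    (hconv : ConvexOn ℝ (Set.Ici (0 : ℝ)) φ)
    (hnonneg : ∀ t, 0 ≤ t → 0 ≤ φ t)
    (hone : φ 1 = 0)
    (hsmooth : ∃ s ∈ 𝓝 (1 : ℝ), ContDiffOn ℝ 2 φ s)
    (hsecond : 0 < deriv (deriv φ) 1) :
    (∃ s ∈ 𝓝 (0 : ℝ), ContDiffOn ℝ 2 (phiConj φ) s) ∧
    phiConj φ 0 = 0 ∧
    deriv (phiConj φ) 0 = 1 ∧
    deriv (deriv (phiConj φ)) 0 = 1 / deriv (deriv φ) 1 ∧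
    0 < deriv (deriv (phiConj φ)) 0 := by
  classical
  obtain ⟨S, hS, hφS⟩ := hsmooth
  set D : ℝ → ℝ := deriv φ with hD
  set D2 : ℝ → ℝ := deriv D with hD2
  -- the open set where φ is C²
  set U : Set ℝ := interior S with hUdef
  have hUopen : IsOpen U := isOpen_interior
  have hU1 : (1 : ℝ) ∈ U := mem_interior_iff_mem_nhds.2 hS
  have hφU : ContDiffOn ℝ 2 φ U := hφS.mono interior_subset
  have h21 : (2 : WithTop ℕ∞) = 1 + 1 := by norm_num
  rw [h21, contDiffOn_succ_iff_deriv_of_isOpen hUopen] at hφU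
  obtain ⟨hφdiff, -, hDU⟩ := hφU
  have h10 : (1 : WithTop ℕ∞) = 0 + 1 := by norm_num
  have hDU' := hDU
  rw [h10, contDiffOn_succ_iff_deriv_of_isOpen hUopen] at hDU'
  obtain ⟨hDdiff, -, hD2U⟩ := hDU'
  have hD2cont : ContinuousOn D2 U := by rwa [contDiffOn_zero] at hD2U
  -- φ'(1) = 0
  have hmin : IsLocalMin φ 1 := by
    filter_upwards [isOpen_Ioi.mem_nhds (show (0 : ℝ) < 1 by norm_num)] with t ht
    rw [hone]; exact hnonneg t (le_of_lt ht)
  have hD1 : D 1 = 0 := hmin.deriv_eq_zero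
  -- the open set W around 1 where φ is C², positive, and φ'' > 0
  set W : Set ℝ := (U ∩ D2 ⁻¹' Set.Ioi 0) ∩ Set.Ioi 0 with hWdef
  have hWopen : IsOpen W :=
    (hD2cont.isOpen_inter_preimage hUopen isOpen_Ioi).inter isOpen_Ioi
  have hW1 : (1 : ℝ) ∈ W := ⟨⟨hU1, hsecond⟩, by norm_num⟩
  have hWsub : W ⊆ U := fun x hx => hx.1.1
  have hWpos : ∀ x ∈ W, 0 < x := fun x hx => hx.2
  have hWD2 : ∀ x ∈ W, 0 < D2 x := fun x hx => hx.1.2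
  -- local inverse of D = φ' at 1
  have hDC1 : ContDiffAt ℝ 1 D 1 := hDU.contDiffAt (hUopen.mem_nhds hU1)
  have hstrict : HasStrictDerivAt D (D2 1) 1 := hDC1.hasStrictDerivAt one_ne_zero
  have hne : D2 1 ≠ 0 := ne_of_gt hsecond
  set F := hstrict.hasStrictFDerivAt_equiv hne with hF
  set ψ : ℝ → ℝ := F.localInverse D _ 1 with hψ
  have hψ0 : ψ 0 = 1 := by
    have := F.localInverse_apply_image
    rwa [hD1] at this
  have hψstrict0 : HasStrictDerivAt ψ (D2 1)⁻¹ 0 := by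
    have := hstrict.to_localInverse (f := D) (hf' := hne)
    rwa [hD1] at this
  set P := F.toOpenPartialHomeomorph D with hP
  have hTopen : IsOpen P.target := P.open_target
  have hT0 : (0 : ℝ) ∈ P.target := by
    have := F.image_mem_toOpenPartialHomeomorph_target
    rwa [hD1] at this
  have hψcontAt : ∀ s ∈ P.target, ContinuousAt ψ s := by
    intro s hs
    have : ContinuousAt P.symm s := P.symm.continuousAt (by simpa using hs)
    exact this
  -- the eventual properties near 0
  have hψrightEv : ∀ᶠ y in 𝓝 (0 : ℝ), D (ψ y) = y := by
    have := F.eventually_right_inverse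
    rwa [hD1] at this
  have hψWEv : ∀ᶠ y in 𝓝 (0 : ℝ), ψ y ∈ W := by
    have hc : ContinuousAt ψ 0 := hψcontAt 0 hT0
    have : W ∈ 𝓝 (ψ 0) := by rw [hψ0]; exact hWopen.mem_nhds hW1
    exact hc.preimage_mem_nhds this
  have hbig : ∀ᶠ y in 𝓝 (0 : ℝ), y ∈ P.target ∧ ψ y ∈ W ∧ D (ψ y) = y := by
    filter_upwards [hTopen.mem_nhds hT0, hψWEv, hψrightEv] with y h1 h2 h3
    exact ⟨h1, h2, h3⟩
  obtain ⟨N, hNsub, hNopen, hN0⟩ := mem_nhds_iff.1 hbig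
  have hNT : ∀ s ∈ N, s ∈ P.target := fun s hs => (hNsub hs).1
  have hNW : ∀ s ∈ N, ψ s ∈ W := fun s hs => (hNsub hs).2.1
  have hND : ∀ s ∈ N, D (ψ s) = s := fun s hs => (hNsub hs).2.2
  -- derivative of ψ on N
  have hψderiv : ∀ s ∈ N, HasStrictDerivAt ψ (D2 (ψ s))⁻¹ s := by
    intro s hs
    have hcg : ContinuousAt ψ s := hψcontAt s (hNT s hs)
    have hDats : HasStrictDerivAt D (D2 (ψ s)) (ψ s) :=
      (hDU.contDiffAt (hUopen.mem_nhds (hWsub (hNW s hs)))).hasStrictDerivAt one_ne_zero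
    have hne' : D2 (ψ s) ≠ 0 := ne_of_gt (hWD2 _ (hNW s hs))
    have hfg : ∀ᶠ y in 𝓝 s, D (ψ y) = y := by
      filter_upwards [hNopen.mem_nhds hs] with y hy using hND y hy
    exact HasStrictDerivAt.of_local_left_inverse hcg hDats hne' hfg
  -- ψ is C¹ on N
  have hψmap : ∀ s ∈ N, ψ s ∈ U := fun s hs => hWsub (hNW s hs)
  have hψcontOn : ContinuousOn ψ N := fun s hs =>
    (hψcontAt s (hNT s hs)).continuousWithinAt
  have hψC1 : ContDiffOn ℝ 1 ψ N := by
    rw [h10, contDiffOn_succ_iff_deriv_of_isOpen hNopen]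
    refine ⟨fun s hs => ((hψderiv s hs).hasDerivAt.differentiableAt).differentiableWithinAt,
      by simp, ?_⟩
    rw [contDiffOn_zero]
    have : ContinuousOn (fun s => (D2 (ψ s))⁻¹) N := by
      apply ContinuousOn.inv₀
      · exact hD2cont.comp hψcontOn hψmap
      · exact fun s hs => ne_of_gt (hWD2 _ (hNW s hs))
    exact this.congr fun s hs => ((hψderiv s hs).hasDerivAt).deriv
  -- the explicit formula g
  set g : ℝ → ℝ := fun s => s * ψ s - φ (ψ s) with hg
  have hgderiv : ∀ s ∈ N, HasDerivAt g (ψ s) s := by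
    intro s hs
    have hψd : HasDerivAt ψ ((D2 (ψ s))⁻¹) s := (hψderiv s hs).hasDerivAt
    have hφd : HasDerivAt φ (D (ψ s)) (ψ s) :=
      (hφdiff.differentiableAt (hUopen.mem_nhds (hψmap s hs))).hasDerivAt
    have h1 : HasDerivAt (fun u => u * ψ u) (1 * ψ s + s * (D2 (ψ s))⁻¹) s :=
      (hasDerivAt_id s).mul hψd
    have h2 : HasDerivAt (fun u => φ (ψ u)) (D (ψ s) * (D2 (ψ s))⁻¹) s :=
      hφd.comp s hψd
    have h3 := h1.sub h2
    have heq : 1 * ψ s + s * (D2 (ψ s))⁻¹ - D (ψ s) * (D2 (ψ s))⁻¹ = ψ s := by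
      rw [hND s hs]; ring
    rwa [heq] at h3
  have hgC2 : ContDiffOn ℝ 2 g N := by
    rw [h21, contDiffOn_succ_iff_deriv_of_isOpen hNopen]
    refine ⟨fun s hs => ((hgderiv s hs).differentiableAt).differentiableWithinAt,
      by simp, ?_⟩
    exact hψC1.congr fun s hs => (hgderiv s hs).deriv
  -- phiConj = g on N
  have hEq : ∀ s ∈ N, phiConj φ s = g s := by
    intro s hs
    have hψpos : 0 < ψ s := hWpos _ (hNW s hs)
    have hφd : HasDerivAt φ s (ψ s) := by
      have := (hφdiff.differentiableAt (hUopen.mem_nhds (hψmap s hs))).hasDerivAt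
      rwa [show deriv φ (ψ s) = s from hND s hs] at this
    have hgreat : IsGreatest ((fun t => s * t - φ t) '' Set.Ici (0 : ℝ)) (g s) := by
      constructor
      · exact ⟨ψ s, Set.mem_Ici.2 hψpos.le, rfl⟩
      · rintro y ⟨t, ht, rfl⟩
        have := phiConj_subgrad hconv hψpos (Set.mem_Ici.1 ht) hφd
        simp only [hg]
        nlinarith [this]
    exact hgreat.csSup_eq
  -- conclusion
  have hNnhds : N ∈ 𝓝 (0 : ℝ) := hNopen.mem_nhds hN0
  have hfeq : phiConj φ =ᶠ[𝓝 (0 : ℝ)] g := Filter.eventuallyEq_of_mem hNnhds hEq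
  have hval0 : phiConj φ 0 = 0 := by
    rw [hEq 0 hN0]; simp [hg, hψ0, hone]
  have hderiv1 : deriv (phiConj φ) 0 = 1 := by
    rw [hfeq.deriv_eq, (hgderiv 0 hN0).deriv, hψ0]
  have hderivEq : deriv (phiConj φ) =ᶠ[𝓝 (0 : ℝ)] ψ := by
    refine hfeq.deriv.trans ?_
    filter_upwards [hNnhds] with s hs using (hgderiv s hs).deriv
  have hderiv2 : deriv (deriv (phiConj φ)) 0 = (D2 1)⁻¹ := by
    rw [hderivEq.deriv_eq, hψstrict0.hasDerivAt.deriv]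
  refine ⟨⟨N, hNnhds, hgC2.congr hEq⟩, hval0, hderiv1, ?_, ?_⟩
  · rw [hderiv2, one_div]
  · rw [hderiv2]; exact inv_pos.2 hsecond
end

section
/- Let (Ξ, 𝔉, μ) be a probability space, let h : Ξ → ℝ be a bounded measurable function, and let ψ : ℝ → ℝ be twice continuously differentiable in a neighborhood of 0 with ψ'(0) = 1 and ψ''(0) > 0. Then there exist δ > 0 and a continuously differentiable function β : (−δ, δ) → ℝ with β(0) = 0 such that for all α ∈ (−δ, δ), ∫ ψ'(α·h(ξ) − β(α)) dμ(ξ) = 1, and β'(0) = ∫ h dμ. -/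
open MeasureTheory
open scoped Topology

set_option maxHeartbeats 1000000 in
/-- The implicit-function-theorem step in the proof of Theorem 4 of the paper:
for bounded measurable `h` and `ψ` twice continuously differentiable near `0` with
`ψ'(0) = 1` and `ψ''(0) > 0`, the normalization equation
`∫ ψ'(α·h(ξ) − β) dμ(ξ) = 1` can be solved for `β = β(α)` near `α = 0`, with
`β(0) = 0` and `β'(0) = ∫ h dμ`. -/
theorem normalization_equation_implicit_function
    {Ξ : Type*} [MeasurableSpace Ξ] {μ : Measure Ξ} [IsProbabilityMeasure μ]
    (h : Ξ → ℝ) (hmeas : Measurable h) (hbdd : ∃ C : ℝ, ∀ x, |h x| ≤ C)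
    (ψ : ℝ → ℝ)
    (hsmooth : ∃ s ∈ 𝓝 (0 : ℝ), ContDiffOn ℝ 2 ψ s)
    (hψ' : deriv ψ 0 = 1)
    (hψ'' : 0 < deriv (deriv ψ) 0) :
    ∃ δ > (0 : ℝ), ∃ β : ℝ → ℝ,
      ContDiffOn ℝ 1 β (Set.Ioo (-δ) δ) ∧
      β 0 = 0 ∧
      (∀ α ∈ Set.Ioo (-δ) δ, ∫ x, deriv ψ (α * h x - β α) ∂μ = 1) ∧
      deriv β 0 = ∫ x, h x ∂μ := by
  classical
  obtain ⟨C₀, hC₀⟩ := hbdd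
  set C : ℝ := max C₀ 0 with hCdef
  have hC : ∀ x, |h x| ≤ C := fun x => (hC₀ x).trans (le_max_left _ _)
  have hC0 : 0 ≤ C := le_max_right _ _
  obtain ⟨s, hs, hψs⟩ := hsmooth
  set U : Set ℝ := interior s with hUdef
  have hU : IsOpen U := isOpen_interior
  have hU0 : (0:ℝ) ∈ U := mem_interior_iff_mem_nhds.2 hs
  have hψU : ContDiffOn ℝ 2 ψ U := hψs.mono interior_subset
  obtain ⟨r, hr, hrU⟩ : ∃ r > 0, Metric.closedBall (0:ℝ) r ⊆ U := by
    rcases Metric.mem_nhds_iff.1 (hU.mem_nhds hU0) with ⟨ε, hε, hεU⟩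
    exact ⟨ε/2, by linarith, (Metric.closedBall_subset_ball (by linarith)).trans hεU⟩
  set g : ℝ → ℝ := deriv ψ with hgdef
  set g' : ℝ → ℝ := deriv (deriv ψ) with hg'def
  have hg1 : ContDiffOn ℝ 1 g U := by
    exact hψU.deriv_of_isOpen hU (by norm_num)
  have hgderiv : ∀ t ∈ U, HasDerivAt g (g' t) t := fun t ht =>
    ((hg1.differentiableOn one_ne_zero).differentiableAt (hU.mem_nhds ht)).hasDerivAt
  have hg'cont : ContinuousOn g' U := hg1.continuousOn_deriv_of_isOpen hU le_rfl
  have hgcont : ContinuousOn g U := hg1.continuousOn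
  have hgm : Measurable g := measurable_deriv ψ
  have hg'm : Measurable g' := measurable_deriv (deriv ψ)
  -- bounds on g, g' on closedBall 0 r
  obtain ⟨M, hM⟩ : ∃ M, ∀ t ∈ Metric.closedBall (0:ℝ) r, ‖g' t‖ ≤ M :=
    (isCompact_closedBall 0 r).exists_bound_of_continuousOn (hg'cont.mono hrU)
  obtain ⟨M₂, hM₂⟩ : ∃ M₂, ∀ t ∈ Metric.closedBall (0:ℝ) r, ‖g t‖ ≤ M₂ :=
    (isCompact_closedBall 0 r).exists_bound_of_continuousOn (hgcont.mono hrU)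
  have hInt_h : Integrable h μ :=
    (integrable_const C).mono' hmeas.aestronglyMeasurable
      (Filter.Eventually.of_forall fun x => by simpa using hC x)
  set ρ : ℝ := r / (C + 1) with hρdef
  have hρ : 0 < ρ := div_pos hr (by linarith)
  -- key: points in the ball map into closedBall 0 r
  have hkey : ∀ p : ℝ × ℝ, p ∈ Metric.ball (0:ℝ×ℝ) ρ → ∀ x,
      p.1 * h x - p.2 ∈ Metric.closedBall (0:ℝ) r := by
    intro p hp x
    have hp1 : |p.1| < ρ := lt_of_le_of_lt (by simpa using norm_fst_le p)
      (by simpa [Prod.norm_def] using mem_ball_iff_norm.1 hp)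
    have hp2 : |p.2| < ρ := lt_of_le_of_lt (by simpa using norm_snd_le p)
      (by simpa [Prod.norm_def] using mem_ball_iff_norm.1 hp)
    have : |p.1 * h x - p.2| ≤ |p.1| * C + |p.2| := by
      calc |p.1 * h x - p.2| ≤ |p.1 * h x| + |p.2| := abs_sub _ _
        _ ≤ |p.1| * C + |p.2| := by
            rw [abs_mul]; gcongr; exact hC x
    have : |p.1 * h x - p.2| ≤ ρ * C + ρ := by nlinarith [abs_nonneg p.1]
    have hρr : ρ * C + ρ = r := by
      rw [hρdef]
      have hC1 : C + 1 ≠ 0 := by linarith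
      calc r / (C + 1) * C + r / (C + 1) = r / (C + 1) * (C + 1) := by ring
        _ = r := div_mul_cancel₀ r hC1
    simpa [Real.closedBall_eq_Icc, abs_le] using abs_le.1 (this.trans_eq hρr)
  -- the functional and its derivative
  set A : ℝ × ℝ →L[ℝ] ℝ := ContinuousLinearMap.fst ℝ ℝ ℝ with hAdef
  set B : ℝ × ℝ →L[ℝ] ℝ := ContinuousLinearMap.snd ℝ ℝ ℝ with hBdef
  set F : ℝ × ℝ → ℝ := fun p => ∫ x, g (p.1 * h x - p.2) ∂μ with hFdef
  set F' : ℝ × ℝ → Ξ → (ℝ × ℝ →L[ℝ] ℝ) :=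
    fun p x => g' (p.1 * h x - p.2) • (h x • A - B) with hF'def
  set L : ℝ × ℝ → (ℝ × ℝ →L[ℝ] ℝ) := fun p => ∫ x, F' p x ∂μ with hLdef
  have hmeas_inner : ∀ p : ℝ × ℝ, Measurable (fun x => p.1 * h x - p.2) :=
    fun p => (measurable_const.mul hmeas).sub measurable_const
  have hFmeas : ∀ p : ℝ × ℝ, AEStronglyMeasurable (fun x => g (p.1 * h x - p.2)) μ :=
    fun p => (hgm.comp (hmeas_inner p)).aestronglyMeasurable
  have hF'meas : ∀ p : ℝ × ℝ, AEStronglyMeasurable (F' p) μ := by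
    intro p
    have hu : Measurable fun x => (g' (p.1 * h x - p.2), h x) :=
      (hg'm.comp (hmeas_inner p)).prodMk hmeas
    have hφ : Continuous fun q : ℝ × ℝ => q.1 • (q.2 • A - B) := by fun_prop
    exact hφ.comp_aestronglyMeasurable hu.aestronglyMeasurable
  have hABnorm : ∀ x, ‖h x • A - B‖ ≤ C + 1 := by
    intro x
    refine ContinuousLinearMap.opNorm_le_bound _ (by linarith) fun q => ?_
    have hq1 : |q.1| ≤ ‖q‖ := by simpa using norm_fst_le q
    have hq2 : |q.2| ≤ ‖q‖ := by simpa using norm_snd_le q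
    have happ : (h x • A - B) q = h x * q.1 - q.2 := by
      simp [hAdef, hBdef]
    rw [happ]
    have key : |h x * q.1 - q.2| ≤ |h x| * |q.1| + |q.2| := by
      calc |h x * q.1 - q.2| ≤ |h x * q.1| + |q.2| := abs_sub _ _
        _ = |h x| * |q.1| + |q.2| := by rw [abs_mul]
    have hhx := hC x
    have h1 := abs_nonneg (h x)
    have h2 := norm_nonneg q
    calc ‖h x * q.1 - q.2‖ = |h x * q.1 - q.2| := rfl
      _ ≤ |h x| * |q.1| + |q.2| := key
      _ ≤ C * ‖q‖ + ‖q‖ := add_le_add (mul_le_mul hhx hq1 (abs_nonneg _) hC0) hq2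
      _ = (C + 1) * ‖q‖ := by ring
  have hMnn : 0 ≤ M := le_trans (norm_nonneg _) (hM 0 (Metric.mem_closedBall_self hr.le))
  have hF'bound : ∀ p ∈ Metric.ball (0:ℝ×ℝ) ρ, ∀ x, ‖F' p x‖ ≤ M * (C + 1) := by
    intro p hp x
    have ht := hkey p hp x
    exact (norm_smul_le _ _).trans
      (mul_le_mul (hM _ ht) (hABnorm x) (norm_nonneg _) hMnn)
  have hFint : ∀ p ∈ Metric.ball (0:ℝ×ℝ) ρ, Integrable (fun x => g (p.1 * h x - p.2)) μ :=
    fun p hp => (integrable_const M₂).mono' (hFmeas p)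
      (Filter.Eventually.of_forall fun x => hM₂ _ (hkey p hp x))
  have hFderiv : ∀ p ∈ Metric.ball (0:ℝ×ℝ) ρ, HasFDerivAt F (L p) p := by
    intro p hp
    have hε : 0 < ρ - ‖p‖ := by
      have := mem_ball_zero_iff.1 hp; linarith
    have hball : Metric.ball p (ρ - ‖p‖) ⊆ Metric.ball (0:ℝ×ℝ) ρ := by
      intro q hq
      rw [mem_ball_zero_iff]
      have hqp : ‖q - p‖ < ρ - ‖p‖ := by simpa [dist_eq_norm] using hq
      calc ‖q‖ = ‖q - p + p‖ := by ring_nf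
        _ ≤ ‖q - p‖ + ‖p‖ := norm_add_le _ _
        _ < ρ := by linarith
    refine hasFDerivAt_integral_of_dominated_of_fderiv_le (Metric.ball_mem_nhds p hε)
      (Filter.Eventually.of_forall fun q => hFmeas q) (hFint p hp) (hF'meas p)
      (Filter.Eventually.of_forall fun x q hq => hF'bound q (hball hq) x)
      (integrable_const _)
      (Filter.Eventually.of_forall fun x q hq => ?_)
    have ht : q.1 * h x - q.2 ∈ Metric.closedBall (0:ℝ) r := hkey q (hball hq) x
    have hlin : HasFDerivAt (fun q : ℝ × ℝ => q.1 * h x - q.2) (h x • A - B) q :=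
      (hasFDerivAt_fst.mul_const (h x)).sub hasFDerivAt_snd
    exact (hgderiv _ (hrU ht)).comp_hasFDerivAt q hlin
  have hLcont : ContinuousOn L (Metric.ball (0:ℝ×ℝ) ρ) := by
    refine continuousOn_of_dominated (fun p _ => hF'meas p)
      (fun p hp => Filter.Eventually.of_forall fun x => hF'bound p hp x)
      (integrable_const (M * (C + 1)))
      (Filter.Eventually.of_forall fun x => ?_)
    have hcont1 : ContinuousOn (fun p : ℝ × ℝ => g' (p.1 * h x - p.2)) (Metric.ball 0 ρ) :=
      hg'cont.comp ((continuous_fst.mul continuous_const).sub continuous_snd).continuousOn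
        (fun p hp => hrU (hkey p hp x))
    exact hcont1.smul continuousOn_const
  have hFcd : ContDiffAt ℝ 1 F (0, 0) :=
    contDiffAt_one_iff.2 ⟨L, Metric.ball 0 ρ, Metric.ball_mem_nhds _ hρ, hLcont, hFderiv⟩
  set I : ℝ := ∫ x, h x ∂μ with hIdef
  have hF00 : F (0, 0) = 1 := by
    rw [hFdef]
    dsimp only
    have hfun : (fun x => g ((0:ℝ) * h x - 0)) = fun _ => (1:ℝ) := by
      funext x; rw [zero_mul, sub_zero, hψ']
    rw [hfun]
    simp
  have hL00 : L (0, 0) = (g' 0 * I) • A - g' 0 • B := by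
    rw [hLdef]
    dsimp only
    have hfun : (fun x => F' (0, 0) x) = fun x => (g' 0 * h x) • A - g' 0 • B := by
      funext x
      rw [hF'def]
      dsimp only
      rw [zero_mul, sub_zero, smul_sub, smul_smul]
    rw [hfun, integral_sub ((hInt_h.const_mul (g' 0)).smul_const A) (integrable_const _),
      integral_smul_const, integral_const_mul, integral_const]
    simp [hIdef]
  have hc : g' 0 ≠ 0 := ne_of_gt hψ''
  have hinv1 : Function.LeftInverse (A.prod (I • A - (g' 0)⁻¹ • B))
      (A.prod ((g' 0 * I) • A - g' 0 • B)) := by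
    intro p
    apply Prod.ext
    · simp [hAdef]
    · simp only [ContinuousLinearMap.prod_apply, ContinuousLinearMap.sub_apply,
        ContinuousLinearMap.smul_apply, hAdef, hBdef, ContinuousLinearMap.coe_fst',
        ContinuousLinearMap.coe_snd', smul_eq_mul]
      field_simp
      ring
  have hinv2 : Function.RightInverse (A.prod (I • A - (g' 0)⁻¹ • B))
      (A.prod ((g' 0 * I) • A - g' 0 • B)) := by
    intro p
    apply Prod.ext
    · simp [hAdef]
    · simp only [ContinuousLinearMap.prod_apply, ContinuousLinearMap.sub_apply,
        ContinuousLinearMap.smul_apply, hAdef, hBdef, ContinuousLinearMap.coe_fst',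
        ContinuousLinearMap.coe_snd', smul_eq_mul]
      field_simp
      ring
  set e : (ℝ × ℝ) ≃L[ℝ] (ℝ × ℝ) :=
    ContinuousLinearEquiv.equivOfInverse _ _ hinv1 hinv2 with hedef
  have hecoe : (e : ℝ × ℝ →L[ℝ] ℝ × ℝ) = A.prod ((g' 0 * I) • A - g' 0 • B) := rfl
  set G : ℝ × ℝ → ℝ × ℝ := fun p => (p.1, F p) with hGdef
  have hGcd : ContDiffAt ℝ 1 G (0, 0) := contDiffAt_fst.prodMk hFcd
  have hG' : HasFDerivAt G (e : ℝ × ℝ →L[ℝ] ℝ × ℝ) (0, 0) := by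
    rw [hecoe, ← hL00]
    exact hasFDerivAt_fst.prodMk (hFderiv (0, 0) (Metric.mem_ball_self hρ))
  have h1n : (1 : WithTop ℕ∞) ≠ 0 := one_ne_zero
  set Φ : ℝ × ℝ → ℝ × ℝ := hGcd.localInverse hG' h1n with hΦdef
  have hG00 : G (0, 0) = ((0:ℝ), (1:ℝ)) := by
    rw [hGdef]; dsimp only; rw [hF00]
  have hΦcd : ContDiffAt ℝ 1 Φ ((0:ℝ), (1:ℝ)) := by
    have := hGcd.to_localInverse hG' h1n
    rwa [hG00] at this
  have hΦ0 : Φ ((0:ℝ), (1:ℝ)) = ((0:ℝ), (0:ℝ)) := by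
    have := hGcd.localInverse_apply_image hG' h1n
    rwa [hG00] at this
  have hright : ∀ᶠ y in 𝓝 ((0:ℝ), (1:ℝ)), G (Φ y) = y := by
    have := (hGcd.hasStrictFDerivAt' hG' h1n).eventually_right_inverse
    rw [hG00] at this
    exact this
  set β : ℝ → ℝ := fun α => (Φ (α, 1)).2 with hβdef
  have hβcd : ContDiffAt ℝ 1 β 0 := by
    have hcurve : ContDiffAt ℝ 1 (fun α : ℝ => (α, (1:ℝ))) 0 := contDiffAt_id.prodMk contDiffAt_const
    exact contDiffAt_snd.comp 0 (hΦcd.comp 0 hcurve)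
  have hβ0 : β 0 = 0 := by
    rw [hβdef]; dsimp only; rw [hΦ0]
  obtain ⟨u, hu, hβu⟩ := hβcd.contDiffOn le_rfl (by simp)
  have hcont10 : ContinuousAt (fun α : ℝ => (α, (1:ℝ))) 0 :=
    (continuous_id.prodMk continuous_const).continuousAt
  have hev : ∀ᶠ α in 𝓝 (0:ℝ), G (Φ (α, 1)) = (α, 1) :=
    Filter.Tendsto.eventually hcont10 hright
  have heq : ∀ α : ℝ, G (Φ (α, 1)) = (α, 1) → F (α, β α) = 1 := by
    intro α hα
    have h1 : (Φ (α, 1)).1 = α := congrArg Prod.fst hα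
    have h2 : F (Φ (α, 1)) = 1 := congrArg Prod.snd hα
    have hpt : (Φ (α, 1)) = (α, β α) := Prod.ext h1 rfl
    rwa [hpt] at h2
  obtain ⟨δ, hδ, hδsub⟩ :
      ∃ δ > (0:ℝ), Set.Ioo (-δ) δ ⊆ u ∩ {α : ℝ | G (Φ (α, 1)) = (α, 1)} := by
    rcases Metric.mem_nhds_iff.1 (Filter.inter_mem hu hev) with ⟨ε, hε, hsub⟩
    refine ⟨ε / 2, by linarith, fun α hα => hsub ?_⟩
    rw [Real.ball_eq_Ioo]
    exact ⟨by simpa using by linarith [hα.1], by simpa using by linarith [hα.2]⟩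
  -- derivative of β at 0
  have hmder : HasDerivAt β (deriv β 0) 0 := (hβcd.differentiableAt one_ne_zero).hasDerivAt
  have hγ : HasDerivAt (fun α : ℝ => (α, β α)) ((1:ℝ), deriv β 0) 0 :=
    (hasDerivAt_id 0).prodMk hmder
  have hF0 : HasFDerivAt F (L (0, 0)) ((fun α : ℝ => (α, β α)) 0) := by
    have : (fun α : ℝ => (α, β α)) 0 = ((0:ℝ), (0:ℝ)) := by simp [hβ0]
    rw [this]
    exact hFderiv (0, 0) (Metric.mem_ball_self hρ)
  have hcomp : HasDerivAt (fun α : ℝ => F (α, β α)) (L (0, 0) ((1:ℝ), deriv β 0)) 0 :=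
    by have := hF0.comp_hasDerivAt 0 hγ; exact this
  have hconst : HasDerivAt (fun α : ℝ => F (α, β α)) 0 0 := by
    have hEq : (fun α : ℝ => F (α, β α)) =ᶠ[𝓝 (0:ℝ)] fun _ => (1:ℝ) :=
      hev.mono fun α hα => heq α hα
    exact (hasDerivAt_const (0:ℝ) (1:ℝ)).congr_of_eventuallyEq hEq
  have hzero : L (0, 0) ((1:ℝ), deriv β 0) = 0 := hcomp.unique hconst
  have heval : g' 0 * I - g' 0 * deriv β 0 = 0 := by
    rw [hL00] at hzero
    simpa [hAdef, hBdef] using hzero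
  have hderβ : deriv β 0 = I := by
    have hmul : g' 0 * I = g' 0 * deriv β 0 := by linarith
    exact (mul_left_cancel₀ hc hmul).symm
  refine ⟨δ, hδ, β, ?_, hβ0, ?_, ?_⟩
  · exact hβu.mono fun α hα => (hδsub hα).1
  · intro α hα
    exact heq α (hδsub hα).2
  · exact hderβ
end

section
/- Let ψ : ℝ^d × ℝ^m → ℝ with ∇_x ψ continuously differentiable in a neighborhood of (x*, θ*), ∇_x ψ(x*, θ*) = 0, and ∇²_x ψ(x*, θ*) invertible; let R : ℝ^d → ℝ be twice continuously differentiable; and let x(θ, λ) denote the locally unique continuously differentiable solution of ∇_x ψ(x, θ) + λ·∇R(x) = 0 with x(θ*, 0) = x*. Let ξ_1, ξ_2, … be i.i.d. with law P, let IF_θ : Ξ → ℝ^m be measurable with E_P[IF_θ(ξ)] = 0 and finite covariance, and suppose estimators θ̂_n satisfy θ̂_n − θ* = (1/n)·Σ_{i=1}^n IF_θ(ξ_i) + r_n with √n·r_n → 0 in probability. Then for any sequence λ_n → 0, the regularized parametric solutions x̂_n = x(θ̂_n, λ_n) satisfy x̂_n − x* = −(∇²_x ψ(x*, θ*))^{−1}·∇_{xθ}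 ψ(x*, θ*)·(1/n)·Σ_{i=1}^n IF_θ(ξ_i) − λ_n·(∇²_x ψ(x*, θ*))^{−1}·∇R(x*) + s_n, where s_n/(n^{−1/2} + |λ_n|) → 0 in probability. -/
open MeasureTheory ProbabilityTheory Filter
open scoped Topology ENNReal

private lemma cheb_aux {m : ℕ} {Ω : Type*} [MeasurableSpace Ω] {μ : Measure Ω} [IsProbabilityMeasure μ]
    {Ξ : Type*} [MeasurableSpace Ξ] {P : Measure Ξ} [IsProbabilityMeasure P]
    (ξ : ℕ → Ω → Ξ) (hξmeas : ∀ i, Measurable (ξ i))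
    (hindep : iIndepFun ξ μ)
    (hlaw : ∀ i, Measure.map (ξ i) μ = P)
    (IFθ : Ξ → EuclideanSpace ℝ (Fin m)) (hIFmeas : Measurable IFθ)
    (hIFmean : ∫ y, IFθ y ∂P = 0) (hIFL2 : MemLp IFθ 2 P) :
    ∃ C : ℝ, 0 ≤ C ∧ ∀ n : ℕ, 1 ≤ n → ∀ M : ℝ, 0 < M →
      μ {ω | M ≤ ‖∑ i ∈ Finset.range n, IFθ (ξ i ω)‖ / Real.sqrt n}
        ≤ ENNReal.ofReal (C / M ^ 2) := by
  classical
  set g : Fin m → Ξ → ℝ := fun k y => IFθ y k with hg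
  have hgmeas : ∀ k, Measurable (g k) := fun k => (EuclideanSpace.proj (𝕜 := ℝ) k).continuous.measurable.comp hIFmeas
  have hgL2 : ∀ k, MemLp (g k) 2 P := by
    intro k
    have := (EuclideanSpace.proj (𝕜 := ℝ) k).comp_memLp' hIFL2
    exact this
  set Y : Fin m → ℕ → Ω → ℝ := fun k i ω => g k (ξ i ω) with hY
  have hYL2 : ∀ k i, MemLp (Y k i) 2 μ := by
    intro k i
    have h1 : MemLp (g k) 2 (Measure.map (ξ i) μ) := by rw [hlaw i]; exact hgL2 k
    exact (memLp_map_measure_iff h1.aestronglyMeasurable (hξmeas i).aemeasurable).1 h1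
  have hmap : ∀ k i (f : ℝ → ℝ), Measurable f →
      ∫ ω, f (Y k i ω) ∂μ = ∫ y, f (g k y) ∂P := by
    intro k i f hf
    rw [← hlaw i, integral_map (hξmeas i).aemeasurable]
    exact (hf.comp (hgmeas k)).aestronglyMeasurable
  -- mean zero
  have hgmean : ∀ k, ∫ y, g k y ∂P = 0 := by
    intro k
    have h1 : ∫ y, (EuclideanSpace.proj (𝕜 := ℝ) k) (IFθ y) ∂P
        = (EuclideanSpace.proj (𝕜 := ℝ) k) (∫ y, IFθ y ∂P) :=
      ContinuousLinearMap.integral_comp_comm _ (hIFL2.integrable one_le_two)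
    rw [hIFmean] at h1
    simpa using h1
  have hYmean : ∀ k i, ∫ ω, Y k i ω ∂μ = 0 := by
    intro k i
    have h := hmap k i id measurable_id
    simp only [id] at h
    rw [h]; exact hgmean k
  -- variance transfer
  have hYvar : ∀ k i, variance (Y k i) μ = variance (g k) P := by
    intro k i
    rw [variance_eq_sub (hYL2 k i), variance_eq_sub (hgL2 k)]
    congr 1
    · have := hmap k i (fun t => t ^ 2) (measurable_id.pow_const 2)
      simpa [Pi.pow_apply] using this
    · have h := hmap k i id measurable_id
      simp only [id] at h
      rw [h]
  set V : ℝ := ∑ k : Fin m, variance (g k) P with hV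
  have hV0 : 0 ≤ V := Finset.sum_nonneg fun k _ => variance_nonneg _ _
  refine ⟨(m : ℝ) * V, by positivity, ?_⟩
  intro n hn M hM
  rcases Nat.eq_zero_or_pos m with hm | hm
  · have hzero : ∀ v : EuclideanSpace ℝ (Fin m), ‖v‖ = 0 := by
      subst hm; intro v; rw [EuclideanSpace.norm_eq]; simp
    have : {ω | M ≤ ‖∑ i ∈ Finset.range n, IFθ (ξ i ω)‖ / Real.sqrt n} = ∅ := by
      ext ω; simp only [Set.mem_setOf_eq, Set.mem_empty_iff_false, iff_false, not_le, hzero]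
      simpa using hM
    rw [this, measure_empty]
    positivity
  · have hn' : (0:ℝ) < Real.sqrt n := Real.sqrt_pos.2 (by exact_mod_cast hn)
    have hm' : (0:ℝ) < Real.sqrt m := Real.sqrt_pos.2 (by exact_mod_cast hm)
    set c : ℝ := M * Real.sqrt n / Real.sqrt m with hc
    have hc0 : 0 < c := by positivity
    -- coordinates of the sum
    have hcoord : ∀ (ω : Ω) (k : Fin m),
        (∑ i ∈ Finset.range n, IFθ (ξ i ω)) k = ∑ i ∈ Finset.range n, Y k i ω := by
      intro ω k
      induction' (Finset.range n) using Finset.induction_on with a s ha ih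
      · simp
      · rw [Finset.sum_insert ha, Finset.sum_insert ha, ← ih]; rfl
    -- inclusion into union of coordinate events
    have hincl : {ω | M ≤ ‖∑ i ∈ Finset.range n, IFθ (ξ i ω)‖ / Real.sqrt n}
        ⊆ ⋃ k : Fin m, {ω | c ≤ |∑ i ∈ Finset.range n, Y k i ω|} := by
      intro ω hω
      simp only [Set.mem_setOf_eq] at hω
      by_contra hnot
      simp only [Set.mem_iUnion, Set.mem_setOf_eq, not_exists, not_le] at hnot
      have hns : M * Real.sqrt n ≤ ‖∑ i ∈ Finset.range n, IFθ (ξ i ω)‖ :=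
        (le_div_iff₀ hn').1 hω
      have hsq : ‖∑ i ∈ Finset.range n, IFθ (ξ i ω)‖ ^ 2
          = ∑ k : Fin m, (∑ i ∈ Finset.range n, Y k i ω) ^ 2 := by
        rw [EuclideanSpace.norm_eq, Real.sq_sqrt (by positivity)]
        refine Finset.sum_congr rfl fun k _ => ?_
        rw [hcoord ω k, Real.norm_eq_abs, sq_abs]
      have hlt : ∑ k : Fin m, (∑ i ∈ Finset.range n, Y k i ω) ^ 2
          < ∑ k : Fin m, c ^ 2 := by
        refine Finset.sum_lt_sum_of_nonempty ?_ fun k _ => ?_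
        · exact Finset.univ_nonempty_iff.2 ⟨⟨0, hm⟩⟩
        · have := hnot k
          have h1 : |∑ i ∈ Finset.range n, Y k i ω| ^ 2 < c ^ 2 := by
            apply pow_lt_pow_left₀ this (abs_nonneg _)
            norm_num
          simpa [sq_abs] using h1
      have hcsum : ∑ _k : Fin m, c ^ 2 = (M * Real.sqrt n) ^ 2 := by
        rw [Finset.sum_const, Finset.card_univ, Fintype.card_fin, nsmul_eq_mul, hc]
        rw [div_pow, Real.sq_sqrt (by positivity : (0:ℝ) ≤ (m:ℝ))]
        field_simp
      have h2 : ‖∑ i ∈ Finset.range n, IFθ (ξ i ω)‖ ^ 2 < (M * Real.sqrt n) ^ 2 := by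
        rw [hsq]; rw [hcsum] at hlt; exact hlt
      have h3 : (M * Real.sqrt n) ^ 2 ≤ ‖∑ i ∈ Finset.range n, IFθ (ξ i ω)‖ ^ 2 :=
        pow_le_pow_left₀ (by positivity) hns 2
      linarith
    refine (measure_mono hincl).trans ?_
    refine (measure_iUnion_fintype_le μ _).trans ?_
    -- per-coordinate Chebyshev
    have hper : ∀ k : Fin m, μ {ω | c ≤ |∑ i ∈ Finset.range n, Y k i ω|}
        ≤ ENNReal.ofReal ((m : ℝ) * variance (g k) P / M ^ 2) := by
      intro k
      have hXL2 : MemLp (∑ i ∈ Finset.range n, Y k i) 2 μ :=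
        memLp_finset_sum' _ fun i _ => hYL2 k i
      have hYindep : iIndepFun (Y k) μ :=
        hindep.comp (fun _ => g k) fun _ => hgmeas k
      have hXmean : μ[∑ i ∈ Finset.range n, Y k i] = 0 := by
        simp only [Finset.sum_apply]
        rw [integral_finset_sum _ fun i _ => (hYL2 k i).integrable one_le_two]
        simp [hYmean]
      have hXvar : variance (∑ i ∈ Finset.range n, Y k i) μ
          = (n : ℝ) * variance (g k) P := by
        rw [IndepFun.variance_sum (fun i _ => hYL2 k i)
          (fun i _ j _ hij => hYindep.indepFun hij)]
        simp [hYvar, Finset.sum_const, nsmul_eq_mul]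
      have hcheb := meas_ge_le_variance_div_sq hXL2 hc0
      rw [hXmean, hXvar] at hcheb
      have hset : {ω | c ≤ |(∑ i ∈ Finset.range n, Y k i) ω - 0|}
          = {ω | c ≤ |∑ i ∈ Finset.range n, Y k i ω|} := by
        ext ω; simp [Finset.sum_apply]
      rw [hset] at hcheb
      refine hcheb.trans (ENNReal.ofReal_le_ofReal (le_of_eq ?_))
      rw [hc]
      rw [div_pow, mul_pow, Real.sq_sqrt (Nat.cast_nonneg n),
        Real.sq_sqrt (Nat.cast_nonneg m)]
      have hn0 : (n:ℝ) ≠ 0 := by exact_mod_cast Nat.one_le_iff_ne_zero.1 hn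
      have hM0 : M ≠ 0 := ne_of_gt hM
      have hm0 : (m:ℝ) ≠ 0 := by exact_mod_cast Nat.pos_iff_ne_zero.1 hm
      field_simp
    refine (Finset.sum_le_sum fun k _ => hper k).trans ?_
    rw [← ENNReal.ofReal_sum_of_nonneg fun k _ => div_nonneg (mul_nonneg (Nat.cast_nonneg m) (variance_nonneg _ _)) (sq_nonneg M)]
    apply ENNReal.ofReal_le_ofReal
    rw [← Finset.sum_div, ← Finset.mul_sum]

private lemma deriv_aux {d m : ℕ}
    (ψ : EuclideanSpace ℝ (Fin d) → EuclideanSpace ℝ (Fin m) → ℝ)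
    (R : EuclideanSpace ℝ (Fin d) → ℝ)
    (xs : EuclideanSpace ℝ (Fin d)) (θs : EuclideanSpace ℝ (Fin m))
    (DG : EuclideanSpace ℝ (Fin d) × EuclideanSpace ℝ (Fin m) →L[ℝ] EuclideanSpace ℝ (Fin d))
    (hDG : HasFDerivAt
      (fun p : EuclideanSpace ℝ (Fin d) × EuclideanSpace ℝ (Fin m) =>
        gradient (fun y => ψ y p.2) p.1) DG (xs, θs))
    (Hxx : EuclideanSpace ℝ (Fin d) ≃L[ℝ] EuclideanSpace ℝ (Fin d))
    (hHxx : ∀ v, Hxx v = DG (v, 0))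
    (hR : ContDiff ℝ 2 R)
    (x : EuclideanSpace ℝ (Fin m) × ℝ → EuclideanSpace ℝ (Fin d))
    (hx0 : x (θs, 0) = xs)
    (hxC1 : ContDiffAt ℝ 1 x (θs, (0 : ℝ)))
    (hxeq : ∀ᶠ p : EuclideanSpace ℝ (Fin m) × ℝ in 𝓝 (θs, (0 : ℝ)),
      gradient (fun y => ψ y p.1) (x p) + p.2 • gradient R (x p) = 0) :
    ∀ w t, (fderiv ℝ x (θs, (0:ℝ))) (w, t)
      = -Hxx.symm (DG (0, w)) - t • Hxx.symm (gradient R xs) := by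
  classical
  set p0 : EuclideanSpace ℝ (Fin m) × ℝ := (θs, 0) with hp0
  set Dx := fderiv ℝ x p0 with hDxdef
  have hxd : HasFDerivAt x Dx p0 := (hxC1.differentiableAt one_ne_zero).hasFDerivAt
  -- differentiability of gradient R
  have hgradR : DifferentiableAt ℝ (fun y => gradient R y) (x p0) := by
    have h1 : ContDiff ℝ 1 (fderiv ℝ R) := hR.fderiv_right (by norm_num)
    have h2 : (fun y => gradient R y)
        = fun y => (InnerProductSpace.toDual ℝ _).symm (fderiv ℝ R y) := rfl
    rw [h2]
    exact (((InnerProductSpace.toDual ℝ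
      (EuclideanSpace ℝ (Fin d))).symm.toContinuousLinearEquiv.differentiable).comp
      (h1.differentiable one_ne_zero)) (x p0)
  -- derivative of F := p ↦ G (x p, p.1) + p.2 • ∇R (x p) is zero
  set G : EuclideanSpace ℝ (Fin d) × EuclideanSpace ℝ (Fin m) → EuclideanSpace ℝ (Fin d) :=
    fun q => gradient (fun y => ψ y q.2) q.1 with hG
  have h1 : HasFDerivAt (fun p : EuclideanSpace ℝ (Fin m) × ℝ => (x p, p.1))
      (Dx.prod (ContinuousLinearMap.fst ℝ _ _)) p0 := hxd.prodMk hasFDerivAt_fst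
  have hDG' : HasFDerivAt G DG (x p0, p0.1) := by
    rw [show x p0 = xs from hx0]; exact hDG
  have h2 : HasFDerivAt (fun p : EuclideanSpace ℝ (Fin m) × ℝ => G (x p, p.1))
      (DG.comp (Dx.prod (ContinuousLinearMap.fst ℝ _ _))) p0 := by have := hDG'.comp p0 h1; exact this
  have h3 : HasFDerivAt (fun p : EuclideanSpace ℝ (Fin m) × ℝ => gradient R (x p))
      ((fderiv ℝ (fun y => gradient R y) (x p0)).comp Dx) p0 :=
    (hgradR.hasFDerivAt).comp p0 hxd
  have h4 : HasFDerivAt (fun p : EuclideanSpace ℝ (Fin m) × ℝ => p.2 • gradient R (x p))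
      ((0:ℝ) • ((fderiv ℝ (fun y => gradient R y) (x p0)).comp Dx)
        + (ContinuousLinearMap.snd ℝ _ _).smulRight (gradient R (x p0))) p0 :=
    (hasFDerivAt_snd (𝕜 := ℝ)).smul h3
  have h5 : HasFDerivAt (fun p : EuclideanSpace ℝ (Fin m) × ℝ =>
      G (x p, p.1) + p.2 • gradient R (x p))
      (DG.comp (Dx.prod (ContinuousLinearMap.fst ℝ _ _))
        + ((0:ℝ) • ((fderiv ℝ (fun y => gradient R y) (x p0)).comp Dx)
          + (ContinuousLinearMap.snd ℝ _ _).smulRight (gradient R (x p0)))) p0 :=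
    h2.add h4
  have h0 : HasFDerivAt (fun p : EuclideanSpace ℝ (Fin m) × ℝ =>
      G (x p, p.1) + p.2 • gradient R (x p)) (0 : _ →L[ℝ] _) p0 := by
    refine (hasFDerivAt_const (0 : EuclideanSpace ℝ (Fin d)) p0).congr_of_eventuallyEq ?_
    filter_upwards [hxeq] with p hp
    exact hp
  have huniq := h5.unique h0
  have key : ∀ w t, DG (Dx (w, t), w) + t • gradient R (x p0) = 0 := by
    intro w t
    have happ := congrArg (fun L : (EuclideanSpace ℝ (Fin m) × ℝ) →L[ℝ]
      EuclideanSpace ℝ (Fin d) => L (w, t)) huniq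
    simpa [ContinuousLinearMap.add_apply, ContinuousLinearMap.comp_apply,
      ContinuousLinearMap.prod_apply, ContinuousLinearMap.smulRight_apply,
      ContinuousLinearMap.coe_fst', ContinuousLinearMap.coe_snd'] using happ
  intro w t
  have hsplit : DG (Dx (w, t), w) = Hxx (Dx (w, t)) + DG (0, w) := by
    rw [hHxx, ← map_add]
    congr 1
    simp [Prod.ext_iff]
  have hk := key w t
  rw [hsplit, hx0] at hk
  have : Hxx (Dx (w, t)) = -DG (0, w) - t • gradient R xs := by
    have := hk
    abel_nf at this ⊢
    linear_combination (norm := abel) this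
  calc Dx (w, t) = Hxx.symm (Hxx (Dx (w, t))) := (Hxx.symm_apply_apply _).symm
  _ = Hxx.symm (-DG (0, w) - t • gradient R xs) := by rw [this]
  _ = -Hxx.symm (DG (0, w)) - t • Hxx.symm (gradient R xs) := by
      rw [map_sub, map_neg, ContinuousLinearEquiv.map_smul]

set_option maxHeartbeats 2000000 in
/-- Theorem 5 of the paper: linearization of the regularized parametric-optimization
solution. If `x(θ, λ)` is the locally unique `C¹` solution of
`∇_x ψ(x, θ) + λ·∇R(x) = 0` through `(x*, θ*, 0)`, the estimators `θ̂_n` are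
asymptotically linear with influence function `IF_θ`, and `λ_n → 0`, then
`x̂_n = x(θ̂_n, λ_n)` satisfies
`x̂_n − x* = −(∇²_xψ)⁻¹ ∇_{xθ}ψ·(1/n)Σ IF_θ(ξ_i) − λ_n·(∇²_xψ)⁻¹ ∇R(x*) + s_n`
with `s_n/(n^{−1/2} + |λ_n|) → 0` in probability. Here `DG` is the derivative of
`(x, θ) ↦ ∇_x ψ(x, θ)` at `(x*, θ*)`, `Hxx v = DG (v, 0)` is the (invertible)
Hessian and `∇_{xθ}ψ w = DG (0, w)`. -/
theorem regularized_parametric_linearization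
    {d m : ℕ}
    (ψ : EuclideanSpace ℝ (Fin d) → EuclideanSpace ℝ (Fin m) → ℝ)
    (R : EuclideanSpace ℝ (Fin d) → ℝ)
    (xs : EuclideanSpace ℝ (Fin d)) (θs : EuclideanSpace ℝ (Fin m))
    (hdiff : ∀ᶠ p : EuclideanSpace ℝ (Fin d) × EuclideanSpace ℝ (Fin m) in 𝓝 (xs, θs),
      DifferentiableAt ℝ (fun y => ψ y p.2) p.1)
    (hC1 : ContDiffAt ℝ 1
      (fun p : EuclideanSpace ℝ (Fin d) × EuclideanSpace ℝ (Fin m) =>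
        gradient (fun y => ψ y p.2) p.1) (xs, θs))
    (hstat : gradient (fun y => ψ y θs) xs = 0)
    (DG : EuclideanSpace ℝ (Fin d) × EuclideanSpace ℝ (Fin m) →L[ℝ] EuclideanSpace ℝ (Fin d))
    (hDG : HasFDerivAt
      (fun p : EuclideanSpace ℝ (Fin d) × EuclideanSpace ℝ (Fin m) =>
        gradient (fun y => ψ y p.2) p.1) DG (xs, θs))
    (Hxx : EuclideanSpace ℝ (Fin d) ≃L[ℝ] EuclideanSpace ℝ (Fin d))
    (hHxx : ∀ v, Hxx v = DG (v, 0))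
    (hR : ContDiff ℝ 2 R)
    -- the locally unique C¹ solution x(θ, λ) of the regularized stationarity system
    (x : EuclideanSpace ℝ (Fin m) × ℝ → EuclideanSpace ℝ (Fin d))
    (hx0 : x (θs, 0) = xs)
    (hxC1 : ContDiffAt ℝ 1 x (θs, (0 : ℝ)))
    (hxeq : ∀ᶠ p : EuclideanSpace ℝ (Fin m) × ℝ in 𝓝 (θs, (0 : ℝ)),
      gradient (fun y => ψ y p.1) (x p) + p.2 • gradient R (x p) = 0)
    -- i.i.d. data with law P
    {Ω : Type*} [MeasurableSpace Ω] {μ : Measure Ω} [IsProbabilityMeasure μ]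
    {Ξ : Type*} [MeasurableSpace Ξ] {P : Measure Ξ} [IsProbabilityMeasure P]
    (ξ : ℕ → Ω → Ξ) (hξmeas : ∀ i, Measurable (ξ i))
    (hindep : iIndepFun ξ μ)
    (hlaw : ∀ i, Measure.map (ξ i) μ = P)
    -- the influence function of the estimator: centered with finite covariance
    (IFθ : Ξ → EuclideanSpace ℝ (Fin m)) (hIFmeas : Measurable IFθ)
    (hIFmean : ∫ y, IFθ y ∂P = 0) (hIFL2 : MemLp IFθ 2 P)
    -- asymptotically linear estimators θ̂_n
    (θhat r : ℕ → Ω → EuclideanSpace ℝ (Fin m))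
    (hθ : ∀ n ω, θhat n ω
      = θs + (n : ℝ)⁻¹ • (∑ i ∈ Finset.range n, IFθ (ξ i ω)) + r n ω)
    (hr : TendstoInMeasure μ (fun (n : ℕ) ω => Real.sqrt n * ‖r n ω‖)
      atTop (fun _ => (0 : ℝ)))
    (lam : ℕ → ℝ) (hlam : Tendsto lam atTop (𝓝 (0 : ℝ))) :
    TendstoInMeasure μ
      (fun (n : ℕ) ω =>
        ‖x (θhat n ω, lam n) - xs
          + Hxx.symm (DG (0, (n : ℝ)⁻¹ • ∑ i ∈ Finset.range n, IFθ (ξ i ω)))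
          + lam n • Hxx.symm (gradient R xs)‖
        / (1 / Real.sqrt n + |lam n|))
      atTop (fun _ => (0 : ℝ)) := by
  classical
  set p0 : EuclideanSpace ℝ (Fin m) × ℝ := (θs, 0) with hp0
  set Dx := fderiv ℝ x p0 with hDxdef
  have hxd : HasFDerivAt x Dx p0 := (hxC1.differentiableAt one_ne_zero).hasFDerivAt
  have hDxf : ∀ w t, Dx (w, t) = -Hxx.symm (DG (0, w)) - t • Hxx.symm (gradient R xs) :=
    deriv_aux ψ R xs θs DG hDG Hxx hHxx hR x hx0 hxC1 hxeq
  set A := ‖Dx‖ with hA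
  have hA0 : (0:ℝ) ≤ A := norm_nonneg _
  -- little-o property of the derivative
  have hlo : ∀ ε : ℝ, 0 < ε → ∃ δ : ℝ, 0 < δ ∧ ∀ q : EuclideanSpace ℝ (Fin m) × ℝ,
      dist q p0 < δ → ‖x q - xs - Dx (q - p0)‖ ≤ ε * ‖q - p0‖ := by
    intro ε hε
    have h := Asymptotics.isLittleO_iff.mp hxd.isLittleO
    have h2 := h hε
    rw [Metric.eventually_nhds_iff] at h2
    obtain ⟨δ, hδ, h3⟩ := h2
    refine ⟨δ, hδ, fun q hq => ?_⟩
    have := h3 hq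
    rw [hx0] at this
    simpa using this
  obtain ⟨C, hC0, hCheb⟩ := cheb_aux ξ hξmeas hindep hlaw IFθ hIFmeas hIFmean hIFL2
  -- algebraic decomposition of the error term
  have hdecomp : ∀ n (ω : Ω),
      x (θhat n ω, lam n) - xs
        + Hxx.symm (DG (0, (n : ℝ)⁻¹ • ∑ i ∈ Finset.range n, IFθ (ξ i ω)))
        + lam n • Hxx.symm (gradient R xs)
      = (x (θhat n ω, lam n) - xs - Dx ((θhat n ω, lam n) - p0)) + Dx (r n ω, 0) := by
    intro n ω
    have hqsub : (θhat n ω, lam n) - p0 = (θhat n ω - θs, lam n) := by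
      rw [hp0, Prod.mk_sub_mk, sub_zero]
    have hθ' : θhat n ω - θs
        = (n:ℝ)⁻¹ • (∑ i ∈ Finset.range n, IFθ (ξ i ω)) + r n ω := by
      rw [hθ n ω]; abel
    have hDGadd : DG (0, (n:ℝ)⁻¹ • (∑ i ∈ Finset.range n, IFθ (ξ i ω)) + r n ω)
        = DG (0, (n:ℝ)⁻¹ • ∑ i ∈ Finset.range n, IFθ (ξ i ω)) + DG (0, r n ω) := by
      rw [← map_add]; congr 1; simp
    rw [hqsub, hθ', hDxf, hDxf, hDGadd, map_add]
    simp only [zero_smul, sub_zero]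
    abel
  -- the main convergence-in-measure argument
  rw [tendstoInMeasure_iff_dist]
  intro ε hε
  rw [ENNReal.tendsto_atTop_zero]
  intro ε' hε'
  rw [← Filter.eventually_atTop]
  have hemin : (0:ℝ≥0∞) < min 1 ε' := lt_min zero_lt_one hε'
  have hetop : min 1 ε' ≠ ⊤ := ((min_le_left _ _).trans_lt ENNReal.one_lt_top).ne
  set e := (min 1 ε').toReal with he
  have he0 : 0 < e := ENNReal.toReal_pos hemin.ne' hetop
  have heE : ENNReal.ofReal e ≤ ε' := by
    rw [he, ENNReal.ofReal_toReal hetop]; exact min_le_right _ _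
  -- choose the Chebyshev level M
  set M := Real.sqrt ((C + 1) * 3 / e) with hMdef
  have hM0 : 0 < M := Real.sqrt_pos.2 (by positivity)
  have hCM : C / M ^ 2 ≤ e / 3 := by
    have hM2 : M ^ 2 = (C + 1) * 3 / e := Real.sq_sqrt (by positivity)
    rw [hM2, div_div_eq_mul_div, div_le_div_iff₀ (by positivity) (by positivity)]
    nlinarith
  -- choose the remainder level η and the little-o level ε''
  set η := min 1 (ε / (2 * (A + 1))) with hηdef
  have hη0 : 0 < η := lt_min zero_lt_one (by positivity)
  have hη1 : η ≤ 1 := min_le_left _ _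
  have hηA : A * η < ε / 2 := by
    have h1 : η ≤ ε / (2 * (A + 1)) := min_le_right _ _
    have h2 : A * η ≤ A * (ε / (2 * (A + 1))) := mul_le_mul_of_nonneg_left h1 hA0
    have h3 : A * (ε / (2 * (A + 1))) < ε / 2 := by
      rw [show A * (ε / (2 * (A + 1))) = A * ε / (2 * (A + 1)) from (mul_div_assoc _ _ _).symm,
        div_lt_div_iff₀ (by positivity) (by positivity)]
      nlinarith
    linarith
  set ε'' := ε / (2 * (M + 2)) with hε''def
  have hε''0 : 0 < ε'' := by positivity
  obtain ⟨δ, hδ0, hδprop⟩ := hlo ε'' hε''0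
  -- eventual conditions on n
  have h1evt : ∀ᶠ n : ℕ in atTop, 1 ≤ n := eventually_ge_atTop 1
  have h2evt : ∀ᶠ n : ℕ in atTop, |lam n| < δ := by
    have := Metric.tendsto_nhds.mp hlam δ hδ0
    filter_upwards [this] with n hn
    rwa [Real.dist_0_eq_abs] at hn
  have h3evt : ∀ᶠ n : ℕ in atTop, (M + 1) / Real.sqrt n < δ := by
    filter_upwards [eventually_ge_atTop (⌈((M + 1) / δ) ^ 2⌉₊ + 1)] with n hn
    have hsq : ((M + 1) / δ) ^ 2 < (n : ℝ) := by
      calc ((M + 1) / δ) ^ 2 ≤ (⌈((M + 1) / δ) ^ 2⌉₊ : ℝ) := Nat.le_ceil _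
      _ < (n : ℝ) := by exact_mod_cast Nat.lt_of_succ_le hn
    have hsn : (M + 1) / δ < Real.sqrt n :=
      (Real.lt_sqrt (by positivity)).2 hsq
    have hsnpos : (0:ℝ) < Real.sqrt n := lt_of_le_of_lt (by positivity) hsn
    rw [div_lt_iff₀ hsnpos]
    rw [div_lt_iff₀ hδ0] at hsn
    linarith [hsn]
  have h4evt : ∀ᶠ n : ℕ in atTop,
      μ {ω | η ≤ Real.sqrt n * ‖r n ω‖} < ENNReal.ofReal (e / 3) := by
    have hr' := tendstoInMeasure_iff_dist.mp hr η hη0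
    have hofpos : (0:ℝ≥0∞) < ENNReal.ofReal (e / 3) := ENNReal.ofReal_pos.2 (by positivity)
    have hev := hr'.eventually_lt_const hofpos
    filter_upwards [hev] with n hn
    have hseteq : {ω | η ≤ dist (Real.sqrt n * ‖r n ω‖) ((fun _ => (0:ℝ)) ω)}
        = {ω | η ≤ Real.sqrt n * ‖r n ω‖} := by
      ext ω
      simp only [Set.mem_setOf_eq, Real.dist_0_eq_abs]
      rw [abs_of_nonneg (mul_nonneg (Real.sqrt_nonneg _) (norm_nonneg _))]
    rwa [hseteq] at hn
  filter_upwards [h1evt, h2evt, h3evt, h4evt] with n hn1 hn2 hn3 hn4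
  have hsqn : (0:ℝ) < Real.sqrt n := Real.sqrt_pos.2 (by exact_mod_cast hn1)
  have hnpos : (0:ℝ) < (n:ℝ) := by exact_mod_cast hn1
  have hnn : Real.sqrt n * Real.sqrt n = (n:ℝ) := Real.mul_self_sqrt (Nat.cast_nonneg n)
  set Dn := 1 / Real.sqrt n + |lam n| with hDn
  have hDn0 : 0 < Dn := by positivity
  have hinvDn : 1 / Real.sqrt n ≤ Dn := le_add_of_nonneg_right (abs_nonneg _)
  have hlamDn : |lam n| ≤ Dn := le_add_of_nonneg_left (by positivity)
  -- inclusion of the bad event into two controllable events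
  have hsub : {ω | ε ≤ dist
        (‖x (θhat n ω, lam n) - xs
          + Hxx.symm (DG (0, (n : ℝ)⁻¹ • ∑ i ∈ Finset.range n, IFθ (ξ i ω)))
          + lam n • Hxx.symm (gradient R xs)‖
          / (1 / Real.sqrt n + |lam n|)) ((fun _ => (0:ℝ)) ω)}
      ⊆ {ω | M ≤ ‖∑ i ∈ Finset.range n, IFθ (ξ i ω)‖ / Real.sqrt n}
        ∪ {ω | η ≤ Real.sqrt n * ‖r n ω‖} := by
    intro ω hω
    simp only [Set.mem_setOf_eq] at hω
    by_contra hnot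
    simp only [Set.mem_union, Set.mem_setOf_eq, not_or, not_le] at hnot
    obtain ⟨hSb, hrb⟩ := hnot
    have hZnorm : ‖(n : ℝ)⁻¹ • ∑ i ∈ Finset.range n, IFθ (ξ i ω)‖ < M / Real.sqrt n := by
      rw [norm_smul, Real.norm_eq_abs, abs_of_nonneg (by positivity : (0:ℝ) ≤ (n:ℝ)⁻¹)]
      have hS1 : ‖∑ i ∈ Finset.range n, IFθ (ξ i ω)‖ < M * Real.sqrt n :=
        (div_lt_iff₀ hsqn).1 hSb
      rw [inv_mul_eq_div, div_lt_div_iff₀ hnpos hsqn]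
      nlinarith [mul_lt_mul_of_pos_right hS1 hsqn]
    have hrnorm : ‖r n ω‖ < η / Real.sqrt n := by
      rw [lt_div_iff₀ hsqn, mul_comm]
      exact hrb
    have hθnorm : ‖θhat n ω - θs‖ < (M + η) / Real.sqrt n := by
      have hθ' : θhat n ω - θs
          = (n:ℝ)⁻¹ • (∑ i ∈ Finset.range n, IFθ (ξ i ω)) + r n ω := by
        rw [hθ n ω]; abel
      rw [hθ']
      calc ‖(n:ℝ)⁻¹ • (∑ i ∈ Finset.range n, IFθ (ξ i ω)) + r n ω‖
          ≤ ‖(n:ℝ)⁻¹ • ∑ i ∈ Finset.range n, IFθ (ξ i ω)‖ + ‖r n ω‖ := norm_add_le _ _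
      _ < M / Real.sqrt n + η / Real.sqrt n := add_lt_add hZnorm hrnorm
      _ = (M + η) / Real.sqrt n := by ring
    have hMη : (M + η) / Real.sqrt n ≤ (M + 1) / Real.sqrt n := by gcongr
    have hqsub : (θhat n ω, lam n) - p0 = (θhat n ω - θs, lam n) := by
      rw [hp0, Prod.mk_sub_mk, sub_zero]
    have hqnorm : ‖((θhat n ω - θs, lam n) : EuclideanSpace ℝ (Fin m) × ℝ)‖
        = max ‖θhat n ω - θs‖ |lam n| := by
      rw [Prod.norm_def, Real.norm_eq_abs]
    have hθδ : ‖θhat n ω - θs‖ < δ := lt_of_lt_of_le hθnorm (hMη.trans hn3.le)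
    have hdistq : dist ((θhat n ω, lam n) : EuclideanSpace ℝ (Fin m) × ℝ) p0 < δ := by
      rw [dist_eq_norm, hqsub, hqnorm]
      exact max_lt hθδ hn2
    have hlit := hδprop _ hdistq
    have hqle : ‖((θhat n ω - θs, lam n) : EuclideanSpace ℝ (Fin m) × ℝ)‖ ≤ (M + 2) * Dn := by
      rw [hqnorm]
      apply max_le
      · calc ‖θhat n ω - θs‖ ≤ (M + η) / Real.sqrt n := hθnorm.le
        _ ≤ (M + 1) / Real.sqrt n := hMη
        _ = (M + 1) * (1 / Real.sqrt n) := by ring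
        _ ≤ (M + 1) * Dn := mul_le_mul_of_nonneg_left hinvDn (by linarith)
        _ ≤ (M + 2) * Dn := mul_le_mul_of_nonneg_right (by linarith) hDn0.le
      · calc |lam n| ≤ Dn := hlamDn
        _ = 1 * Dn := (one_mul _).symm
        _ ≤ (M + 2) * Dn := mul_le_mul_of_nonneg_right (by linarith) hDn0.le
    have hDxr : ‖Dx (r n ω, 0)‖ ≤ A * (η / Real.sqrt n) := by
      calc ‖Dx ((r n ω, 0) : EuclideanSpace ℝ (Fin m) × ℝ)‖
          ≤ A * ‖((r n ω, 0) : EuclideanSpace ℝ (Fin m) × ℝ)‖ := Dx.le_opNorm _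
      _ ≤ A * (η / Real.sqrt n) := by
          apply mul_le_mul_of_nonneg_left ?_ hA0
          have hr0 : ‖((r n ω, 0) : EuclideanSpace ℝ (Fin m) × ℝ)‖ = ‖r n ω‖ := by
            rw [Prod.norm_def]
            simp
          rw [hr0]
          exact hrnorm.le
    have hT : ‖x (θhat n ω, lam n) - xs
        + Hxx.symm (DG (0, (n : ℝ)⁻¹ • ∑ i ∈ Finset.range n, IFθ (ξ i ω)))
        + lam n • Hxx.symm (gradient R xs)‖ < ε * Dn := by
      rw [hdecomp n ω]
      have step1 : ‖(x (θhat n ω, lam n) - xs - Dx ((θhat n ω, lam n) - p0)) + Dx (r n ω, 0)‖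
          ≤ ε'' * ((M + 2) * Dn) + A * (η / Real.sqrt n) := by
        calc ‖(x (θhat n ω, lam n) - xs - Dx ((θhat n ω, lam n) - p0)) + Dx (r n ω, 0)‖
            ≤ ‖x (θhat n ω, lam n) - xs - Dx ((θhat n ω, lam n) - p0)‖ + ‖Dx (r n ω, 0)‖ :=
              norm_add_le _ _
        _ ≤ ε'' * ((M + 2) * Dn) + A * (η / Real.sqrt n) := by
            refine add_le_add (hlit.trans ?_) hDxr
            have hqle' : ‖(θhat n ω, lam n) - p0‖ ≤ (M + 2) * Dn := by
              rw [hqsub]; exact hqle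
            exact mul_le_mul_of_nonneg_left hqle' hε''0.le
      have e1 : ε'' * (M + 2) = ε / 2 := by
        rw [hε''def]
        field_simp
      have e2 : A * (η / Real.sqrt n) ≤ (A * η) * Dn := by
        calc A * (η / Real.sqrt n) = (A * η) * (1 / Real.sqrt n) := by ring
        _ ≤ (A * η) * Dn := mul_le_mul_of_nonneg_left hinvDn (mul_nonneg hA0 hη0.le)
      have e3 : (A * η) * Dn < (ε / 2) * Dn := mul_lt_mul_of_pos_right hηA hDn0
      have e4 : ε'' * ((M + 2) * Dn) = (ε / 2) * Dn := by
        rw [← mul_assoc, e1]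
      calc ‖(x (θhat n ω, lam n) - xs - Dx ((θhat n ω, lam n) - p0)) + Dx (r n ω, 0)‖
          ≤ ε'' * ((M + 2) * Dn) + A * (η / Real.sqrt n) := step1
      _ < (ε / 2) * Dn + (ε / 2) * Dn := by rw [e4]; linarith
      _ = ε * Dn := by ring
    have hfeq : dist
        (‖x (θhat n ω, lam n) - xs
          + Hxx.symm (DG (0, (n : ℝ)⁻¹ • ∑ i ∈ Finset.range n, IFθ (ξ i ω)))
          + lam n • Hxx.symm (gradient R xs)‖
          / (1 / Real.sqrt n + |lam n|)) ((fun _ => (0:ℝ)) ω)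
        = ‖x (θhat n ω, lam n) - xs
          + Hxx.symm (DG (0, (n : ℝ)⁻¹ • ∑ i ∈ Finset.range n, IFθ (ξ i ω)))
          + lam n • Hxx.symm (gradient R xs)‖ / Dn := by
      rw [hDn]
      simp only [Real.dist_0_eq_abs]
      exact abs_of_nonneg (div_nonneg (norm_nonneg _) (by positivity))
    rw [hfeq] at hω
    have hlt : ‖x (θhat n ω, lam n) - xs
        + Hxx.symm (DG (0, (n : ℝ)⁻¹ • ∑ i ∈ Finset.range n, IFθ (ξ i ω)))
        + lam n • Hxx.symm (gradient R xs)‖ / Dn < ε := (div_lt_iff₀ hDn0).2 hT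
    linarith
  calc μ {ω | ε ≤ dist
        (‖x (θhat n ω, lam n) - xs
          + Hxx.symm (DG (0, (n : ℝ)⁻¹ • ∑ i ∈ Finset.range n, IFθ (ξ i ω)))
          + lam n • Hxx.symm (gradient R xs)‖
          / (1 / Real.sqrt n + |lam n|)) ((fun _ => (0:ℝ)) ω)}
      ≤ μ ({ω | M ≤ ‖∑ i ∈ Finset.range n, IFθ (ξ i ω)‖ / Real.sqrt n}
        ∪ {ω | η ≤ Real.sqrt n * ‖r n ω‖}) := measure_mono hsub
  _ ≤ μ {ω | M ≤ ‖∑ i ∈ Finset.range n, IFθ (ξ i ω)‖ / Real.sqrt n}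
      + μ {ω | η ≤ Real.sqrt n * ‖r n ω‖} := measure_union_le _ _
  _ ≤ ENNReal.ofReal (C / M ^ 2) + ENNReal.ofReal (e / 3) :=
      add_le_add (hCheb n hn1 M hM0) hn4.le
  _ ≤ ENNReal.ofReal (e / 3) + ENNReal.ofReal (e / 3) :=
      add_le_add_left (ENNReal.ofReal_le_ofReal hCM) _
  _ = ENNReal.ofReal (e / 3 + e / 3) := (ENNReal.ofReal_add (by positivity) (by positivity)).symm
  _ ≤ ENNReal.ofReal e := ENNReal.ofReal_le_ofReal (by linarith)
  _ ≤ ε' := heE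
end

section
/- Let m ≥ 1, let p_1, …, p_m > 0 with Σ_i p_i = 1, and let h_1, …, h_m ∈ ℝ be not all equal, with mean μ = Σ_i p_i·h_i and variance σ² = Σ_i p_i·(h_i − μ)² > 0. Let φ : [0, ∞) → [0, ∞) be convex with φ(1) = 0, twice continuously differentiable in a neighborhood of 1 with φ''(1) > 0. Define v(λ) = sup { Σ_i p_i·h_i·L_i : L_i ≥ 0, Σ_i p_i·L_i = 1, Σ_i p_i·φ(L_i) ≤ λ } for λ > 0. Then v(λ) = μ + √(2·λ·σ²/φ''(1)) + o(√λ) as λ → 0⁺. -/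
open Filter Asymptotics
open scoped Topology BigOperators
open Set

lemma taylor_sandwich (φ : ℝ → ℝ)
    (hnonneg : ∀ t, 0 ≤ t → 0 ≤ φ t) (hone : φ 1 = 0)
    (hsmooth : ∃ s ∈ 𝓝 (1 : ℝ), ContDiffOn ℝ 2 φ s) :
    ∀ ε > 0, ∃ δ > 0, ∀ x : ℝ, |x| ≤ δ →
      |φ (1 + x) - deriv (deriv φ) 1 * x ^ 2 / 2| ≤ ε * x ^ 2 := by
  obtain ⟨s, hs, hφs⟩ := hsmooth
  obtain ⟨r, hr, hball⟩ := Metric.mem_nhds_iff.1 hs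
  set I := Set.Ioo (1 - r) (1 + r) with hI
  have hIs : I ⊆ s := by rw [hI, ← Real.ball_eq_Ioo]; exact hball
  have hIopen : IsOpen I := isOpen_Ioo
  have h1I : (1 : ℝ) ∈ I := by rw [hI, Set.mem_Ioo]; constructor <;> linarith
  have hC : ContDiffOn ℝ 2 φ I := hφs.mono hIs
  have hd1 : DifferentiableOn ℝ φ I := hC.differentiableOn (by norm_num)
  have hC1 : ContDiffOn ℝ 1 (deriv φ) I := hC.deriv_of_isOpen hIopen (by norm_num)
  have hd2 : DifferentiableOn ℝ (deriv φ) I := hC1.differentiableOn (by norm_num)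
  have hcont2 : ContinuousOn (deriv (deriv φ)) I :=
    hC1.continuousOn_deriv_of_isOpen hIopen le_rfl
  set c := deriv (deriv φ) 1 with hc
  have hmin : IsLocalMin φ 1 := by
    filter_upwards [Ici_mem_nhds (zero_lt_one)] with y hy
    rw [hone]; exact hnonneg y hy
  have hd'1 : deriv φ 1 = 0 := hmin.deriv_eq_zero
  intro ε hε
  have hcat : ContinuousAt (deriv (deriv φ)) 1 := hcont2.continuousAt (hIopen.mem_nhds h1I)
  obtain ⟨δ₀, hδ₀, hδ₀'⟩ := Metric.continuousAt_iff.1 hcat ε hε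
  refine ⟨min (δ₀ / 2) (r / 2), by positivity, fun x hx => ?_⟩
  have hxδ₀ : |x| < δ₀ := lt_of_le_of_lt (hx.trans (min_le_left _ _)) (by linarith)
  have hxr : |x| < r := lt_of_le_of_lt (hx.trans (min_le_right _ _)) (by linarith)
  have hsubI : ∀ y : ℝ, |y - 1| ≤ |x| → y ∈ I := by
    intro y hy
    have h1 := abs_le.1 hy
    rw [hI, Set.mem_Ioo]
    constructor <;> linarith [h1.1, h1.2]
  have hc2 : ∀ ξ : ℝ, |ξ - 1| ≤ |x| → |deriv (deriv φ) ξ - c| ≤ ε := by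
    intro ξ hξ
    have hd : dist ξ 1 < δ₀ := by rw [Real.dist_eq]; exact hξ.trans_lt hxδ₀
    have h2 := hδ₀' hd
    rw [Real.dist_eq] at h2
    exact h2.le
  set ψ : ℝ → ℝ := fun y => φ y - c * (y - 1) ^ 2 / 2 with hψ
  have hψderiv : ∀ y ∈ I, HasDerivAt ψ (deriv φ y - c * (y - 1)) y := by
    intro y hy
    have h1 : HasDerivAt φ (deriv φ y) y :=
      (hd1.differentiableAt (hIopen.mem_nhds hy)).hasDerivAt
    have h2 : HasDerivAt (fun y : ℝ => (y - 1) ^ 2) (2 * (y - 1)) y := by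
      simpa [Pi.pow_def] using ((hasDerivAt_id y).sub_const 1).pow 2
    have h3 : HasDerivAt (fun y : ℝ => c * (y - 1) ^ 2 / 2) (c * (y - 1)) y := by
      have : HasDerivAt (fun y : ℝ => c * (y - 1) ^ 2 / 2) (c * (2 * (y - 1)) / 2) y :=
        (h2.const_mul c).div_const 2
      convert this using 1; ring
    exact h1.sub h3
  have hψcont : ContinuousOn ψ I :=
    (hd1.continuousOn).sub
      (((continuous_const.mul ((continuous_id.sub continuous_const).pow 2)).div_const
        2).continuousOn)
  have hφ'deriv : ∀ y ∈ I, HasDerivAt (deriv φ) (deriv (deriv φ) y) y := fun y hy =>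
    (hd2.differentiableAt (hIopen.mem_nhds hy)).hasDerivAt
  have hφ'cont : ContinuousOn (deriv φ) I := hd2.continuousOn
  have hψ1 : ψ 1 = 0 := by simp [hψ, hone]
  have key : ∀ x' : ℝ, |x'| ≤ |x| → x' ≠ 0 → |ψ (1 + x')| ≤ ε * x' ^ 2 := by
    intro y hy hy0
    have hsubI' : ∀ z : ℝ, |z - 1| ≤ |y| → z ∈ I := fun z hz => hsubI z (hz.trans hy)
    have main : ∃ η ξ : ℝ, |η - 1| ≤ |y| ∧ |ξ - 1| ≤ |y| ∧
        ψ (1 + y) = y * (deriv (deriv φ) ξ - c) * (η - 1) := by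
      rcases hy0.lt_or_gt with hneg | hpos
      · -- y < 0 : interval [1+y, 1]
        have hab : 1 + y < 1 := by linarith
        have hIcc : Set.Icc (1 + y) 1 ⊆ I := by
          intro z hz
          apply hsubI' z
          rw [abs_of_nonpos (by linarith [hz.2]), abs_of_neg hneg]
          linarith [hz.1]
        obtain ⟨η, hη, hη'⟩ := exists_hasDerivAt_eq_slope ψ
          (fun y => deriv φ y - c * (y - 1)) hab (hψcont.mono hIcc)
          (fun z hz => hψderiv z (hIcc (Set.mem_Icc_of_Ioo hz)))
        have hηI : Set.Icc η 1 ⊆ I := fun z hz => hIcc ⟨le_trans hη.1.le hz.1, hz.2⟩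
        obtain ⟨ξ, hξ, hξ'⟩ := exists_hasDerivAt_eq_slope (deriv φ)
          (deriv (deriv φ)) hη.2 (hφ'cont.mono hηI)
          (fun z hz => hφ'deriv z (hηI (Set.mem_Icc_of_Ioo hz)))
        have hne : (1 : ℝ) - η ≠ 0 := by have := hη.2; intro hcon; linarith
        rw [hd'1, eq_div_iff hne] at hξ'
        have hφ'η : deriv φ η = deriv (deriv φ) ξ * (η - 1) := by linear_combination hξ'
        have hne2 : (1 : ℝ) - (1 + y) ≠ 0 := by intro hcon; apply hy0; linarith
        rw [hψ1, hφ'η] at hη'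
        rw [eq_div_iff hne2] at hη'
        refine ⟨η, ξ, ?_, ?_, by linear_combination hη'⟩
        · rw [abs_of_neg hneg, abs_of_nonpos (by linarith [hη.2] : η - 1 ≤ 0)]
          linarith [hη.1]
        · rw [abs_of_neg hneg, abs_of_nonpos (by linarith [hξ.2] : ξ - 1 ≤ 0)]
          linarith [hξ.1, hη.1]
      · -- y > 0 : interval [1, 1+y]
        have hab : 1 < 1 + y := by linarith
        have hIcc : Set.Icc 1 (1 + y) ⊆ I := by
          intro z hz
          apply hsubI' z
          rw [abs_of_nonneg (by linarith [hz.1]), abs_of_pos hpos]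
          linarith [hz.2]
        obtain ⟨η, hη, hη'⟩ := exists_hasDerivAt_eq_slope ψ
          (fun y => deriv φ y - c * (y - 1)) hab (hψcont.mono hIcc)
          (fun z hz => hψderiv z (hIcc (Set.mem_Icc_of_Ioo hz)))
        have hηI : Set.Icc 1 η ⊆ I := fun z hz => hIcc ⟨hz.1, le_trans hz.2 hη.2.le⟩
        obtain ⟨ξ, hξ, hξ'⟩ := exists_hasDerivAt_eq_slope (deriv φ)
          (deriv (deriv φ)) hη.1 (hφ'cont.mono hηI)
          (fun z hz => hφ'deriv z (hηI (Set.mem_Icc_of_Ioo hz)))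
        have hne : η - 1 ≠ 0 := by have := hη.1; intro hcon; linarith
        rw [hd'1, eq_div_iff hne] at hξ'
        have hφ'η : deriv φ η = deriv (deriv φ) ξ * (η - 1) := by linear_combination -hξ'
        have hne2 : (1 : ℝ) + y - 1 ≠ 0 := by intro hcon; apply hy0; linarith
        rw [hψ1, hφ'η] at hη'
        rw [eq_div_iff hne2] at hη'
        refine ⟨η, ξ, ?_, ?_, by linear_combination -hη'⟩
        · rw [abs_of_pos hpos, abs_of_nonneg (by linarith [hη.1] : (0:ℝ) ≤ η - 1)]
          linarith [hη.2]
        · rw [abs_of_pos hpos, abs_of_nonneg (by linarith [hξ.1] : (0:ℝ) ≤ ξ - 1)]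
          linarith [hξ.2, hη.2]
    obtain ⟨η, ξ, hη1, hξ1, hval⟩ := main
    rw [hval]
    calc |y * (deriv (deriv φ) ξ - c) * (η - 1)|
        = |y| * |deriv (deriv φ) ξ - c| * |η - 1| := by rw [abs_mul, abs_mul]
      _ ≤ |y| * ε * |y| := by
          apply mul_le_mul _ hη1 (abs_nonneg _) (by positivity)
          exact mul_le_mul_of_nonneg_left (hc2 ξ (hξ1.trans hy)) (abs_nonneg _)
      _ = ε * y ^ 2 := by linear_combination ε * abs_mul_abs_self y
  rcases eq_or_ne x 0 with rfl | hx0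
  · simp [hone]
  · have h1 := key x le_rfl hx0
    have h2 : ψ (1 + x) = φ (1 + x) - c * x ^ 2 / 2 := by
      rw [hψ]; ring_nf
    rw [h2] at h1
    exact h1

lemma convex_linear_lower (φ : ℝ → ℝ) (hconv : ConvexOn ℝ (Set.Ici (0:ℝ)) φ)
    (hone : φ 1 = 0) (δ K : ℝ) (hδ : 0 < δ) (hδ1 : δ ≤ 1)
    (hK1 : K ≤ φ (1 + δ)) (hK2 : K ≤ φ (1 - δ)) :
    ∀ x : ℝ, -1 ≤ x → δ ≤ |x| → K / δ * |x| ≤ φ (1 + x) := by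
  intro x hx1 hδx
  rcases le_or_gt δ x with hxpos | hxneg
  · -- x ≥ δ > 0
    have hx0 : 0 < x := lt_of_lt_of_le hδ hxpos
    have hax : |x| = x := abs_of_pos hx0
    have hxne : x ≠ 0 := ne_of_gt hx0
    have hb : (0:ℝ) ≤ δ / x := by positivity
    have ha : (0:ℝ) ≤ 1 - δ / x := by
      have : δ / x ≤ 1 := (div_le_one hx0).2 hxpos
      linarith
    have hcomb := hconv.2 (Set.mem_Ici.2 (by norm_num : (0:ℝ) ≤ 1))
      (Set.mem_Ici.2 (by linarith : (0:ℝ) ≤ 1 + x)) ha hb (by ring)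
    have heq : (1 - δ / x) • (1:ℝ) + (δ / x) • (1 + x) = 1 + δ := by
      simp only [smul_eq_mul]
      field_simp
      ring
    rw [heq, hone, smul_eq_mul, smul_eq_mul, mul_zero, zero_add] at hcomb
    have h2 : K ≤ δ / x * φ (1 + x) := hK1.trans hcomb
    have h3 := mul_le_mul_of_nonneg_left h2 (le_of_lt (show 0 < x / δ by positivity))
    calc K / δ * |x| = x / δ * K := by rw [hax]; ring
      _ ≤ x / δ * (δ / x * φ (1 + x)) := h3
      _ = φ (1 + x) := by field_simp
  · -- x ≤ -δ < 0
    have hx0 : x < 0 := by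
      by_contra hcon
      push_neg at hcon
      rw [abs_of_nonneg hcon] at hδx
      linarith
    have hax : |x| = -x := abs_of_neg hx0
    have hxne : -x ≠ 0 := by intro hcon; apply ne_of_lt hx0; linarith
    have hxne' : x ≠ 0 := ne_of_lt hx0
    rw [hax] at hδx
    have hb : (0:ℝ) ≤ δ / (-x) := by
      apply div_nonneg hδ.le; linarith
    have ha : (0:ℝ) ≤ 1 - δ / (-x) := by
      have : δ / (-x) ≤ 1 := (div_le_one (by linarith)).2 hδx
      linarith
    have hcomb := hconv.2 (Set.mem_Ici.2 (by norm_num : (0:ℝ) ≤ 1))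
      (Set.mem_Ici.2 (by linarith : (0:ℝ) ≤ 1 + x)) ha hb (by ring)
    have heq : (1 - δ / (-x)) • (1:ℝ) + (δ / (-x)) • (1 + x) = 1 - δ := by
      simp only [smul_eq_mul]
      field_simp
      ring
    rw [heq, hone, smul_eq_mul, smul_eq_mul, mul_zero, zero_add] at hcomb
    have h2 : K ≤ δ / (-x) * φ (1 + x) := hK2.trans hcomb
    have h3 := mul_le_mul_of_nonneg_left h2
      (le_of_lt (div_pos (show (0:ℝ) < -x by linarith) hδ))
    calc K / δ * |x| = (-x) / δ * K := by rw [hax]; ring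
      _ ≤ (-x) / δ * (δ / (-x) * φ (1 + x)) := h3
      _ = φ (1 + x) := by field_simp

/-- The worst-case expectation `v(λ)` over a φ-divergence ball of radius `λ`
around a finitely supported baseline distribution `p`. -/
noncomputable def worstCaseExpectation {m : ℕ} (p h : Fin m → ℝ) (φ : ℝ → ℝ)
    (lam : ℝ) : ℝ :=
  sSup {r : ℝ | ∃ L : Fin m → ℝ, (∀ i, 0 ≤ L i) ∧ (∑ i, p i * L i = 1) ∧
    (∑ i, p i * φ (L i) ≤ lam) ∧ r = ∑ i, p i * h i * L i}

set_option maxHeartbeats 2000000 in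
/-- The first-order expansion of the worst-case expectation over a φ-divergence ball
(equation (18) of the paper) for a finitely supported baseline distribution:
`v(λ) = μ + √(2·λ·σ²/φ''(1)) + o(√λ)` as `λ → 0⁺`, where `μ` and `σ² > 0` are the
baseline mean and variance of `h`. -/
theorem worst_case_expectation_expansion
    {m : ℕ} (hm : 1 ≤ m)
    (p : Fin m → ℝ) (hp : ∀ i, 0 < p i) (hp1 : ∑ i, p i = 1)
    (h : Fin m → ℝ) (hne : ∃ i j, h i ≠ h j)
    (φ : ℝ → ℝ)
    (hconv : ConvexOn ℝ (Set.Ici (0 : ℝ)) φ)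
    (hnonneg : ∀ t, 0 ≤ t → 0 ≤ φ t)
    (hone : φ 1 = 0)
    (hsmooth : ∃ s ∈ 𝓝 (1 : ℝ), ContDiffOn ℝ 2 φ s)
    (hsecond : 0 < deriv (deriv φ) 1) :
    (fun lam => worstCaseExpectation p h φ lam - (∑ i, p i * h i)
        - Real.sqrt (2 * lam * (∑ i, p i * (h i - ∑ j, p j * h j) ^ 2)
            / deriv (deriv φ) 1))
      =o[𝓝[>] (0 : ℝ)] fun lam => Real.sqrt lam := by
  classical
  have hcpos : 0 < deriv (deriv φ) 1 := hsecond
  set c := deriv (deriv φ) 1 with hc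
  set μ := ∑ i, p i * h i with hμ
  set V := ∑ i, p i * (h i - μ) ^ 2 with hV
  set S : ℝ → Set ℝ := fun lam => {r : ℝ | ∃ L : Fin m → ℝ, (∀ i, 0 ≤ L i) ∧
    (∑ i, p i * L i = 1) ∧ (∑ i, p i * φ (L i) ≤ lam) ∧
    r = ∑ i, p i * h i * L i} with hSdef
  have hwce : ∀ lam, worstCaseExpectation p h φ lam = sSup (S lam) := fun _ => rfl
  have hSmem : ∀ (lam r : ℝ), r ∈ S lam ↔ ∃ L : Fin m → ℝ, (∀ i, 0 ≤ L i) ∧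
      (∑ i, p i * L i = 1) ∧ (∑ i, p i * φ (L i) ≤ lam) ∧
      r = ∑ i, p i * h i * L i := fun _ _ => Iff.rfl
  clear_value S
  clear_value c μ V
  -- basic identities
  have hμ0 : ∑ i, p i * (h i - μ) = 0 := by
    have e : ∑ i, p i * (h i - μ) = (∑ i, p i * h i) - (∑ i, p i) * μ := by
      rw [Finset.sum_mul, ← Finset.sum_sub_distrib]
      exact Finset.sum_congr rfl fun i _ => by ring
    rw [e, hp1, ← hμ]; ring
  have hVpos : 0 < V := by
    obtain ⟨i0, hi0⟩ : ∃ i, h i ≠ μ := by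
      by_contra hcon
      push_neg at hcon
      obtain ⟨i, j, hij⟩ := hne
      exact hij (by rw [hcon i, hcon j])
    have h1 : p i0 * (h i0 - μ) ^ 2 ≤ ∑ i, p i * (h i - μ) ^ 2 :=
      Finset.single_le_sum (f := fun j => p j * (h j - μ) ^ 2)
        (fun j _ => mul_nonneg (hp j).le (sq_nonneg _)) (Finset.mem_univ i0)
    have h2 : 0 < p i0 * (h i0 - μ) ^ 2 :=
      mul_pos (hp i0) (pow_two_pos_of_ne_zero (sub_ne_zero.2 hi0))
    rw [← hV] at h1
    linarith
  have hV0 : 0 ≤ V := hVpos.le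
  set M := ∑ i, |h i - μ| with hMdef
  clear_value M
  have hMi : ∀ i, |h i - μ| ≤ M := by
    intro i
    have := Finset.single_le_sum (f := fun j => |h j - μ|)
      (fun j _ => abs_nonneg _) (Finset.mem_univ i)
    rw [← hMdef] at this
    exact this
  have hM0 : 0 ≤ M := by
    rw [hMdef]; exact Finset.sum_nonneg fun i _ => abs_nonneg _
  -- feasible set: nonempty and bounded above
  have hmemμ : ∀ lam : ℝ, 0 ≤ lam → μ ∈ S lam := by
    intro lam hlam
    rw [hSmem]
    refine ⟨fun _ => 1, fun i => zero_le_one, by simpa using hp1, ?_, ?_⟩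
    · simp only [hone, mul_zero, Finset.sum_const_zero]; exact hlam
    · simp only [mul_one]; exact hμ
  have hub : ∀ lam : ℝ, ∀ r ∈ S lam, r ≤ μ + M := by
    intro lam r hr
    obtain ⟨L, hL0, hL1, _, hrval⟩ := (hSmem lam r).1 hr
    rw [hrval]
    calc ∑ i, p i * h i * L i ≤ ∑ i, p i * (μ + M) * L i := by
          apply Finset.sum_le_sum
          intro i _
          apply mul_le_mul_of_nonneg_right _ (hL0 i)
          apply mul_le_mul_of_nonneg_left _ (hp i).le
          linarith [(abs_le.1 (hMi i)).2]
      _ = (μ + M) * ∑ i, p i * L i := by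
          rw [Finset.mul_sum]; exact Finset.sum_congr rfl fun i _ => by ring
      _ = μ + M := by rw [hL1, mul_one]
  have hbddS : ∀ lam : ℝ, BddAbove (S lam) := fun lam =>
    ⟨μ + M, fun r hr => hub lam r hr⟩
  rw [isLittleO_iff]
  intro ε hε
  -- continuity of t ↦ √(2V/t) at c
  set F : ℝ → ℝ := fun t => Real.sqrt (2 * V / t) with hF
  have hFcont : ContinuousAt F c :=
    (Real.continuous_sqrt.continuousAt).comp
      (continuousAt_const.div continuousAt_id (ne_of_gt hcpos))
  clear_value F
  obtain ⟨η₀, hη₀, hη₀'⟩ := Metric.continuousAt_iff.1 hFcont (ε / 2) (by linarith)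
  set η := min (η₀ / 2) (c / 2) with hη
  have hηpos : 0 < η := lt_min (by linarith) (by linarith)
  have hηc : η ≤ c / 2 := min_le_right _ _
  have hηη₀ : η ≤ η₀ / 2 := min_le_left _ _
  set a := c - η with ha
  set b := c + η with hb
  clear_value η
  have hapos : 0 < a := by rw [ha]; linarith
  have hbpos : 0 < b := by rw [hb]; linarith
  clear_value a b
  have hFa : F a - F c ≤ ε / 2 := by
    have hd : dist a c < η₀ := by
      rw [Real.dist_eq, ha]
      rw [show c - η - c = -η by ring, abs_neg, abs_of_pos hηpos]
      linarith
    have h2 := hη₀' hd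
    rw [Real.dist_eq] at h2
    linarith [(abs_le.1 h2.le).2]
  have hFb : F c - F b ≤ ε / 2 := by
    have hd : dist b c < η₀ := by
      rw [Real.dist_eq, hb]
      rw [show c + η - c = η by ring, abs_of_pos hηpos]
      linarith
    have h2 := hη₀' hd
    rw [Real.dist_eq] at h2
    linarith [(abs_le.1 h2.le).1]
  -- Taylor bounds
  obtain ⟨δ₀, hδ₀, htay⟩ := taylor_sandwich φ hnonneg hone hsmooth (η / 2) (by linarith)
  set δ := min δ₀ 1 with hδdef
  have hδpos : 0 < δ := lt_min hδ₀ zero_lt_one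
  have hδ1 : δ ≤ 1 := min_le_right _ _
  have hδδ₀ : δ ≤ δ₀ := min_le_left _ _
  clear_value δ
  have htay' : ∀ x : ℝ, |x| ≤ δ →
      a * x ^ 2 / 2 ≤ φ (1 + x) ∧ φ (1 + x) ≤ b * x ^ 2 / 2 := by
    intro x hx
    have := abs_le.1 (htay x (hx.trans hδδ₀))
    rw [← hc] at this
    constructor
    · rw [ha]; linarith [this.1]
    · rw [hb]; linarith [this.2]
  -- convexity linear lower bound
  set K := a * δ ^ 2 / 2 with hK
  have hKpos : 0 < K := by
    rw [hK]; exact div_pos (mul_pos hapos (pow_pos hδpos 2)) two_pos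
  clear_value K
  have hK1 : K ≤ φ (1 + δ) := by
    have := (htay' δ (by rw [abs_of_pos hδpos])).1
    rw [hK]; exact this
  have hK2 : K ≤ φ (1 - δ) := by
    have := (htay' (-δ) (by rw [abs_neg, abs_of_pos hδpos])).1
    rw [hK]
    calc a * δ ^ 2 / 2 = a * (-δ) ^ 2 / 2 := by ring
      _ ≤ φ (1 + -δ) := this
      _ = φ (1 - δ) := by ring_nf
  have hlin := convex_linear_lower φ hconv hone δ K hδpos hδ1 hK1 hK2
  set κ := K / δ with hκ
  have hκpos : 0 < κ := by rw [hκ]; exact div_pos hKpos hδpos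
  clear_value κ
  -- thresholds
  obtain ⟨lam₁, hlam₁⟩ : ∃ y : ℝ, y = δ ^ 2 * b * V / (2 * (M + 1) ^ 2) := ⟨_, rfl⟩
  obtain ⟨lam₂, hlam₂⟩ : ∃ y : ℝ, y = (ε * κ / (2 * (M + 1))) ^ 2 := ⟨_, rfl⟩
  have hM1 : (0:ℝ) < 2 * (M + 1) ^ 2 := by
    have h2 : (0:ℝ) < (M + 1) ^ 2 := pow_pos (by linarith) 2
    linarith
  have hlam₁pos : 0 < lam₁ := by
    rw [hlam₁]
    exact div_pos (mul_pos (mul_pos (pow_pos hδpos 2) hbpos) hVpos) hM1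
  have hlam₂pos : 0 < lam₂ := by
    rw [hlam₂]
    exact pow_pos (div_pos (mul_pos hε hκpos) (by linarith)) 2
  filter_upwards [Ioo_mem_nhdsGT
    (lt_min hlam₁pos hlam₂pos : (0:ℝ) < min lam₁ lam₂)] with lam hlam
  have hlam0 : 0 < lam := hlam.1
  have hsl0 : 0 ≤ Real.sqrt lam := Real.sqrt_nonneg lam
  have hsplit : ∀ d : ℝ, Real.sqrt (2 * lam * V / d) = Real.sqrt lam * F d := by
    intro d
    rw [hF]
    dsimp only
    rw [← Real.sqrt_mul hlam0.le]
    congr 1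
    ring
  -- LOWER BOUND
  obtain ⟨t, ht⟩ : ∃ y : ℝ, y = Real.sqrt (2 * lam / (b * V)) := ⟨_, rfl⟩
  have ht0 : 0 ≤ t := ht ▸ Real.sqrt_nonneg _
  have htsq : t ^ 2 = 2 * lam / (b * V) := by
    rw [ht]; exact Real.sq_sqrt (div_nonneg (by linarith) (mul_pos hbpos hVpos).le)
  have htle : t ≤ δ / (M + 1) := by
    have hlam1 : lam ≤ lam₁ := le_of_lt (lt_of_lt_of_le hlam.2 (min_le_left _ _))
    rw [hlam₁, le_div_iff₀ hM1] at hlam1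
    have harg : 2 * lam / (b * V) ≤ (δ / (M + 1)) ^ 2 := by
      rw [div_pow,
        div_le_div_iff₀ (mul_pos hbpos hVpos) (pow_pos (by linarith : (0:ℝ) < M + 1) 2)]
      linarith [hlam1]
    rw [ht]
    calc Real.sqrt (2 * lam / (b * V)) ≤ Real.sqrt ((δ / (M + 1)) ^ 2) :=
        Real.sqrt_le_sqrt harg
      _ = δ / (M + 1) := Real.sqrt_sq (div_nonneg hδpos.le (by linarith))
  have htM : t * M ≤ δ := by
    calc t * M ≤ (δ / (M + 1)) * M := mul_le_mul_of_nonneg_right htle hM0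
      _ ≤ δ := by
          rw [div_mul_eq_mul_div, div_le_iff₀ (by linarith : (0:ℝ) < M + 1)]
          exact mul_le_mul_of_nonneg_left (by linarith : M ≤ M + 1) hδpos.le
  have hLabs : ∀ i, |t * (h i - μ)| ≤ δ := by
    intro i
    rw [abs_mul, abs_of_nonneg ht0]
    calc t * |h i - μ| ≤ t * M := mul_le_mul_of_nonneg_left (hMi i) ht0
      _ ≤ δ := htM
  have hlow : μ + t * V ≤ worstCaseExpectation p h φ lam := by
    rw [hwce lam]
    apply le_csSup (hbddS lam)
    rw [hSmem]
    refine ⟨fun i => 1 + t * (h i - μ), ?_, ?_, ?_, ?_⟩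
    · intro i
      have := abs_le.1 (hLabs i)
      show (0:ℝ) ≤ 1 + t * (h i - μ)
      linarith [this.1, hδ1]
    · have e : ∑ i, p i * (1 + t * (h i - μ))
          = (∑ i, p i) + t * ∑ i, p i * (h i - μ) := by
        rw [Finset.mul_sum, ← Finset.sum_add_distrib]
        exact Finset.sum_congr rfl fun i _ => by ring
      rw [e, hp1, hμ0]; ring
    · calc ∑ i, p i * φ (1 + t * (h i - μ))
          ≤ ∑ i, p i * (b * (t * (h i - μ)) ^ 2 / 2) :=
            Finset.sum_le_sum fun i _ =>
              mul_le_mul_of_nonneg_left ((htay' _ (hLabs i)).2) (hp i).le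
        _ = b * t ^ 2 / 2 * ∑ i, p i * (h i - μ) ^ 2 := by
            rw [Finset.mul_sum]
            exact Finset.sum_congr rfl fun i _ => by ring
        _ = lam := by
            rw [← hV, htsq]
            field_simp
    · have hhV : ∑ i, p i * h i * (h i - μ) = V := by
        have e : ∑ i, p i * (h i - μ) ^ 2
            = ∑ i, (p i * h i * (h i - μ) - μ * (p i * (h i - μ))) :=
          Finset.sum_congr rfl fun i _ => by ring
        rw [hV, e, Finset.sum_sub_distrib, ← Finset.mul_sum, hμ0, mul_zero, sub_zero]
      have e2 : ∑ i, p i * h i * (1 + t * (h i - μ))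
          = (∑ i, p i * h i) + t * ∑ i, p i * h i * (h i - μ) := by
        rw [Finset.mul_sum, ← Finset.sum_add_distrib]
        exact Finset.sum_congr rfl fun i _ => by ring
      rw [e2, hhV, ← hμ]
  have htV : t * V = Real.sqrt lam * F b := by
    rw [← hsplit b]
    rw [show 2 * lam * V / b = (2 * lam / (b * V)) * V ^ 2 from by field_simp,
      Real.sqrt_mul (div_nonneg (by linarith) (mul_pos hbpos hVpos).le), Real.sqrt_sq hV0, ht]
  -- UPPER BOUND
  have hup : worstCaseExpectation p h φ lam ≤ μ + Real.sqrt lam * F a + M * lam / κ := by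
    rw [hwce lam]
    apply csSup_le ⟨μ, hmemμ lam hlam0.le⟩
    intro r hr
    obtain ⟨L, hL0, hL1, hLφ, hrv⟩ := (hSmem lam r).1 hr
    set x : Fin m → ℝ := fun i => L i - 1 with hx
    have hx1 : ∀ i, -1 ≤ x i := by
      intro i; rw [hx]; dsimp only; linarith [hL0 i]
    have hLx : ∀ i, L i = 1 + x i := by
      intro i; rw [hx]; dsimp only; ring
    have hrμ : r = μ + ∑ i, p i * (h i - μ) * x i := by
      rw [hrv]
      have e1 : ∑ i, p i * h i * L i
          = ∑ i, (p i * h i + p i * (h i - μ) * x i + μ * (p i * L i - p i)) :=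
        Finset.sum_congr rfl fun i _ => by rw [hx]; dsimp only; ring
      rw [e1, Finset.sum_add_distrib, Finset.sum_add_distrib, ← Finset.mul_sum,
        Finset.sum_sub_distrib, hL1, hp1, ← hμ]
      ring
    have hφnn : ∀ i, 0 ≤ p i * φ (L i) := fun i =>
      mul_nonneg (hp i).le (hnonneg _ (hL0 i))
    -- near indices
    have hnear : ∑ i ∈ Finset.univ.filter (fun i => |x i| ≤ δ), p i * (x i) ^ 2
        ≤ 2 * lam / a := by
      have h4 : ∀ i ∈ Finset.univ.filter (fun i => |x i| ≤ δ),
          p i * (a * (x i) ^ 2 / 2) ≤ p i * φ (L i) := by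
        intro i hi
        have hxi := (Finset.mem_filter.1 hi).2
        have hti := (htay' (x i) hxi).1
        rw [hLx i]
        exact mul_le_mul_of_nonneg_left hti (hp i).le
      have h5 : ∑ i ∈ Finset.univ.filter (fun i => |x i| ≤ δ),
          p i * (a * (x i) ^ 2 / 2) ≤ lam :=
        le_trans (Finset.sum_le_sum h4)
          (le_trans (Finset.sum_le_sum_of_subset_of_nonneg (Finset.subset_univ _)
            fun i _ _ => hφnn i) hLφ)
      have h6 : ∑ i ∈ Finset.univ.filter (fun i => |x i| ≤ δ),
          p i * (a * (x i) ^ 2 / 2)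
          = a / 2 * ∑ i ∈ Finset.univ.filter (fun i => |x i| ≤ δ), p i * (x i) ^ 2 := by
        rw [Finset.mul_sum]
        exact Finset.sum_congr rfl fun i _ => by ring
      rw [h6] at h5
      rw [le_div_iff₀ hapos]
      linarith
    -- far indices
    have hfar : ∑ i ∈ Finset.univ.filter (fun i => ¬ |x i| ≤ δ), p i * |x i|
        ≤ lam / κ := by
      have h4 : ∀ i ∈ Finset.univ.filter (fun i => ¬ |x i| ≤ δ),
          κ * (p i * |x i|) ≤ p i * φ (L i) := by
        intro i hi
        have hxi := le_of_not_ge (Finset.mem_filter.1 hi).2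
        have hti := hlin (x i) (hx1 i) hxi
        rw [hLx i]
        calc κ * (p i * |x i|) = p i * (κ * |x i|) := by ring
          _ ≤ p i * φ (1 + x i) := mul_le_mul_of_nonneg_left hti (hp i).le
      have h5 : ∑ i ∈ Finset.univ.filter (fun i => ¬ |x i| ≤ δ),
          κ * (p i * |x i|) ≤ lam :=
        le_trans (Finset.sum_le_sum h4)
          (le_trans (Finset.sum_le_sum_of_subset_of_nonneg (Finset.subset_univ _)
            fun i _ _ => hφnn i) hLφ)
      rw [← Finset.mul_sum] at h5
      rw [le_div_iff₀ hκpos]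
      linarith [h5]
    -- Cauchy-Schwarz on near indices
    have hCS : ∑ i ∈ Finset.univ.filter (fun i => |x i| ≤ δ), p i * (h i - μ) * x i
        ≤ Real.sqrt lam * F a := by
      have e2 : ∑ i ∈ Finset.univ.filter (fun i => |x i| ≤ δ), p i * (h i - μ) * x i
          = ∑ i ∈ Finset.univ.filter (fun i => |x i| ≤ δ),
              (Real.sqrt (p i) * (h i - μ)) * (Real.sqrt (p i) * x i) :=
        Finset.sum_congr rfl fun i _ => by
          linear_combination (-(h i - μ) * x i) * Real.mul_self_sqrt (hp i).le
      have e3 := Real.sum_mul_le_sqrt_mul_sqrt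
        (Finset.univ.filter (fun i => |x i| ≤ δ))
        (fun i => Real.sqrt (p i) * (h i - μ)) (fun i => Real.sqrt (p i) * x i)
      have e4 : ∑ i ∈ Finset.univ.filter (fun i => |x i| ≤ δ),
          (Real.sqrt (p i) * (h i - μ)) ^ 2
          = ∑ i ∈ Finset.univ.filter (fun i => |x i| ≤ δ), p i * (h i - μ) ^ 2 :=
        Finset.sum_congr rfl fun i _ => by
          rw [mul_pow, Real.sq_sqrt (hp i).le]
      have e5 : ∑ i ∈ Finset.univ.filter (fun i => |x i| ≤ δ),
          (Real.sqrt (p i) * x i) ^ 2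
          = ∑ i ∈ Finset.univ.filter (fun i => |x i| ≤ δ), p i * (x i) ^ 2 :=
        Finset.sum_congr rfl fun i _ => by
          rw [mul_pow, Real.sq_sqrt (hp i).le]
      have e6 : ∑ i ∈ Finset.univ.filter (fun i => |x i| ≤ δ), p i * (h i - μ) ^ 2
          ≤ V := by
        rw [hV]
        exact Finset.sum_le_sum_of_subset_of_nonneg (Finset.subset_univ _)
          fun i _ _ => mul_nonneg (hp i).le (sq_nonneg _)
      have e7 : Real.sqrt V * Real.sqrt (2 * lam / a) = Real.sqrt lam * F a := by
        rw [hF]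
        dsimp only
        rw [← Real.sqrt_mul hV0, ← Real.sqrt_mul hlam0.le]
        congr 1
        ring
      calc ∑ i ∈ Finset.univ.filter (fun i => |x i| ≤ δ), p i * (h i - μ) * x i
          = _ := e2
        _ ≤ _ := e3
        _ ≤ Real.sqrt V * Real.sqrt (2 * lam / a) := by
            rw [e4, e5]
            apply mul_le_mul (Real.sqrt_le_sqrt e6) (Real.sqrt_le_sqrt hnear)
              (Real.sqrt_nonneg _) (Real.sqrt_nonneg _)
        _ = Real.sqrt lam * F a := e7
    -- far contribution
    have hB : ∑ i ∈ Finset.univ.filter (fun i => ¬ |x i| ≤ δ), p i * (h i - μ) * x i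
        ≤ M * lam / κ := by
      have h7 : ∀ i ∈ Finset.univ.filter (fun i => ¬ |x i| ≤ δ),
          p i * (h i - μ) * x i ≤ M * (p i * |x i|) := by
        intro i _
        calc p i * (h i - μ) * x i ≤ |p i * (h i - μ) * x i| := le_abs_self _
          _ = p i * |h i - μ| * |x i| := by
              rw [abs_mul, abs_mul, abs_of_pos (hp i)]
          _ ≤ M * (p i * |x i|) := by
              have h8 : p i * |h i - μ| ≤ p i * M :=
                mul_le_mul_of_nonneg_left (hMi i) (hp i).le
              have h9 := mul_le_mul_of_nonneg_right h8 (abs_nonneg (x i))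
              calc p i * |h i - μ| * |x i| ≤ p i * M * |x i| := h9
                _ = M * (p i * |x i|) := by ring
      calc ∑ i ∈ Finset.univ.filter (fun i => ¬ |x i| ≤ δ), p i * (h i - μ) * x i
          ≤ ∑ i ∈ Finset.univ.filter (fun i => ¬ |x i| ≤ δ), M * (p i * |x i|) :=
            Finset.sum_le_sum h7
        _ = M * ∑ i ∈ Finset.univ.filter (fun i => ¬ |x i| ≤ δ), p i * |x i| := by
            rw [Finset.mul_sum]
        _ ≤ M * (lam / κ) := mul_le_mul_of_nonneg_left hfar hM0
        _ = M * lam / κ := by ring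
    rw [hrμ, ← Finset.sum_filter_add_sum_filter_not Finset.univ (fun i => |x i| ≤ δ)
      (fun i => p i * (h i - μ) * x i)]
    linarith [hCS, hB]
  -- extra term bound
  have hmlam : M * lam / κ ≤ ε / 2 * Real.sqrt lam := by
    have hlam2 : lam ≤ lam₂ := le_of_lt (lt_of_lt_of_le hlam.2 (min_le_right _ _))
    have hsl2 : Real.sqrt lam ≤ ε * κ / (2 * (M + 1)) := by
      rw [hlam₂] at hlam2
      calc Real.sqrt lam ≤ Real.sqrt ((ε * κ / (2 * (M + 1))) ^ 2) :=
            Real.sqrt_le_sqrt hlam2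
        _ = ε * κ / (2 * (M + 1)) :=
            Real.sqrt_sq (div_nonneg (mul_nonneg hε.le hκpos.le) (by linarith))
    rw [le_div_iff₀ (by linarith : (0:ℝ) < 2 * (M + 1))] at hsl2
    have hll : Real.sqrt lam * Real.sqrt lam = lam := Real.mul_self_sqrt hlam0.le
    rw [div_le_iff₀ hκpos]
    nth_rewrite 1 [← hll]
    linarith [mul_le_mul_of_nonneg_right hsl2 hsl0, mul_nonneg hsl0 hsl0]
  -- final assembly
  rw [Real.norm_eq_abs, Real.norm_eq_abs, abs_of_nonneg hsl0, hsplit c, abs_le]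
  constructor
  · have h10 : Real.sqrt lam * F b ≤ worstCaseExpectation p h φ lam - μ := by
      rw [← htV]; linarith [hlow]
    have h11 := mul_le_mul_of_nonneg_left hFb hsl0
    rw [mul_sub] at h11
    linarith [h10, h11, mul_nonneg hε.le hsl0]
  · have h12 := mul_le_mul_of_nonneg_left hFa hsl0
    rw [mul_sub] at h12
    linarith [h12, hup, hmlam, mul_nonneg hε.le hsl0]
end

section
/- Let J be a positive semidefinite m×m matrix, let θ* ∈ ℝ^m, let t_n ∈ ℝ^m with t_n → θ*, and let ν_n be probability measures on ℝ^m such that the total variation distance between ν_n and the Gaussian measure N(t_n, J/n) tends to 0 and such that the pushforward laws of the map θ ↦ √n·(θ − t_n) under ν_n form a uniformly integrable family. Let g : ℝ^m → ℝ^d be continuously differentiable with g and its Jacobian Dg bounded and Dg continuous. Then √n·( ∫ g(θ) dν_n(θ) − g(t_n) ) → 0 as n → ∞. -/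
open MeasureTheory ProbabilityTheory Filter
open scoped Topology BigOperators

section AuxPosterior
open Real Set
open scoped ENNReal NNReal

lemma aux_integrable_pdf_mul_id (μr : ℝ) {v : ℝ≥0} (hv : v ≠ 0) :
    Integrable (fun x => gaussianPDFReal μr v x * x) := by
  have hv' : (0:ℝ) < (v:ℝ) := by positivity
  have hb : (0:ℝ) < (2*(v:ℝ))⁻¹ := by positivity
  have h1 : Integrable (fun y : ℝ => (y + μr) * rexp (-(2*(v:ℝ))⁻¹ * y^2)) := by
    have := (integrable_mul_exp_neg_mul_sq hb).add
      ((integrable_exp_neg_mul_sq hb).const_mul μr)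
    refine this.congr (Eventually.of_forall fun y => ?_)
    simp only [Pi.add_apply]
    ring
  have h2 := (h1.comp_sub_right μr).const_mul ((Real.sqrt (2 * π * v))⁻¹)
  refine h2.congr (Eventually.of_forall fun x => ?_)
  simp only [gaussianPDFReal]
  rw [sub_add_cancel]
  rw [show -(2*(v:ℝ))⁻¹ * (x - μr)^2 = -(x - μr)^2 / (2*(v:ℝ)) by ring]
  ring

lemma aux_integrable_id_gaussian (μr : ℝ) (v : ℝ≥0) :
    Integrable (fun x => x) (gaussianReal μr v) := by
  by_cases hv : v = 0
  · subst hv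
    rw [gaussianReal_zero_var]
    refine ⟨measurable_id.aestronglyMeasurable, ?_⟩
    rw [HasFiniteIntegral, lintegral_dirac]
    exact ENNReal.coe_lt_top
  · rw [gaussianReal_of_var_ne_zero _ hv]
    have hmeas : Measurable fun x => (gaussianPDFReal μr v x).toNNReal :=
      (measurable_gaussianPDFReal μr v).real_toNNReal
    have : (gaussianPDF μr v) = fun x => ((gaussianPDFReal μr v x).toNNReal : ℝ≥0∞) := rfl
    rw [this, integrable_withDensity_iff_integrable_smul hmeas]
    refine (aux_integrable_pdf_mul_id μr hv).congr (Eventually.of_forall fun x => ?_)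
    simp [NNReal.smul_def, Real.coe_toNNReal _ (gaussianPDFReal_nonneg μr v x)]

lemma aux_integral_id_gaussian (μr : ℝ) (v : ℝ≥0) :
    ∫ x, x ∂(gaussianReal μr v) = μr := by
  by_cases hv : v = 0
  · subst hv
    rw [gaussianReal_zero_var, integral_dirac]
  · have hmeas : Measurable fun x => (gaussianPDFReal μr v x).toNNReal :=
      (measurable_gaussianPDFReal μr v).real_toNNReal
    rw [gaussianReal_of_var_ne_zero _ hv]
    have h0 : (gaussianPDF μr v) = fun x => ((gaussianPDFReal μr v x).toNNReal : ℝ≥0∞) := rfl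
    rw [h0, integral_withDensity_eq_integral_smul hmeas]
    have h1 : ∀ x : ℝ, (gaussianPDFReal μr v x).toNNReal • x = gaussianPDFReal μr v x * x :=
      fun x => by simp [NNReal.smul_def, Real.coe_toNNReal _ (gaussianPDFReal_nonneg μr v x)]
    rw [show (fun x => (gaussianPDFReal μr v x).toNNReal • x) = fun x => gaussianPDFReal μr v x * x
      from funext h1]
    -- split: pdf * x = pdf * (x - μr) + μr * pdf
    have hint : Integrable (fun x => gaussianPDFReal μr v x * x) :=
      aux_integrable_pdf_mul_id μr hv
    have hpdfint : Integrable (gaussianPDFReal μr v) := integrable_gaussianPDFReal μr v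
    have hsplit : ∀ x : ℝ, gaussianPDFReal μr v x * x
        = gaussianPDFReal μr v x * (x - μr) + μr * gaussianPDFReal μr v x := fun x => by ring
    have hint2 : Integrable (fun x => gaussianPDFReal μr v x * (x - μr)) := by
      have := hint.sub (hpdfint.const_mul μr)
      refine this.congr (Eventually.of_forall fun x => ?_)
      simp only [Pi.sub_apply]
      ring
    rw [show (fun x => gaussianPDFReal μr v x * x)
        = (fun x => gaussianPDFReal μr v x * (x - μr) + μr * gaussianPDFReal μr v x)
      from funext hsplit]
    rw [integral_add hint2 (hpdfint.const_mul μr), integral_const_mul,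
      integral_gaussianPDFReal_eq_one μr hv, mul_one]
    -- first integral is zero by symmetry
    have hshift : ∀ x : ℝ, gaussianPDFReal μr v x * (x - μr)
        = (fun y => gaussianPDFReal 0 v y * y) (x - μr) := by
      intro x
      simp only [gaussianPDFReal, sub_zero]
    rw [show (fun x => gaussianPDFReal μr v x * (x - μr))
        = (fun x => (fun y => gaussianPDFReal 0 v y * y) (x - μr)) from funext hshift]
    rw [integral_sub_right_eq_self (fun y => gaussianPDFReal 0 v y * y) μr]
    have hodd : ∫ y : ℝ, gaussianPDFReal 0 v y * y
        = - ∫ y : ℝ, gaussianPDFReal 0 v y * y := by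
      conv_lhs => rw [← integral_neg_eq_self (fun y : ℝ => gaussianPDFReal 0 v y * y) volume]
      rw [← integral_neg]
      congr 1
      funext y
      simp only [gaussianPDFReal, sub_zero, neg_sq]
      ring
    linarith [hodd]

lemma aux_tv_integral_bound {α : Type*} [MeasurableSpace α] (μ ν' : Measure α)
    [IsProbabilityMeasure μ] [IsProbabilityMeasure ν']
    {f : α → ℝ} (hf : Measurable f) {B δ : ℝ} (hB : 0 ≤ B) (hδ : 0 ≤ δ)
    (h0 : ∀ x, 0 ≤ f x) (h1 : ∀ x, f x ≤ B)
    (hTVb : ∀ s : Set α, MeasurableSet s → |(μ s).toReal - (ν' s).toReal| ≤ δ) :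
    |(∫ x, f x ∂μ) - ∫ x, f x ∂ν'| ≤ B * δ := by
  set F : ℝ → ℝ := fun t => (μ {a | t < f a}).toReal with hF
  set G : ℝ → ℝ := fun t => (ν' {a | t < f a}).toReal with hG
  have hFanti : Antitone F := by
    intro s u hsu
    exact ENNReal.toReal_le_toReal (measure_ne_top _ _) (measure_ne_top _ _) |>.mpr
      (measure_mono fun a ha => lt_of_le_of_lt hsu ha)
  have hGanti : Antitone G := by
    intro s u hsu
    exact ENNReal.toReal_le_toReal (measure_ne_top _ _) (measure_ne_top _ _) |>.mpr
      (measure_mono fun a ha => lt_of_le_of_lt hsu ha)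
  have hintf : ∀ (κ : Measure α), IsProbabilityMeasure κ → Integrable f κ := by
    intro κ hκ
    refine Integrable.mono' (integrable_const B) hf.aestronglyMeasurable ?_
    exact Eventually.of_forall fun x => by
      rw [Real.norm_eq_abs, abs_of_nonneg (h0 x)]; exact h1 x
  have keyμ := (hintf μ ‹_›).integral_eq_integral_meas_lt (Eventually.of_forall h0)
  have keyν := (hintf ν' ‹_›).integral_eq_integral_meas_lt (Eventually.of_forall h0)
  have hF1 : ∀ t, F t ≤ 1 := fun t => by
    simpa using ENNReal.toReal_le_toReal (measure_ne_top _ _) (by simp) |>.mpr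
      (measure_mono (subset_univ _) : μ {a | t < f a} ≤ μ univ)
  have hG1 : ∀ t, G t ≤ 1 := fun t => by
    simpa using ENNReal.toReal_le_toReal (measure_ne_top _ _) (by simp) |>.mpr
      (measure_mono (subset_univ _) : ν' {a | t < f a} ≤ ν' univ)
  have hempty : ∀ t : ℝ, B ≤ t → {a | t < f a} = (∅ : Set α) := by
    intro t hBt
    ext a; simp only [mem_setOf_eq, mem_empty_iff_false, iff_false, not_lt]
    exact (h1 a).trans hBt
  have hF0 : ∀ t, B ≤ t → F t = 0 := fun t ht => by simp [hF, hempty t ht]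
  have hG0 : ∀ t, B ≤ t → G t = 0 := fun t ht => by simp [hG, hempty t ht]
  have hIoi : Ioi (0:ℝ) = Ioc 0 B ∪ Ioi B := (Set.Ioc_union_Ioi_eq_Ioi hB).symm
  have hintFIoc : ∀ (H : ℝ → ℝ), Antitone H → (∀ t, 0 ≤ H t) → (∀ t, H t ≤ 1) →
      IntegrableOn H (Ioc 0 B) := by
    intro H hanti h0' h1'
    refine Integrable.mono' (integrable_const 1) hanti.measurable.aestronglyMeasurable ?_
    exact Eventually.of_forall fun x => by
      rw [Real.norm_eq_abs, abs_of_nonneg (h0' x)]; exact h1' x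
  have hFnonneg : ∀ t, 0 ≤ F t := fun t => ENNReal.toReal_nonneg
  have hGnonneg : ∀ t, 0 ≤ G t := fun t => ENNReal.toReal_nonneg
  have hsplit : ∀ (H : ℝ → ℝ), Antitone H → (∀ t, 0 ≤ H t) → (∀ t, H t ≤ 1) →
      (∀ t, B ≤ t → H t = 0) →
      ∫ t in Ioi (0:ℝ), H t = ∫ t in Ioc 0 B, H t := by
    intro H hanti h0' h1' hH0
    rw [hIoi, setIntegral_union (Ioc_disjoint_Ioi le_rfl) measurableSet_Ioi
      (hintFIoc H hanti h0' h1') ?_]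
    · have hz : ∫ x in Ioi B, H x = 0 :=
        setIntegral_eq_zero_of_forall_eq_zero fun x hx => hH0 x (mem_Ioi.mp hx).le
      rw [hz, add_zero]
    · refine (integrableOn_congr_fun (fun x hx => (hH0 x (le_of_lt hx)).symm)
        measurableSet_Ioi).mp ?_
      exact integrableOn_zero
  rw [keyμ, keyν]
  change |(∫ t in Ioi (0:ℝ), F t) - ∫ t in Ioi (0:ℝ), G t| ≤ B * δ
  rw [hsplit F hFanti hFnonneg hF1 hF0, hsplit G hGanti hGnonneg hG1 hG0]
  rw [← integral_sub (hintFIoc F hFanti hFnonneg hF1) (hintFIoc G hGanti hGnonneg hG1)]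
  have hbound : ∀ t, ‖F t - G t‖ ≤ δ := by
    intro t
    rw [Real.norm_eq_abs]
    exact hTVb _ (measurableSet_lt measurable_const hf)
  calc |∫ t in Ioc 0 B, (F t - G t)|
      ≤ δ * (volume.restrict (Ioc 0 B) univ).toReal := by
        rw [← Real.norm_eq_abs]
        exact norm_integral_le_of_norm_le_const (Eventually.of_forall hbound)
    _ ≤ B * δ := by
        rw [Measure.restrict_apply_univ, Real.volume_Ioc]
        rw [ENNReal.toReal_ofReal (by linarith)]
        nlinarith

lemma aux_clip_abs_le {C x : ℝ} (hC : 0 ≤ C) : |max (-C) (min C x)| ≤ C := by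
  rw [abs_le]
  refine ⟨le_max_left _ _, max_le (by linarith) (min_le_left _ _)⟩

lemma aux_clip_eq {C x : ℝ} (h : |x| ≤ C) : max (-C) (min C x) = x := by
  rw [abs_le] at h
  rw [min_eq_right h.2, max_eq_right h.1]

lemma aux_clip_sub_le {C x : ℝ} (hC : 0 ≤ C) : |x - max (-C) (min C x)| ≤ |x| := by
  rcases le_total x (-C) with h | h
  · rw [min_eq_right (by linarith), max_eq_left h]
    rw [abs_of_nonpos (by linarith), abs_of_nonpos (by linarith)]
    linarith
  · rcases le_total C x with h2 | h2
    · rw [min_eq_left h2, max_eq_right (by linarith)]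
      rw [abs_of_nonneg (by linarith), abs_of_nonneg (by linarith)]
      linarith
    · rw [aux_clip_eq (abs_le.mpr ⟨h, h2⟩), sub_self, abs_zero]
      exact abs_nonneg x

lemma aux_coord_le_norm {m : ℕ} (x : EuclideanSpace ℝ (Fin m)) (i : Fin m) : |x i| ≤ ‖x‖ := by
  have h := abs_real_inner_le_norm (EuclideanSpace.single i (1:ℝ)) x
  rw [EuclideanSpace.inner_single_left] at h
  simpa [EuclideanSpace.norm_single] using h

lemma aux_norm_le_sum {m : ℕ} (x : EuclideanSpace ℝ (Fin m)) : ‖x‖ ≤ ∑ i, |x i| := by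
  rw [EuclideanSpace.norm_eq]
  have h1 : ∑ i, x i ^ 2 ≤ (∑ i, |x i|) ^ 2 := by
    calc ∑ i, x i ^ 2 = ∑ i, |x i| ^ 2 := by simp [sq_abs]
      _ ≤ (∑ i, |x i|) ^ 2 := Finset.sum_sq_le_sq_sum_of_nonneg fun i _ => abs_nonneg _
  calc Real.sqrt (∑ i, ‖x i‖ ^ 2) = Real.sqrt (∑ i, x i ^ 2) := by simp [Real.norm_eq_abs, sq_abs]
    _ ≤ Real.sqrt ((∑ i, |x i|) ^ 2) := Real.sqrt_le_sqrt h1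
    _ = ∑ i, |x i| := Real.sqrt_sq (Finset.sum_nonneg fun i _ => abs_nonneg _)

lemma aux_coord_law {m : ℕ} {J : Matrix (Fin m) (Fin m) ℝ} (i : Fin m) (hJii : 0 ≤ J i i)
    (tn : EuclideanSpace ℝ (Fin m)) (γn : Measure (EuclideanSpace ℝ (Fin m))) {n : ℕ} (hn : 1 ≤ n)
    (h : Measure.map (fun θ => @inner ℝ _ _ (EuclideanSpace.single i (1:ℝ)) θ) γn
        = gaussianReal (@inner ℝ _ _ (EuclideanSpace.single i (1:ℝ)) tn)
            (Real.toNNReal ((∑ i', ∑ j, (EuclideanSpace.single i (1:ℝ)) i' * J i' j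
              * (EuclideanSpace.single i (1:ℝ)) j) / n))) :
    Measure.map (fun θ => Real.sqrt n * (θ i - tn i)) γn
      = gaussianReal 0 (Real.toNNReal (J i i)) := by
  have hn0 : (0:ℝ) < (n:ℝ) := by exact_mod_cast hn
  have hinner : (fun θ : EuclideanSpace ℝ (Fin m) =>
      @inner ℝ _ _ (EuclideanSpace.single i (1:ℝ)) θ) = fun θ => θ i := by
    funext θ
    simp [EuclideanSpace.inner_single_left]
  have hsum : (∑ i', ∑ j, (EuclideanSpace.single i (1:ℝ)) i' * J i' j
      * (EuclideanSpace.single i (1:ℝ)) j) = J i i := by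
    simp [EuclideanSpace.single_apply, ite_mul, mul_ite, Finset.sum_ite_eq, Finset.sum_ite_eq']
  rw [hinner, hsum] at h
  have hmean : @inner ℝ _ _ (EuclideanSpace.single i (1:ℝ)) tn = tn i := by
    simp [EuclideanSpace.inner_single_left]
  rw [hmean] at h
  have hproj : Measurable fun θ : EuclideanSpace ℝ (Fin m) => θ i := by
    exact (EuclideanSpace.proj (𝕜 := ℝ) i).continuous.measurable
  have hcomp : (fun θ : EuclideanSpace ℝ (Fin m) => Real.sqrt n * (θ i - tn i))
      = (fun x : ℝ => x + (-(Real.sqrt n * tn i))) ∘ ((fun x : ℝ => Real.sqrt n * x)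
        ∘ (fun θ => θ i)) := by
    funext θ
    simp only [Function.comp_apply]
    ring
  have h3 : Measurable fun x : ℝ => x + (-(Real.sqrt n * tn i)) := by fun_prop
  have h2 : Measurable fun x : ℝ => Real.sqrt n * x := by fun_prop
  calc Measure.map (fun θ : EuclideanSpace ℝ (Fin m) => Real.sqrt n * (θ i - tn i)) γn
      = Measure.map ((fun x : ℝ => x + (-(Real.sqrt n * tn i)))
          ∘ ((fun x : ℝ => Real.sqrt n * x) ∘ (fun θ => θ i))) γn := by rw [hcomp]
    _ = Measure.map (fun x : ℝ => x + (-(Real.sqrt n * tn i)))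
          (Measure.map ((fun x : ℝ => Real.sqrt n * x) ∘ (fun θ => θ i)) γn) :=
        (Measure.map_map h3 (h2.comp hproj)).symm
    _ = Measure.map (fun x : ℝ => x + (-(Real.sqrt n * tn i)))
          (Measure.map (fun x : ℝ => Real.sqrt n * x) (Measure.map (fun θ => θ i) γn)) := by
        rw [Measure.map_map h2 hproj]
    _ = gaussianReal 0 (Real.toNNReal (J i i)) := ?_
  rw [h, gaussianReal_map_const_mul, gaussianReal_map_add_const]
  congr 1
  · ring
  · apply NNReal.coe_injective
    push_cast
    rw [Real.coe_toNNReal _ (div_nonneg hJii hn0.le), Real.coe_toNNReal _ hJii,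
      Real.sq_sqrt hn0.le]
    field_simp


lemma aux_mean_coord_tendsto {m : ℕ} {J : Matrix (Fin m) (Fin m) ℝ} (i : Fin m)
    (hJii : 0 ≤ J i i)
    (t : ℕ → EuclideanSpace ℝ (Fin m)) (ν γ : ℕ → Measure (EuclideanSpace ℝ (Fin m)))
    (hν : ∀ n, IsProbabilityMeasure (ν n)) (hγprob : ∀ n, IsProbabilityMeasure (γ n))
    (hlaw : ∀ n : ℕ, 1 ≤ n → Measure.map (fun θ => Real.sqrt n * (θ i - t n i)) (γ n)
      = gaussianReal 0 (Real.toNNReal (J i i)))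
    (hTV : ∀ ε : ℝ, 0 < ε → ∀ᶠ n in atTop,
      ∀ s : Set (EuclideanSpace ℝ (Fin m)), MeasurableSet s →
        |(ν n s).toReal - (γ n s).toReal| ≤ ε)
    (hUIint : ∀ n : ℕ, Integrable (fun θ => Real.sqrt n * ‖θ - t n‖) (ν n))
    (hUI : ∀ ε : ℝ, 0 < ε → ∃ C : ℝ, ∀ n : ℕ,
      ∫ θ in {θ | C ≤ Real.sqrt n * ‖θ - t n‖},
        Real.sqrt n * ‖θ - t n‖ ∂(ν n) ≤ ε) :
    Tendsto (fun n : ℕ => ∫ θ, Real.sqrt n * (θ i - t n i) ∂(ν n)) atTop (𝓝 0) := by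
  rw [NormedAddCommGroup.tendsto_nhds_zero]
  intro ε hε
  suffices h : ∀ᶠ n in atTop, |∫ θ, Real.sqrt n * (θ i - t n i) ∂(ν n)| ≤ ε/2 by
    filter_upwards [h] with n hn
    rw [Real.norm_eq_abs]
    linarith
  set g0 : Measure ℝ := gaussianReal 0 (Real.toNNReal (J i i)) with hg0
  have hidint : Integrable (fun x => x) g0 := aux_integrable_id_gaussian _ _
  have habs : Integrable (fun x => |x|) g0 := hidint.abs
  -- gaussian tail
  have hsetmeas : ∀ c : ℝ, MeasurableSet {y : ℝ | c ≤ |y|} :=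
    fun c => measurableSet_le measurable_const measurable_abs
  have htail : Tendsto (fun k : ℕ =>
      ∫ x, Set.indicator {y : ℝ | (k:ℝ) ≤ |y|} (fun y => |y|) x ∂g0) atTop (𝓝 0) := by
    have h0 : (0:ℝ) = ∫ x, (0:ℝ) ∂g0 := by simp
    rw [h0]
    apply tendsto_integral_of_dominated_convergence (fun x => |x|)
    · exact fun k => (measurable_abs.indicator (hsetmeas _)).aestronglyMeasurable
    · exact habs
    · intro k
      refine Eventually.of_forall fun x => ?_
      rw [Real.norm_eq_abs]
      by_cases hx : x ∈ {y : ℝ | (k:ℝ) ≤ |y|}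
      · rw [Set.indicator_of_mem hx, abs_abs]
      · rw [Set.indicator_of_notMem hx, abs_zero]; exact abs_nonneg x
    · refine Eventually.of_forall fun x => ?_
      obtain ⟨N, hN⟩ := exists_nat_gt |x|
      refine tendsto_const_nhds.congr' ?_
      filter_upwards [eventually_ge_atTop N] with k hk
      have hxmem : x ∉ {y : ℝ | (k:ℝ) ≤ |y|} := by
        simp only [Set.mem_setOf_eq, not_le]
        exact hN.trans_le (by exact_mod_cast hk)
      exact (Set.indicator_of_notMem hxmem _).symm
  obtain ⟨k0, hk0⟩ : ∃ k : ℕ,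
      ∫ x, Set.indicator {y : ℝ | (k:ℝ) ≤ |y|} (fun y => |y|) x ∂g0 ≤ ε/8 :=
    (htail.eventually (eventually_le_nhds (by positivity : (0:ℝ) < ε/8))).exists
  obtain ⟨C₀, hC₀⟩ := hUI (ε/8) (by positivity)
  set C : ℝ := max (max C₀ (k0:ℝ)) 1 with hC
  have hCpos : (0:ℝ) < C := lt_of_lt_of_le one_pos (le_max_right _ _)
  have hCC₀ : C₀ ≤ C := le_trans (le_max_left _ _) (le_max_left _ _)
  have hCk0 : (k0:ℝ) ≤ C := le_trans (le_max_right _ _) (le_max_left _ _)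
  set δtv : ℝ := ε/(16*(C+1)) with hδtv
  have hδtvpos : 0 < δtv := by positivity
  filter_upwards [hTV δtv hδtvpos, eventually_ge_atTop 1] with n hTVn hn1
  haveI := hν n; haveI := hγprob n
  set f : EuclideanSpace ℝ (Fin m) → ℝ := fun θ => Real.sqrt n * (θ i - t n i) with hf
  set cf : EuclideanSpace ℝ (Fin m) → ℝ := fun θ => max (-C) (min C (f θ)) with hcf
  have hfcont : Continuous f :=
    continuous_const.mul (((EuclideanSpace.proj (𝕜 := ℝ) i).continuous).sub continuous_const)
  have hfmeas : Measurable f := hfcont.measurable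
  have hcfcont : Continuous cf := continuous_const.max (continuous_const.min hfcont)
  have hcfmeas : Measurable cf := hcfcont.measurable
  have hfabs : ∀ θ, |f θ| ≤ Real.sqrt n * ‖θ - t n‖ := by
    intro θ
    have h1 : |θ i - t n i| ≤ ‖θ - t n‖ := by
      have := aux_coord_le_norm (θ - t n) i
      simpa using this
    calc |f θ| = Real.sqrt n * |θ i - t n i| := by
          rw [hf, abs_mul, abs_of_nonneg (Real.sqrt_nonneg _)]
      _ ≤ Real.sqrt n * ‖θ - t n‖ := by
          exact mul_le_mul_of_nonneg_left h1 (Real.sqrt_nonneg _)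
  have hXint := hUIint n
  have hfint_ν : Integrable f (ν n) :=
    Integrable.mono' hXint hfmeas.aestronglyMeasurable
      (Eventually.of_forall fun θ => by rw [Real.norm_eq_abs]; exact hfabs θ)
  have law := hlaw n hn1
  have hfint_γ : Integrable f (γ n) := by
    have h1 : Integrable id (Measure.map f (γ n)) := by rw [law]; exact hidint
    rw [integrable_map_measure aestronglyMeasurable_id hfmeas.aemeasurable] at h1
    exact h1
  have hmean0 : ∫ θ, f θ ∂(γ n) = 0 := by
    have h1 : ∫ x, x ∂(Measure.map f (γ n)) = ∫ θ, f θ ∂(γ n) :=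
      integral_map hfmeas.aemeasurable aestronglyMeasurable_id
    rw [← h1, law, aux_integral_id_gaussian]
  have hcf_le : ∀ θ, |cf θ| ≤ C := fun θ => aux_clip_abs_le hCpos.le
  have hcfint_ν : Integrable cf (ν n) :=
    Integrable.mono' (integrable_const C) hcfmeas.aestronglyMeasurable
      (Eventually.of_forall fun θ => by rw [Real.norm_eq_abs]; exact hcf_le θ)
  have hcfint_γ : Integrable cf (γ n) :=
    Integrable.mono' (integrable_const C) hcfmeas.aestronglyMeasurable
      (Eventually.of_forall fun θ => by rw [Real.norm_eq_abs]; exact hcf_le θ)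
  -- Term 1
  have hsetν : MeasurableSet {θ : EuclideanSpace ℝ (Fin m) | C ≤ Real.sqrt n * ‖θ - t n‖} :=
    measurableSet_le measurable_const
      ((continuous_const.mul ((continuous_id.sub continuous_const).norm)).measurable)
  have hT1 : |(∫ θ, f θ ∂(ν n)) - ∫ θ, cf θ ∂(ν n)| ≤ ε/8 := by
    rw [← integral_sub hfint_ν hcfint_ν]
    have h2 : |∫ θ, (f θ - cf θ) ∂(ν n)| ≤ ∫ θ, |f θ - cf θ| ∂(ν n) := by
      rw [← Real.norm_eq_abs]
      exact (norm_integral_le_integral_norm _).trans (le_of_eq (by simp [Real.norm_eq_abs]))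
    refine h2.trans ?_
    have hptwise : ∀ θ, |f θ - cf θ| ≤
        Set.indicator {θ : EuclideanSpace ℝ (Fin m) | C ≤ Real.sqrt n * ‖θ - t n‖}
          (fun θ => Real.sqrt n * ‖θ - t n‖) θ := by
      intro θ
      by_cases hθ : C ≤ Real.sqrt n * ‖θ - t n‖
      · have hmem : θ ∈ {θ : EuclideanSpace ℝ (Fin m) | C ≤ Real.sqrt n * ‖θ - t n‖} := hθ
        rw [Set.indicator_of_mem hmem]
        exact (aux_clip_sub_le hCpos.le).trans (hfabs θ)
      · have hmem : θ ∉ {θ : EuclideanSpace ℝ (Fin m) | C ≤ Real.sqrt n * ‖θ - t n‖} := hθ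
        rw [Set.indicator_of_notMem hmem]
        push_neg at hθ
        have hceq : cf θ = f θ := aux_clip_eq ((hfabs θ).trans hθ.le)
        rw [hceq, sub_self, abs_zero]
    have hindint : Integrable (Set.indicator
        {θ : EuclideanSpace ℝ (Fin m) | C ≤ Real.sqrt n * ‖θ - t n‖}
        (fun θ => Real.sqrt n * ‖θ - t n‖)) (ν n) := hXint.indicator hsetν
    calc ∫ θ, |f θ - cf θ| ∂(ν n)
        ≤ ∫ θ, Set.indicator {θ : EuclideanSpace ℝ (Fin m) | C ≤ Real.sqrt n * ‖θ - t n‖}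
            (fun θ => Real.sqrt n * ‖θ - t n‖) θ ∂(ν n) :=
          integral_mono (hfint_ν.sub hcfint_ν).abs hindint hptwise
      _ = ∫ θ in {θ : EuclideanSpace ℝ (Fin m) | C ≤ Real.sqrt n * ‖θ - t n‖},
            Real.sqrt n * ‖θ - t n‖ ∂(ν n) := integral_indicator hsetν
      _ ≤ ∫ θ in {θ : EuclideanSpace ℝ (Fin m) | C₀ ≤ Real.sqrt n * ‖θ - t n‖},
            Real.sqrt n * ‖θ - t n‖ ∂(ν n) := by
          refine setIntegral_mono_set hXint.integrableOn
            (Eventually.of_forall fun θ => by positivity) ?_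
          exact HasSubset.Subset.eventuallyLE fun θ hθ => le_trans hCC₀ hθ
      _ ≤ ε/8 := hC₀ n
  -- Term 3
  have hψmeas : Measurable (Set.indicator {y : ℝ | C ≤ |y|} (fun y => |y|)) :=
    measurable_abs.indicator (hsetmeas C)
  have hψint_g0 : Integrable (Set.indicator {y : ℝ | C ≤ |y|} (fun y => |y|)) g0 :=
    habs.indicator (hsetmeas C)
  have hψfint_γ : Integrable (fun θ => Set.indicator {y : ℝ | C ≤ |y|}
      (fun y => |y|) (f θ)) (γ n) := by
    have h1 : Integrable (Set.indicator {y : ℝ | C ≤ |y|} (fun y => |y|))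
        (Measure.map f (γ n)) := by rw [law]; exact hψint_g0
    rw [integrable_map_measure hψmeas.aestronglyMeasurable hfmeas.aemeasurable] at h1
    exact h1
  have hT3 : |(∫ θ, cf θ ∂(γ n)) - ∫ θ, f θ ∂(γ n)| ≤ ε/8 := by
    rw [← integral_sub hcfint_γ hfint_γ]
    have h2 : |∫ θ, (cf θ - f θ) ∂(γ n)| ≤ ∫ θ, |cf θ - f θ| ∂(γ n) := by
      rw [← Real.norm_eq_abs]
      exact (norm_integral_le_integral_norm _).trans (le_of_eq (by simp [Real.norm_eq_abs]))
    refine h2.trans ?_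
    have hptwise : ∀ θ, |cf θ - f θ| ≤
        Set.indicator {y : ℝ | C ≤ |y|} (fun y => |y|) (f θ) := by
      intro θ
      by_cases hθ : C ≤ |f θ|
      · have hmem : f θ ∈ {y : ℝ | C ≤ |y|} := hθ
        rw [Set.indicator_of_mem hmem, abs_sub_comm]
        exact aux_clip_sub_le hCpos.le
      · have hmem : f θ ∉ {y : ℝ | C ≤ |y|} := hθ
        rw [Set.indicator_of_notMem hmem]
        push_neg at hθ
        have hceq : cf θ = f θ := aux_clip_eq hθ.le
        rw [hceq, sub_self, abs_zero]
    calc ∫ θ, |cf θ - f θ| ∂(γ n)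
        ≤ ∫ θ, Set.indicator {y : ℝ | C ≤ |y|} (fun y => |y|) (f θ) ∂(γ n) :=
          integral_mono (hcfint_γ.sub hfint_γ).abs hψfint_γ hptwise
      _ = ∫ x, Set.indicator {y : ℝ | C ≤ |y|} (fun y => |y|) x ∂g0 := by
          rw [← law]
          exact (integral_map hfmeas.aemeasurable hψmeas.aestronglyMeasurable).symm
      _ = ∫ x in {y : ℝ | C ≤ |y|}, |x| ∂g0 := integral_indicator (hsetmeas C)
      _ ≤ ∫ x in {y : ℝ | (k0:ℝ) ≤ |y|}, |x| ∂g0 := by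
          refine setIntegral_mono_set habs.integrableOn
            (Eventually.of_forall fun x => abs_nonneg x) ?_
          exact HasSubset.Subset.eventuallyLE fun x hx => le_trans hCk0 hx
      _ = ∫ x, Set.indicator {y : ℝ | (k0:ℝ) ≤ |y|} (fun y => |y|) x ∂g0 :=
          (integral_indicator (hsetmeas _)).symm
      _ ≤ ε/8 := hk0
  -- Term 2
  have hT2 : |(∫ θ, cf θ ∂(ν n)) - ∫ θ, cf θ ∂(γ n)| ≤ ε/8 := by
    have key : |(∫ θ, cf θ + C ∂(ν n)) - ∫ θ, cf θ + C ∂(γ n)| ≤ 2*C * δtv := by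
      refine aux_tv_integral_bound (ν n) (γ n) (hcfmeas.add_const C) (by linarith)
        hδtvpos.le (fun θ => ?_) (fun θ => ?_) hTVn
      · have := (abs_le.mp (hcf_le θ)).1; linarith
      · have := (abs_le.mp (hcf_le θ)).2; linarith
    rw [integral_add hcfint_ν (integrable_const C), integral_add hcfint_γ (integrable_const C),
      integral_const, integral_const, probReal_univ, probReal_univ] at key
    simp only [one_smul, add_sub_add_right_eq_sub] at key
    refine key.trans ?_
    have hfrac : 2*C/(16*(C+1)) ≤ 1/8 := by
      rw [div_le_div_iff₀ (by positivity) (by norm_num)]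
      nlinarith
    calc 2*C*δtv = ε * (2*C/(16*(C+1))) := by rw [hδtv]; ring
      _ ≤ ε * (1/8) := mul_le_mul_of_nonneg_left hfrac hε.le
      _ = ε/8 := by ring
  -- combine
  have hdecomp : ∫ θ, f θ ∂(ν n)
      = ((∫ θ, f θ ∂(ν n)) - ∫ θ, cf θ ∂(ν n))
        + ((∫ θ, cf θ ∂(ν n)) - ∫ θ, cf θ ∂(γ n))
        + ((∫ θ, cf θ ∂(γ n)) - ∫ θ, f θ ∂(γ n)) := by
    linarith [hmean0]
  rw [hdecomp]
  have ha1 := abs_add_le (((∫ θ, f θ ∂(ν n)) - ∫ θ, cf θ ∂(ν n))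
      + ((∫ θ, cf θ ∂(ν n)) - ∫ θ, cf θ ∂(γ n)))
    ((∫ θ, cf θ ∂(γ n)) - ∫ θ, f θ ∂(γ n))
  have ha2 := abs_add_le ((∫ θ, f θ ∂(ν n)) - ∫ θ, cf θ ∂(ν n))
    ((∫ θ, cf θ ∂(ν n)) - ∫ θ, cf θ ∂(γ n))
  linarith

end AuxPosterior

open Real Set in
set_option maxHeartbeats 1600000 in
/-- The key approximation lemma in the proof of Theorem 6 of the paper (Bayesian
optimization): if the measures `ν_n` merge in total variation with Gaussian measures
`γ_n = N(t_n, J/n)` centered at `t_n → θ*`, and the laws of `θ ↦ √n·(θ − t_n)` under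
`ν_n` are uniformly integrable, then for every bounded `C¹` vector field `g` with
bounded Jacobian, `√n·(∫ g dν_n − g(t_n)) → 0`. The Gaussian measures are
characterized by the laws of their one-dimensional linear projections. -/
theorem posterior_mean_plug_in_approximation
    {m d : ℕ}
    (J : Matrix (Fin m) (Fin m) ℝ) (hJ : J.PosSemidef)
    (θs : EuclideanSpace ℝ (Fin m)) (t : ℕ → EuclideanSpace ℝ (Fin m))
    (ht : Tendsto t atTop (𝓝 θs))
    (ν γ : ℕ → Measure (EuclideanSpace ℝ (Fin m)))
    (hν : ∀ n, IsProbabilityMeasure (ν n)) (hγprob : ∀ n, IsProbabilityMeasure (γ n))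
    -- γ n is the Gaussian measure N(t n, J/n)
    (hγ : ∀ n : ℕ, ∀ v : EuclideanSpace ℝ (Fin m),
      Measure.map (fun θ => @inner ℝ _ _ v θ) (γ n)
        = gaussianReal (@inner ℝ _ _ v (t n))
            (Real.toNNReal ((∑ i, ∑ j, v i * J i j * v j) / n)))
    -- total variation distance between ν n and γ n tends to 0
    (hTV : ∀ ε : ℝ, 0 < ε → ∀ᶠ n in atTop,
      ∀ s : Set (EuclideanSpace ℝ (Fin m)), MeasurableSet s →
        |(ν n s).toReal - (γ n s).toReal| ≤ ε)
    -- the laws of θ ↦ √n (θ − t n) under ν n form a uniformly integrable family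
    (hUIint : ∀ n : ℕ, Integrable (fun θ => Real.sqrt n * ‖θ - t n‖) (ν n))
    (hUI : ∀ ε : ℝ, 0 < ε → ∃ C : ℝ, ∀ n : ℕ,
      ∫ θ in {θ | C ≤ Real.sqrt n * ‖θ - t n‖},
        Real.sqrt n * ‖θ - t n‖ ∂(ν n) ≤ ε)
    -- g continuously differentiable, bounded, with bounded Jacobian
    (g : EuclideanSpace ℝ (Fin m) → EuclideanSpace ℝ (Fin d))
    (hg : ContDiff ℝ 1 g)
    (hgbdd : ∃ C : ℝ, ∀ θ, ‖g θ‖ ≤ C)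
    (hDgbdd : ∃ C : ℝ, ∀ θ, ‖fderiv ℝ g θ‖ ≤ C) :
    Tendsto (fun n : ℕ => Real.sqrt n • ((∫ θ, g θ ∂(ν n)) - g (t n)))
      atTop (𝓝 0) := by
  classical
  obtain ⟨Cg, hCg⟩ := hgbdd
  obtain ⟨CD0, hCD0⟩ := hDgbdd
  set CD : ℝ := max CD0 1 with hCDdef
  have hCDpos : (0:ℝ) < CD := lt_of_lt_of_le one_pos (le_max_right _ _)
  have hCD : ∀ θ, ‖fderiv ℝ g θ‖ ≤ CD := fun θ => (hCD0 θ).trans (le_max_left _ _)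
  have hJdiag : ∀ i : Fin m, 0 ≤ J i i := by
    intro i
    exact hJ.diag_nonneg
  -- integrability of the recentered variable
  have hXcont : ∀ n : ℕ, Continuous (fun θ : EuclideanSpace ℝ (Fin m) =>
      Real.sqrt n • (θ - t n)) := fun n => by fun_prop
  have hXnorm : ∀ n : ℕ, ∀ θ : EuclideanSpace ℝ (Fin m),
      ‖Real.sqrt n • (θ - t n)‖ = Real.sqrt n * ‖θ - t n‖ := by
    intro n θ
    rw [norm_smul, Real.norm_eq_abs, abs_of_nonneg (Real.sqrt_nonneg _)]
  have hXint : ∀ n : ℕ, Integrable (fun θ : EuclideanSpace ℝ (Fin m) =>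
      Real.sqrt n • (θ - t n)) (ν n) := by
    intro n
    refine Integrable.mono' (hUIint n) (hXcont n).aestronglyMeasurable ?_
    exact Eventually.of_forall fun θ => le_of_eq (hXnorm n θ)
  -- the mean of the recentered variable tends to 0
  set Mv : ℕ → EuclideanSpace ℝ (Fin m) :=
    fun n => ∫ θ, Real.sqrt n • (θ - t n) ∂(ν n) with hMv
  have hMcoord : ∀ (n : ℕ) (i : Fin m),
      Mv n i = ∫ θ, Real.sqrt n * (θ i - t n i) ∂(ν n) := by
    intro n i
    have h1 : (EuclideanSpace.proj (𝕜 := ℝ) i) (Mv n)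
        = ∫ θ, (EuclideanSpace.proj (𝕜 := ℝ) i) (Real.sqrt n • (θ - t n)) ∂(ν n) :=
      (ContinuousLinearMap.integral_comp_comm _ (hXint n)).symm
    have h2 : ∀ θ : EuclideanSpace ℝ (Fin m),
        (EuclideanSpace.proj (𝕜 := ℝ) i) (Real.sqrt n • (θ - t n))
          = Real.sqrt n * (θ i - t n i) := by
      intro θ
      simp [PiLp.smul_apply, PiLp.sub_apply, smul_eq_mul]
    have h3 : ∫ θ, (EuclideanSpace.proj (𝕜 := ℝ) i) (Real.sqrt n • (θ - t n)) ∂(ν n)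
        = ∫ θ, Real.sqrt n * (θ i - t n i) ∂(ν n) :=
      integral_congr_ae (Eventually.of_forall fun θ => h2 θ)
    calc Mv n i = (EuclideanSpace.proj (𝕜 := ℝ) i) (Mv n) := rfl
      _ = ∫ θ, Real.sqrt n * (θ i - t n i) ∂(ν n) := by rw [h1, h3]
  have hMcoordtend : ∀ i : Fin m, Tendsto (fun n => Mv n i) atTop (𝓝 0) := by
    intro i
    have hlaw : ∀ n : ℕ, 1 ≤ n →
        Measure.map (fun θ => Real.sqrt n * (θ i - t n i)) (γ n)
          = gaussianReal 0 (Real.toNNReal (J i i)) :=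
      fun n hn => aux_coord_law i (hJdiag i) (t n) (γ n) hn (hγ n (EuclideanSpace.single i 1))
    have h := aux_mean_coord_tendsto i (hJdiag i) t ν γ hν hγprob hlaw hTV hUIint hUI
    refine h.congr fun n => (hMcoord n i).symm
  have hM : Tendsto Mv atTop (𝓝 0) := by
    rw [tendsto_zero_iff_norm_tendsto_zero]
    have hsum : Tendsto (fun n => ∑ i, |Mv n i|) atTop (𝓝 0) := by
      have h0 : (0:ℝ) = ∑ _i : Fin m, (0:ℝ) := by simp
      rw [h0]
      exact tendsto_finset_sum _ fun i _ => by
        simpa using (hMcoordtend i).abs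
    exact squeeze_zero (fun n => norm_nonneg _) (fun n => aux_norm_le_sum (Mv n)) hsum
  -- main estimate
  set L := fderiv ℝ g θs with hL
  have hLle : ‖L‖ ≤ CD := hCD θs
  have hgdiff : Differentiable ℝ g := hg.differentiable one_ne_zero
  have hgcont : Continuous g := hg.continuous
  have hDgcont : Continuous (fderiv ℝ g) := hg.continuous_fderiv one_ne_zero
  have hglob : ∀ x y : EuclideanSpace ℝ (Fin m), ‖g y - g x‖ ≤ CD * ‖y - x‖ := by
    intro x y
    exact convex_univ.norm_image_sub_le_of_norm_fderiv_le
      (fun z _ => hgdiff z) (fun z _ => hCD z) (mem_univ x) (mem_univ y)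
  rw [NormedAddCommGroup.tendsto_nhds_zero]
  intro ε hε
  obtain ⟨C₀, hC₀⟩ := hUI (ε/(16*CD)) (by positivity)
  set C : ℝ := max C₀ 1 with hCdef
  have hCpos : (0:ℝ) < C := lt_of_lt_of_le one_pos (le_max_right _ _)
  have hCC₀ : C₀ ≤ C := le_max_left _ _
  set ε' : ℝ := ε/(8*(C+1)) with hε'def
  have hε'pos : 0 < ε' := by positivity
  obtain ⟨δ, hδpos, hδ⟩ := Metric.continuousAt_iff.mp hDgcont.continuousAt ε' hε'pos
  have E2 : ∀ᶠ n in atTop, dist (t n) θs < δ/2 :=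
    Metric.tendsto_nhds.mp ht (δ/2) (by positivity)
  have E3 : ∀ᶠ n : ℕ in atTop, (2*C/δ)^2 < (n:ℝ) :=
    tendsto_natCast_atTop_atTop.eventually_gt_atTop _
  have E4 : ∀ᶠ n in atTop, ‖Mv n‖ < ε/(4*CD) :=
    (NormedAddCommGroup.tendsto_nhds_zero.mp hM) _ (by positivity)
  filter_upwards [eventually_ge_atTop 1, E2, E3, E4] with n hn1 hn2 hn3 hn4
  haveI := hν n
  have hnpos : (0:ℝ) < (n:ℝ) := by exact_mod_cast hn1
  have hsqrtpos : (0:ℝ) < Real.sqrt n := Real.sqrt_pos.mpr hnpos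
  have h2Cδ : 2*C/δ < Real.sqrt n := (Real.lt_sqrt (by positivity)).mpr hn3
  have hCsn : C / Real.sqrt n < δ/2 := by
    rw [div_lt_iff₀ hsqrtpos]
    have h9 := (div_lt_iff₀ hδpos).mp h2Cδ
    calc C < (Real.sqrt n * δ)/2 := by linarith
      _ = δ/2 * Real.sqrt n := by ring
  have hgint : Integrable g (ν n) :=
    Integrable.mono' (integrable_const Cg) hgcont.aestronglyMeasurable
      (Eventually.of_forall fun θ => hCg θ)
  set r : EuclideanSpace ℝ (Fin m) → EuclideanSpace ℝ (Fin d) :=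
    fun θ => Real.sqrt n • (g θ - g (t n)) - L (Real.sqrt n • (θ - t n)) with hr
  have h1int : Integrable (fun θ => Real.sqrt n • (g θ - g (t n))) (ν n) := by
    have := (hgint.sub (integrable_const (g (t n)))).smul (Real.sqrt n)
    exact this
  have h2int : Integrable (fun θ => L (Real.sqrt n • (θ - t n))) (ν n) :=
    L.integrable_comp (hXint n)
  have hrint : Integrable r (ν n) := h1int.sub h2int
  have hsm : ∫ θ, Real.sqrt n • (g θ - g (t n)) ∂(ν n)
      = Real.sqrt n • ((∫ θ, g θ ∂(ν n)) - g (t n)) := by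
    rw [integral_smul, integral_sub hgint (integrable_const _), integral_const,
      probReal_univ, one_smul]
  have hLX : ∫ θ, L (Real.sqrt n • (θ - t n)) ∂(ν n) = L (Mv n) :=
    ContinuousLinearMap.integral_comp_comm L (hXint n)
  have hIr : ∫ θ, r θ ∂(ν n)
      = Real.sqrt n • ((∫ θ, g θ ∂(ν n)) - g (t n)) - L (Mv n) := by
    rw [hr]
    rw [integral_sub h1int h2int, hsm, hLX]
  have hkey : Real.sqrt n • ((∫ θ, g θ ∂(ν n)) - g (t n))
      = L (Mv n) + ∫ θ, r θ ∂(ν n) := by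
    rw [hIr]; abel
  -- pointwise bounds on r
  have hrglob : ∀ θ, ‖r θ‖ ≤ 2*CD * (Real.sqrt n * ‖θ - t n‖) := by
    intro θ
    have ha : ‖Real.sqrt n • (g θ - g (t n))‖ ≤ Real.sqrt n * (CD * ‖θ - t n‖) := by
      rw [norm_smul, Real.norm_eq_abs, abs_of_nonneg (Real.sqrt_nonneg _)]
      exact mul_le_mul_of_nonneg_left (hglob (t n) θ) (Real.sqrt_nonneg _)
    have hb : ‖L (Real.sqrt n • (θ - t n))‖ ≤ CD * (Real.sqrt n * ‖θ - t n‖) := by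
      refine (L.le_opNorm _).trans ?_
      rw [hXnorm n θ]
      exact mul_le_mul_of_nonneg_right hLle (by positivity)
    calc ‖r θ‖ ≤ ‖Real.sqrt n • (g θ - g (t n))‖ + ‖L (Real.sqrt n • (θ - t n))‖ :=
          norm_sub_le _ _
      _ ≤ Real.sqrt n * (CD * ‖θ - t n‖) + CD * (Real.sqrt n * ‖θ - t n‖) := by
          exact add_le_add ha hb
      _ = 2*CD * (Real.sqrt n * ‖θ - t n‖) := by ring
  have hrnear : ∀ θ : EuclideanSpace ℝ (Fin m),
      Real.sqrt n * ‖θ - t n‖ < C → ‖r θ‖ ≤ ε' * C := by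
    intro θ hθ
    have hθtn : ‖θ - t n‖ < δ/2 := by
      have h1 : ‖θ - t n‖ < C / Real.sqrt n := by
        rw [lt_div_iff₀ hsqrtpos, mul_comm]
        exact hθ
      exact h1.trans hCsn
    have hmemθ : θ ∈ Metric.ball θs δ := by
      rw [Metric.mem_ball]
      calc dist θ θs ≤ dist θ (t n) + dist (t n) θs := dist_triangle _ _ _
        _ < δ/2 + δ/2 := by
            rw [dist_eq_norm]
            exact add_lt_add hθtn hn2
        _ = δ := by ring
    have hmemtn : t n ∈ Metric.ball θs δ := by
      rw [Metric.mem_ball]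
      linarith [hn2]
    have hdiffm : ∀ x ∈ Metric.ball θs δ,
        DifferentiableAt ℝ (fun y => g y - L y) x :=
      fun x _ => (hgdiff x).sub L.differentiableAt
    have hboundm : ∀ x ∈ Metric.ball θs δ,
        ‖fderiv ℝ (fun y => g y - L y) x‖ ≤ ε' := by
      intro x hx
      have hfd : fderiv ℝ (fun y => g y - L y) x = fderiv ℝ g x - L := by
        rw [fderiv_fun_sub (hgdiff x) L.differentiableAt, ContinuousLinearMap.fderiv]
      rw [hfd, ← dist_eq_norm]
      exact (hδ (Metric.mem_ball.mp hx)).le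
    have hmvt := (convex_ball θs δ).norm_image_sub_le_of_norm_fderiv_le
      hdiffm hboundm hmemtn hmemθ
    have hexp : (g θ - L θ) - (g (t n) - L (t n)) = (g θ - g (t n)) - L (θ - t n) := by
      rw [map_sub]; abel
    rw [hexp] at hmvt
    have hreq : r θ = Real.sqrt n • ((g θ - g (t n)) - L (θ - t n)) := by
      simp only [hr]
      rw [L.map_smul]
      simp only [smul_sub]
    rw [hreq, norm_smul, Real.norm_eq_abs, abs_of_nonneg (Real.sqrt_nonneg _)]
    calc Real.sqrt n * ‖(g θ - g (t n)) - L (θ - t n)‖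
        ≤ Real.sqrt n * (ε' * ‖θ - t n‖) := mul_le_mul_of_nonneg_left hmvt (Real.sqrt_nonneg _)
      _ = ε' * (Real.sqrt n * ‖θ - t n‖) := by ring
      _ ≤ ε' * C := mul_le_mul_of_nonneg_left hθ.le hε'pos.le
  -- the set for the tail
  set s : Set (EuclideanSpace ℝ (Fin m)) := {θ | C ≤ Real.sqrt n * ‖θ - t n‖} with hs
  have hsmeas : MeasurableSet s :=
    measurableSet_le measurable_const
      ((continuous_const.mul ((continuous_id.sub continuous_const).norm)).measurable)
  have htail : ∫ θ in s, ‖r θ‖ ∂(ν n) ≤ ε/8 := by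
    calc ∫ θ in s, ‖r θ‖ ∂(ν n)
        ≤ ∫ θ in s, 2*CD * (Real.sqrt n * ‖θ - t n‖) ∂(ν n) := by
          refine setIntegral_mono_on hrint.norm.integrableOn
            (((hUIint n).const_mul (2*CD)).integrableOn) hsmeas fun θ _ => hrglob θ
      _ = 2*CD * ∫ θ in s, Real.sqrt n * ‖θ - t n‖ ∂(ν n) := integral_const_mul _ _
      _ ≤ 2*CD * ∫ θ in {θ : EuclideanSpace ℝ (Fin m) | C₀ ≤ Real.sqrt n * ‖θ - t n‖},
            Real.sqrt n * ‖θ - t n‖ ∂(ν n) := by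
          refine mul_le_mul_of_nonneg_left ?_ (by positivity)
          refine setIntegral_mono_set (hUIint n).integrableOn
            (Eventually.of_forall fun θ => by positivity) ?_
          exact HasSubset.Subset.eventuallyLE fun θ hθ => le_trans hCC₀ hθ
      _ ≤ 2*CD * (ε/(16*CD)) := mul_le_mul_of_nonneg_left (hC₀ n) (by positivity)
      _ = ε/8 := by field_simp; ring
  have hnear : ∫ θ in sᶜ, ‖r θ‖ ∂(ν n) ≤ ε/8 := by
    have hb : ∀ θ ∈ sᶜ, ‖‖r θ‖‖ ≤ ε' * C := by
      intro θ hθ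
      rw [Real.norm_eq_abs, abs_of_nonneg (norm_nonneg _)]
      refine hrnear θ ?_
      have : ¬ C ≤ Real.sqrt n * ‖θ - t n‖ := hθ
      linarith [not_le.mp this]
    have h : ‖∫ θ in sᶜ, ‖r θ‖ ∂(ν n)‖ ≤ ε' * C * ((ν n) sᶜ).toReal :=
      norm_setIntegral_le_of_norm_le_const (measure_lt_top (ν n) sᶜ) hb
    have h2 : ∫ θ in sᶜ, ‖r θ‖ ∂(ν n) ≤ ‖∫ θ in sᶜ, ‖r θ‖ ∂(ν n)‖ := le_abs_self _
    have h3 : ((ν n) sᶜ).toReal ≤ 1 := by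
      have := prob_le_one (μ := ν n) (s := sᶜ)
      simpa using ENNReal.toReal_mono ENNReal.one_ne_top this
    have h4 : ε' * C * ((ν n) sᶜ).toReal ≤ ε' * C :=
      mul_le_of_le_one_right (by positivity) h3
    have h5 : ε' * C ≤ ε/8 := by
      have h51 : ε' * (C+1) = ε/8 := by
        rw [hε'def]; field_simp
      nlinarith [hε'pos.le]
    linarith [h2.trans (h.trans h4)]
  -- put it together
  rw [hkey]
  have hsplit : ∫ θ, ‖r θ‖ ∂(ν n)
      = (∫ θ in s, ‖r θ‖ ∂(ν n)) + ∫ θ in sᶜ, ‖r θ‖ ∂(ν n) :=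
    (integral_add_compl hsmeas hrint.norm).symm
  have hLM : ‖L (Mv n)‖ ≤ ε/4 := by
    refine (L.le_opNorm _).trans ?_
    have := mul_le_mul hLle hn4.le (norm_nonneg _) hCDpos.le
    calc ‖L‖ * ‖Mv n‖ ≤ CD * (ε/(4*CD)) := this
      _ = ε/4 := by field_simp
  calc ‖L (Mv n) + ∫ θ, r θ ∂(ν n)‖ ≤ ‖L (Mv n)‖ + ‖∫ θ, r θ ∂(ν n)‖ := norm_add_le _ _
    _ ≤ ε/4 + ∫ θ, ‖r θ‖ ∂(ν n) := add_le_add hLM (norm_integral_le_integral_norm _)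
    _ ≤ ε/4 + (ε/8 + ε/8) := by
        rw [hsplit]
        gcongr
    _ < ε := by linarith
end
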